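/- arXiv:2203.15774 — 6 statements merged into one kernel-verified Lean document; each statement's English description precedes it below -/
import Mathlib

section
/- For every nonnegative integer k and positive integer n, the number of lattice points in the k-th dilate of the n-dimensional cross polytope ◇_n equals ∑_{j=0}^{n} binom(n, j) · binom(k − j + n, n). -/
open Finset

lemma weak_count : ∀ (n : ℕ), ∀ (m M : ℕ), m ≤ M →
    ((Fintype.piFinset fun _ : Fin n => Finset.range (M+1)).filter
      (fun y => ∑ i, y i ≤ m)).card = (m + n).choose n := by
  intro n
  induction n with
  | zero =>
      intro m M h
      simp [Finset.filter_true_of_mem]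
  | succ n ih =>
      intro m M h
      rw [Finset.card_eq_sum_card_fiberwise (f := fun y => y 0) (t := Finset.range (m+1))
        (by
          intro y hy
          simp only [Finset.mem_coe, Finset.mem_filter, Fintype.mem_piFinset] at hy
          have h0 : y 0 ≤ ∑ i, y i := Finset.single_le_sum (f := y) (fun i _ => Nat.zero_le _) (Finset.mem_univ 0)
          simp only [Finset.mem_coe, Finset.mem_range]
          omega)]
      have key : ∀ t ∈ Finset.range (m+1),
          ((Fintype.piFinset fun _ : Fin (n+1) => Finset.range (M+1)).filter
            (fun y => ∑ i, y i ≤ m) |>.filter (fun y => y 0 = t)).card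
          = ((m - t) + n).choose n := by
        intro t ht
        simp only [Finset.mem_range] at ht
        rw [← ih (m - t) M (by omega)]
        apply Finset.card_nbij' (i := fun y => Fin.tail y) (j := fun z => Fin.cons t z)
        · intro y hy
          simp only [Finset.mem_coe, Finset.mem_filter, Fintype.mem_piFinset, Fin.sum_univ_succ] at hy ⊢
          obtain ⟨⟨h1, h2⟩, h3⟩ := hy
          refine ⟨fun a => h1 a.succ, ?_⟩
          rw [h3] at h2
          unfold Fin.tail
          omega
        · intro z hz
          simp only [Finset.mem_coe, Finset.mem_filter, Fintype.mem_piFinset, Fin.sum_univ_succ] at hz ⊢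
          obtain ⟨h1, h2⟩ := hz
          refine ⟨⟨?_, ?_⟩, by simp⟩
          · intro a
            induction a using Fin.cases with
            | zero => simpa [Finset.mem_range] using by omega
            | succ i => simpa using h1 i
          · simp only [Fin.cons_zero, Fin.cons_succ]
            omega
        · intro y hy
          simp only [Finset.mem_coe, Finset.mem_filter] at hy
          rw [← hy.2]
          exact Fin.cons_self_tail y
        · intro z _
          exact Fin.tail_cons (α := fun _ => ℕ) t z
      rw [Finset.sum_congr rfl key, ← Finset.sum_range_reflect]
      have : ∀ j ∈ Finset.range (m+1), (m - (m + 1 - 1 - j) + n).choose n = (j + n).choose n := by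
        intro j hj
        simp only [Finset.mem_range] at hj
        congr 2
        omega
      rw [Finset.sum_congr rfl this, Nat.sum_range_add_choose]
      congr 1

lemma shifted_count (n k j : ℕ) (hj : j ≤ n) :
    ((Fintype.piFinset fun _ : Fin n => Finset.range (k+1)).filter
      (fun y => (∑ i, y i) + j ≤ k)).card = (k + n - j).choose n := by
  by_cases hk : j ≤ k
  · have : ((Fintype.piFinset fun _ : Fin n => Finset.range (k+1)).filter
        (fun y => (∑ i, y i) + j ≤ k))
        = ((Fintype.piFinset fun _ : Fin n => Finset.range (k+1)).filter
        (fun y => ∑ i, y i ≤ k - j)) := by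
      apply Finset.filter_congr
      intro y _
      constructor <;> intro h' <;> omega
    rw [this, weak_count n (k - j) k (by omega)]
    congr 1
    omega
  · rw [Finset.filter_false_of_mem (by intro y _; omega), Finset.card_empty,
      Nat.choose_eq_zero_of_lt (by omega)]

theorem crossPolytope_latticePoint_count' (n k : ℕ) :
    {x : Fin n → ℤ | ∑ i, |x i| ≤ (k : ℤ)}.ncard
      = ∑ j ∈ Finset.range (n + 1), Nat.choose n j * Nat.choose (k + n - j) n := by
  classical
  set B : Finset (Fin n → ℤ) :=
    (Fintype.piFinset fun _ : Fin n => Finset.Icc (-(k:ℤ)) k).filter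
      (fun x => ∑ i, |x i| ≤ (k:ℤ)) with hB
  have hset : {x : Fin n → ℤ | ∑ i, |x i| ≤ (k : ℤ)} = ↑B := by
    ext x
    simp only [Set.mem_setOf_eq, hB, Finset.coe_filter, Fintype.mem_piFinset,
      Finset.mem_Icc, Set.mem_setOf_eq]
    constructor
    · intro hx
      refine ⟨fun a => ?_, hx⟩
      have : |x a| ≤ ∑ i, |x i| :=
        Finset.single_le_sum (fun i _ => abs_nonneg (x i)) (Finset.mem_univ a)
      have := this.trans hx
      constructor <;> [skip; skip] <;> cases abs_le.mp this <;> omega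
    · exact fun h => h.2
  rw [hset, Set.ncard_coe_finset]
  set G : Finset ((_ : Finset (Fin n)) × (Fin n → ℕ)) :=
    (Finset.univ.powerset).sigma (fun S =>
      (Fintype.piFinset fun _ : Fin n => Finset.range (k+1)).filter
        (fun y => (∑ i, y i) + S.card ≤ k)) with hG
  have hyval : ∀ (x : Fin n → ℤ) (i : Fin n),
      ((if x i < 0 then (-(x i) - 1).toNat else (x i).toNat : ℕ) : ℤ)
        = |x i| - (if x i < 0 then 1 else 0) := by
    intro x i
    split <;> rename_i h
    · rw [abs_of_neg h]; omega
    · rw [abs_of_nonneg (not_lt.mp h)]; omega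
  have hsplit : ∀ x : Fin n → ℤ,
      (∑ i, ((if x i < 0 then (-(x i) - 1).toNat else (x i).toNat : ℕ) : ℤ))
        + ((Finset.univ.filter (fun i => x i < 0)).card : ℤ) = ∑ i, |x i| := by
    intro x
    rw [Finset.sum_congr rfl (fun i _ => hyval x i), Finset.sum_sub_distrib]
    have hc : ∑ i, (if x i < 0 then (1:ℤ) else 0)
        = ((Finset.univ.filter (fun i => x i < 0)).card : ℤ) := by
      simp [Finset.sum_boole]
    rw [← hc]
    ring
  have hcard : B.card = G.card := by
    apply Finset.card_nbij'
      (i := fun x => ⟨Finset.univ.filter (fun i => x i < 0),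
        fun i => if x i < 0 then (-(x i) - 1).toNat else (x i).toNat⟩)
      (j := fun p => fun i => if i ∈ p.1 then -((p.2 i : ℤ) + 1) else (p.2 i : ℤ))
    · -- forward membership
      intro x hx
      simp only [Finset.mem_coe, hB, Finset.mem_filter, Fintype.mem_piFinset, Finset.mem_Icc] at hx
      obtain ⟨h1, h2⟩ := hx
      simp only [Finset.mem_coe, hG, Finset.mem_sigma, Finset.mem_powerset, Finset.mem_filter,
        Fintype.mem_piFinset, Finset.mem_range]
      refine ⟨Finset.subset_univ _, fun a => ?_, ?_⟩
      · have := h1 a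
        split <;> omega
      · refine (Nat.cast_le (α := ℤ)).mp ?_
        rw [Nat.cast_add, Nat.cast_sum, hsplit x]
        exact h2
    · -- backward membership
      intro p hp
      simp only [Finset.mem_coe, hG, Finset.mem_sigma, Finset.mem_powerset, Finset.mem_filter,
        Fintype.mem_piFinset, Finset.mem_range] at hp
      obtain ⟨-, h1, h2⟩ := hp
      have habs : ∀ i, |(if i ∈ p.1 then -((p.2 i : ℤ) + 1) else (p.2 i : ℤ))|
          = (p.2 i : ℤ) + (if i ∈ p.1 then 1 else 0) := by
        intro i
        split
        · rw [abs_of_neg (by omega)]; ring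
        · rw [abs_of_nonneg (by positivity)]; ring
      have hsum : ∑ i, |(if i ∈ p.1 then -((p.2 i : ℤ) + 1) else (p.2 i : ℤ))| ≤ (k:ℤ) := by
        rw [Finset.sum_congr rfl (fun i _ => habs i), Finset.sum_add_distrib]
        have hc : ∑ i, (if i ∈ p.1 then (1:ℤ) else 0) = (p.1.card : ℤ) := by
          simp [Finset.sum_boole, Finset.filter_mem_eq_inter]
        rw [hc]
        exact_mod_cast h2
      simp only [Finset.mem_coe, hB, Finset.mem_filter, Fintype.mem_piFinset, Finset.mem_Icc]
      refine ⟨fun a => ?_, hsum⟩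
      have h3 : |(if a ∈ p.1 then -((p.2 a : ℤ) + 1) else (p.2 a : ℤ))| ≤ (k:ℤ) :=
        (Finset.single_le_sum (fun i _ => abs_nonneg _) (Finset.mem_univ a)).trans hsum
      cases abs_le.mp h3 with
      | intro hl hr => exact ⟨hl, hr⟩
    · -- left inverse
      intro x _
      funext i
      by_cases h : x i < 0 <;> simp [h] <;> omega
    · -- right inverse
      intro p hp
      simp only [Finset.mem_coe, hG, Finset.mem_sigma, Finset.mem_powerset, Finset.mem_filter,
        Fintype.mem_piFinset, Finset.mem_range] at hp
      obtain ⟨-, h1, -⟩ := hp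
      have hmem : ∀ i, ((if i ∈ p.1 then -((p.2 i : ℤ) + 1) else (p.2 i : ℤ)) < 0) ↔ i ∈ p.1 := by
        intro i
        split <;> rename_i h <;> simp [h] <;> omega
      refine Sigma.ext ?_ (heq_of_eq ?_)
      · ext i
        simp only [Finset.mem_filter, Finset.mem_univ, true_and]
        exact hmem i
      · funext i
        by_cases h : i ∈ p.1 <;> simp [h] <;> omega
  rw [hcard, hG, Finset.card_sigma, Finset.sum_powerset]
  rw [Finset.card_univ, Fintype.card_fin]
  refine Finset.sum_congr rfl ?_
  intro j hj
  simp only [Finset.mem_range] at hj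
  have : ∀ S ∈ Finset.powersetCard j (Finset.univ : Finset (Fin n)),
      ((Fintype.piFinset fun _ : Fin n => Finset.range (k+1)).filter
        (fun y => (∑ i, y i) + S.card ≤ k)).card = (k + n - j).choose n := by
    intro S hS
    rw [(Finset.mem_powersetCard.mp hS).2, shifted_count n k j (by omega)]
  rw [Finset.sum_congr rfl this, Finset.sum_const, Finset.card_powersetCard,
    Finset.card_univ, Fintype.card_fin, smul_eq_mul]

/-- The number of lattice points in the `k`-th dilate of the `n`-dimensional cross
polytope `◇_n = {x : |x_1| + … + |x_n| ≤ 1}` equals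
`∑_{j=0}^{n} binom(n,j) · binom(k-j+n, n)`. -/
theorem crossPolytope_latticePoint_count (n k : ℕ) (hn : 0 < n) :
    {x : Fin n → ℤ | ∑ i, |x i| ≤ (k : ℤ)}.ncard
      = ∑ j ∈ Finset.range (n + 1), Nat.choose n j * Nat.choose (k + n - j) n :=
  crossPolytope_latticePoint_count' n k
end

section
/- As formal power series in t over ℚ, ∑_{k ≥ 0} (2k + 1)^n t^k = d_{B_n}(t) / (1 − t)^{n+1}, where d_{B_n}(t) = ∑_{w ∈ B_n} t^{des(w)} is the descent polynomial of the hyperoctahedral group. Equivalently, (1 − t)^{n+1} · ∑_{k ≥ 0} (2k+1)^n t^k is a polynomial whose coefficients are the type-B Eulerian numbers. -/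
abbrev SignedPerm (n : ℕ) := Equiv.Perm (Fin n) × (Fin n → Bool)

def signedVal {n : ℕ} (w : SignedPerm n) : ℕ → ℤ := fun i =>
  if h : i - 1 < n ∧ 1 ≤ i then
    (if w.2 ⟨i - 1, h.1⟩ then -(((w.1 ⟨i - 1, h.1⟩ : Fin n) : ℤ) + 1)
     else ((w.1 ⟨i - 1, h.1⟩ : Fin n) : ℤ) + 1)
  else 0

def signedDesSet {n : ℕ} (w : SignedPerm n) : Finset ℕ :=
  (Finset.range n).filter (fun i => signedVal w (i + 1) < signedVal w i)

namespace TypeBAux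

open Finset

variable {n k : ℕ}

def letterL (w : SignedPerm n) (j : Fin n) : ℤ :=
  if w.2 j then -((w.1 j : ℤ) + 1) else (w.1 j : ℤ) + 1

lemma letterL_ne_zero (w : SignedPerm n) (j : Fin n) : letterL w j ≠ 0 := by
  unfold letterL; split <;> omega

lemma signedVal_succ (w : SignedPerm n) (j : Fin n) :
    signedVal w (j.val + 1) = letterL w j := by
  have h : j.val + 1 - 1 < n ∧ 1 ≤ j.val + 1 := ⟨by simpa using j.isLt, le_add_self⟩
  simp only [signedVal, dif_pos h, letterL]
  congr 1

lemma signedVal_zero (w : SignedPerm n) : signedVal w 0 = 0 := by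
  simp [signedVal]

lemma mem_des_iff (w : SignedPerm n) (i : ℕ) :
    i ∈ signedDesSet w ↔ i < n ∧ signedVal w (i + 1) < signedVal w i := by
  simp [signedDesSet]

lemma zero_mem_des_iff (w : SignedPerm n) (h : 0 < n) :
    0 ∈ signedDesSet w ↔ letterL w ⟨0, h⟩ < 0 := by
  rw [mem_des_iff]
  have := signedVal_succ w ⟨0, h⟩
  simp only [signedVal_zero]
  constructor
  · rintro ⟨-, h2⟩; rwa [← this]
  · intro h2; exact ⟨h, by rwa [this]⟩

lemma succ_mem_des_iff (w : SignedPerm n) {i : ℕ} (h : i + 1 < n) :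
    (i + 1) ∈ signedDesSet w ↔ letterL w ⟨i + 1, h⟩ < letterL w ⟨i, Nat.lt_of_succ_lt h⟩ := by
  rw [mem_des_iff]
  have h1 := signedVal_succ w ⟨i, Nat.lt_of_succ_lt h⟩
  have h2 := signedVal_succ w ⟨i + 1, h⟩
  simp only at h1 h2
  rw [h1, h2]
  exact ⟨fun x => x.2, fun x => ⟨h, x⟩⟩

def cv (c : Fin n → Fin (k + 1)) : ℕ → ℕ := fun i =>
  if h : i - 1 < n ∧ 1 ≤ i then c ⟨i - 1, h.1⟩ else 0

lemma cv_succ (c : Fin n → Fin (k + 1)) (j : Fin n) : cv c (j.val + 1) = c j := by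
  have h : j.val + 1 - 1 < n ∧ 1 ≤ j.val + 1 := ⟨by simpa using j.isLt, le_add_self⟩
  simp only [cv, dif_pos h]
  congr 1

lemma cv_zero (c : Fin n → Fin (k + 1)) : cv c 0 = 0 := by simp [cv]

def validC (k : ℕ) (w : SignedPerm n) : Finset (Fin n → Fin (k + 1)) :=
  Finset.univ.filter fun c =>
    (∀ i < n, cv c i ≤ cv c (i + 1)) ∧ ∀ i ∈ signedDesSet w, cv c i < cv c (i + 1)

lemma mem_validC {w : SignedPerm n} {c : Fin n → Fin (k + 1)} :
    c ∈ validC k w ↔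
      (∀ i < n, cv c i ≤ cv c (i + 1)) ∧ ∀ i ∈ signedDesSet w, cv c i < cv c (i + 1) := by
  simp [validC]


lemma letterL_neg {w : SignedPerm n} {j : Fin n} (hs : w.2 j = true) : letterL w j < 0 := by
  simp only [letterL, hs, if_true]
  have : (0:ℤ) ≤ ((w.1 j : ℕ) : ℤ) := Int.natCast_nonneg _
  omega

lemma letterL_pos {w : SignedPerm n} {j : Fin n} (hs : w.2 j = false) : 0 < letterL w j := by
  simp only [letterL, hs, Bool.false_eq_true, if_false]
  have : (0:ℤ) ≤ ((w.1 j : ℕ) : ℤ) := Int.natCast_nonneg _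
  omega

lemma validC_sign_false {w : SignedPerm n} {c : Fin n → Fin (k + 1)}
    (hc : c ∈ validC k w) : ∀ j : Fin n, (c j : ℕ) = 0 → w.2 j = false := by
  rw [mem_validC] at hc
  have main : ∀ m : ℕ, ∀ j : Fin n, j.val = m → (c j : ℕ) = 0 → w.2 j = false := by
    intro m
    induction m with
    | zero =>
      intro j hj h0
      by_contra hs
      rw [Bool.not_eq_false] at hs
      have hj0 : (⟨0, j.pos⟩ : Fin n) = j := Fin.ext (by simp [hj])
      have hdes : 0 ∈ signedDesSet w := by
        rw [zero_mem_des_iff w j.pos]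
        exact letterL_neg (by rw [hj0]; exact hs)
      have h2 := hc.2 0 hdes
      rw [cv_zero, cv_succ c ⟨0, j.pos⟩, hj0, h0] at h2
      omega
    | succ m IH =>
      intro j hj h0
      have hlt : m < n := by omega
      have hltn : m + 1 < n := by omega
      have hj1 : (⟨m + 1, hltn⟩ : Fin n) = j := Fin.ext (by simp [hj])
      have hadj := hc.1 (m + 1) hltn
      have e1 : cv c (m + 1) = c ⟨m, hlt⟩ := cv_succ c ⟨m, hlt⟩
      have e2 : cv c (m + 2) = c j := by
        have := cv_succ c j
        rwa [hj] at this
      rw [e1, e2, h0] at hadj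
      have hcp : (c ⟨m, hlt⟩ : ℕ) = 0 := by omega
      have hsp : w.2 ⟨m, hlt⟩ = false := IH ⟨m, hlt⟩ rfl hcp
      by_contra hs
      rw [Bool.not_eq_false] at hs
      have hdes : (m + 1) ∈ signedDesSet w := by
        rw [succ_mem_des_iff w hltn]
        have hA := letterL_neg (w := w) (j := ⟨m + 1, hltn⟩) (by rw [hj1]; exact hs)
        have hB := letterL_pos (w := w) (j := ⟨m, Nat.lt_of_succ_lt hltn⟩) hsp
        omega
      have h2 := hc.2 (m + 1) hdes
      rw [e1, e2, h0, hcp] at h2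
      omega
  exact fun j => main j.val j rfl

lemma validC_one_le_of_sign {w : SignedPerm n} {c : Fin n → Fin (k + 1)}
    (hc : c ∈ validC k w) (j : Fin n) (hs : w.2 j = true) : 1 ≤ (c j : ℕ) := by
  by_contra h
  have h0 : (c j : ℕ) = 0 := by omega
  have := validC_sign_false hc j h0
  rw [hs] at this
  simp at this


def desCnt (w : SignedPerm n) (i : ℕ) : ℕ := ((signedDesSet w).filter (· < i)).card

lemma desCnt_zero (w : SignedPerm n) : desCnt w 0 = 0 := by simp [desCnt]

lemma desCnt_succ (w : SignedPerm n) (i : ℕ) :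
    desCnt w (i + 1) = desCnt w i + if i ∈ signedDesSet w then 1 else 0 := by
  unfold desCnt
  have : ((signedDesSet w).filter (· < i + 1))
      = ((signedDesSet w).filter (· < i)) ∪ ((signedDesSet w).filter (· = i)) := by
    rw [← Finset.filter_or]
    apply Finset.filter_congr
    intro x _
    simp [Nat.lt_succ_iff_lt_or_eq, le_iff_lt_or_eq]
  rw [this, Finset.card_union_of_disjoint, Finset.filter_eq']
  · split <;> simp
  · rw [Finset.disjoint_filter]
    intro x _ hx hx2
    omega

lemma desCnt_le (w : SignedPerm n) (i : ℕ) : desCnt w i ≤ (signedDesSet w).card :=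
  Finset.card_filter_le _ _

lemma desCnt_n (w : SignedPerm n) : desCnt w n = (signedDesSet w).card := by
  unfold desCnt
  congr 1
  apply Finset.filter_true_of_mem
  intro x hx
  rw [mem_des_iff] at hx
  exact hx.1

lemma cv_ge_desCnt {w : SignedPerm n} {c : Fin n → Fin (k + 1)}
    (hc : c ∈ validC k w) : ∀ i ≤ n, desCnt w i ≤ cv c i := by
  rw [mem_validC] at hc
  intro i
  induction i with
  | zero => intro _; simp [desCnt_zero]
  | succ i IH =>
    intro hi
    have h1 := IH (by omega)
    rw [desCnt_succ]
    by_cases hd : i ∈ signedDesSet w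
    · have := hc.2 i hd
      simp [hd]
      omega
    · have := hc.1 i (by omega)
      simp [hd]
      omega

/-- A chain lemma for step-increasing tuples. -/
lemma chain_of_step {v : Fin n → ℕ}
    (hstep : ∀ m (h : m + 1 < n), v ⟨m, Nat.lt_of_succ_lt h⟩ + 1 ≤ v ⟨m + 1, h⟩) :
    ∀ b (hb : b < n), ∀ a (_ : a ≤ b), v ⟨a, by omega⟩ + (b - a) ≤ v ⟨b, hb⟩ := by
  intro b
  induction b with
  | zero => intro hb a ha; interval_cases a; simp
  | succ b IH =>
    intro hb a ha
    rcases Nat.eq_or_lt_of_le ha with h | h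
    · subst h; simp
    · have ha' : a ≤ b := by omega
      have := IH (by omega) a ha'
      have := hstep b hb
      omega


lemma validC_desCnt_le {w : SignedPerm n} {c : Fin n → Fin (k + 1)}
    (hc : c ∈ validC k w) (j : Fin n) : desCnt w (j.val + 1) ≤ (c j : ℕ) := by
  have := cv_ge_desCnt hc (j.val + 1) j.isLt
  rwa [cv_succ] at this

def vmap (w : SignedPerm n) (c : Fin n → Fin (k + 1)) : Fin n → ℕ :=
  fun j => (c j : ℕ) + j.val - desCnt w (j.val + 1)

lemma vmap_step {w : SignedPerm n} {c : Fin n → Fin (k + 1)} (hc : c ∈ validC k w) :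
    ∀ m (h : m + 1 < n), vmap w c ⟨m, Nat.lt_of_succ_lt h⟩ + 1 ≤ vmap w c ⟨m + 1, h⟩ := by
  intro m h
  have hadj : cv c (m + 1) ≤ cv c (m + 2) := (mem_validC.mp hc).1 (m + 1) h
  have hstrict := (mem_validC.mp hc).2 (m + 1)
  rw [cv_succ c ⟨m, Nat.lt_of_succ_lt h⟩, show m + 2 = (⟨m + 1, h⟩ : Fin n).val + 1 from rfl,
    cv_succ c ⟨m + 1, h⟩] at hadj hstrict
  have hD := desCnt_succ w (m + 1)
  have ha := validC_desCnt_le hc ⟨m, Nat.lt_of_succ_lt h⟩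
  unfold vmap
  simp only at ha ⊢
  by_cases hdes : (m + 1) ∈ signedDesSet w
  · have := hstrict hdes
    simp only [hdes, if_true] at hD
    omega
  · simp only [hdes, if_false] at hD
    omega

lemma vmap_strictMono {w : SignedPerm n} {c : Fin n → Fin (k + 1)} (hc : c ∈ validC k w) :
    StrictMono (vmap w c) := by
  intro a b hab
  have h := chain_of_step (vmap_step hc) b.val b.isLt a.val (le_of_lt hab)
  have ea : (⟨a.val, by omega⟩ : Fin n) = a := rfl
  have eb : (⟨b.val, b.isLt⟩ : Fin n) = b := rfl
  rw [ea, eb] at h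
  have : a.val < b.val := hab
  omega

lemma vmap_lt {w : SignedPerm n} {c : Fin n → Fin (k + 1)} (hc : c ∈ validC k w)
    (hk : (signedDesSet w).card ≤ k) (j : Fin n) :
    vmap w c j < n + (k - (signedDesSet w).card) := by
  have hn : 0 < n := j.pos
  have hjle : j.val ≤ n - 1 := by omega
  have hchain := chain_of_step (vmap_step hc) (n - 1) (by omega) j.val hjle
  have ej : (⟨j.val, by omega⟩ : Fin n) = j := rfl
  rw [ej] at hchain
  have hlast : vmap w c ⟨n - 1, by omega⟩ ≤ k - (signedDesSet w).card + (n - 1) := by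
    unfold vmap
    simp only
    have h1 : desCnt w (n - 1 + 1) = (signedDesSet w).card := by
      rw [show n - 1 + 1 = n by omega, desCnt_n]
    have hcb : (c ⟨n - 1, by omega⟩ : ℕ) ≤ k := Fin.is_le _
    have hge := validC_desCnt_le hc ⟨n - 1, by omega⟩
    simp only at hge
    omega
  omega

lemma card_validC (w : SignedPerm n) (hk : (signedDesSet w).card ≤ k) :
    (validC k w).card = (n + (k - (signedDesSet w).card)).choose n := by
  set d := (signedDesSet w).card with hd
  have hcard : (n + (k - d)).choose n
      = (Finset.powersetCard n (Finset.range (n + (k - d)))).card := by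
    rw [Finset.card_powersetCard, Finset.card_range]
  rw [hcard]
  apply Finset.card_bij (i := fun c _ => Finset.image (vmap w c) Finset.univ)
  case hi =>
    intro c hc
    rw [Finset.mem_powersetCard]
    constructor
    · intro x hx
      rw [Finset.mem_image] at hx
      obtain ⟨j, -, rfl⟩ := hx
      rw [Finset.mem_range]
      exact vmap_lt hc hk j
    · rw [Finset.card_image_of_injective _ (vmap_strictMono hc).injective,
        Finset.card_univ, Fintype.card_fin]
  case i_inj =>
    intro c hc c' hc' heq
    have hcards : (Finset.image (vmap w c) Finset.univ).card = n := by
      rw [Finset.card_image_of_injective _ (vmap_strictMono hc).injective,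
        Finset.card_univ, Fintype.card_fin]
    have h1 : vmap w c = ⇑(Finset.orderEmbOfFin _ hcards) :=
      Finset.orderEmbOfFin_unique hcards (fun x => Finset.mem_image_of_mem _ (Finset.mem_univ x))
        (vmap_strictMono hc)
    have h2 : vmap w c' = ⇑(Finset.orderEmbOfFin _ hcards) :=
      Finset.orderEmbOfFin_unique hcards
        (fun x => heq ▸ Finset.mem_image_of_mem _ (Finset.mem_univ x)) (vmap_strictMono hc')
    have hvv : vmap w c = vmap w c' := h1.trans h2.symm
    funext j
    have hj := congrFun hvv j
    unfold vmap at hj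
    have ha := validC_desCnt_le hc j
    have ha' := validC_desCnt_le hc' j
    exact Fin.ext (by omega)
  case i_surj =>
    intro s hs
    rw [Finset.mem_powersetCard] at hs
    obtain ⟨hsub, hscard⟩ := hs
    set g := s.orderEmbOfFin hscard with hg
    have gStrict : StrictMono ⇑g := g.strictMono
    have gmem : ∀ i, g i ∈ s := fun i => Finset.orderEmbOfFin_mem s hscard i
    have gbound : ∀ i, g i < n + (k - d) := by
      intro i
      have := hsub (gmem i)
      rwa [Finset.mem_range] at this
    have gstep : ∀ m (h : m + 1 < n), g ⟨m, Nat.lt_of_succ_lt h⟩ + 1 ≤ g ⟨m + 1, h⟩ := by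
      intro m h
      exact gStrict (show (⟨m, Nat.lt_of_succ_lt h⟩ : Fin n) < ⟨m + 1, h⟩ by
        rw [Fin.mk_lt_mk]; omega)
    have gge : ∀ j : Fin n, j.val ≤ g j := by
      intro j
      have := chain_of_step gstep j.val j.isLt 0 (Nat.zero_le _)
      have ej : (⟨j.val, j.isLt⟩ : Fin n) = j := rfl
      rw [ej] at this
      omega
    have gle : ∀ j : Fin n, g j ≤ k - d + j.val := by
      intro j
      have hn : 0 < n := j.pos
      have := chain_of_step gstep (n - 1) (by omega) j.val (by omega)
      have ej : (⟨j.val, by omega⟩ : Fin n) = j := rfl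
      rw [ej] at this
      have := gbound ⟨n - 1, by omega⟩
      omega
    have cbound : ∀ j : Fin n, g j + desCnt w (j.val + 1) - j.val < k + 1 := by
      intro j
      have h1 := gge j
      have h2 := gle j
      have h3 : desCnt w (j.val + 1) ≤ d := desCnt_le w _
      omega
    refine ⟨fun j => ⟨g j + desCnt w (j.val + 1) - j.val, cbound j⟩, ?_, ?_⟩
    · rw [mem_validC]
      constructor
      · intro i hi
        cases i with
        | zero => rw [cv_zero]; exact Nat.zero_le _
        | succ m =>
          rw [cv_succ _ ⟨m, Nat.lt_of_succ_lt hi⟩,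
            show m + 1 + 1 = (⟨m + 1, hi⟩ : Fin n).val + 1 from rfl, cv_succ]
          simp only
          have h1 := gstep m hi
          have h2 := desCnt_succ w (m + 1)
          have h3 := gge ⟨m, Nat.lt_of_succ_lt hi⟩
          simp only at h3
          split at h2 <;> omega
      · intro i hdes
        have hin : i < n := ((mem_des_iff w i).mp hdes).1
        cases i with
        | zero =>
          rw [cv_zero, show (0:ℕ) + 1 = (⟨0, hin⟩ : Fin n).val + 1 from rfl, cv_succ]
          simp only
          have h2 := desCnt_succ w 0
          rw [desCnt_zero, if_pos hdes] at h2
          have h3 := gge ⟨0, hin⟩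
          simp only at h3
          omega
        | succ m =>
          rw [cv_succ _ ⟨m, Nat.lt_of_succ_lt hin⟩,
            show m + 1 + 1 = (⟨m + 1, hin⟩ : Fin n).val + 1 from rfl, cv_succ]
          simp only
          have h1 := gstep m hin
          have h2 := desCnt_succ w (m + 1)
          rw [if_pos hdes] at h2
          have h3 := gge ⟨m, Nat.lt_of_succ_lt hin⟩
          simp only at h3
          omega
    · have hvg : ∀ j : Fin n,
          vmap w (fun j => ⟨g j + desCnt w (j.val + 1) - j.val, cbound j⟩) j = g j := by
        intro j
        unfold vmap
        simp only
        have h1 := gge j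
        omega
      ext x
      rw [Finset.mem_image]
      constructor
      · rintro ⟨j, -, rfl⟩
        rw [hvg j]
        exact gmem j
      · intro hx
        have : x ∈ Set.range ⇑g := by
          rw [Finset.range_orderEmbOfFin]
          exact hx
        obtain ⟨j, hj⟩ := this
        exact ⟨j, Finset.mem_univ j, by rw [hvg j]; exact hj⟩


/-- Monotonicity from adjacent steps for `Fin` tuples. -/
lemma fin_monotone_of_step {α : Type*} [Preorder α] {v : Fin n → α}
    (h : ∀ m (hm : m + 1 < n), v ⟨m, Nat.lt_of_succ_lt hm⟩ ≤ v ⟨m + 1, hm⟩) : Monotone v := by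
  have main : ∀ b (hb : b < n), ∀ a (_ : a ≤ b), v ⟨a, by omega⟩ ≤ v ⟨b, hb⟩ := by
    intro b
    induction b with
    | zero => intro hb a ha; interval_cases a; exact le_refl _
    | succ b IH =>
      intro hb a ha
      rcases Nat.eq_or_lt_of_le ha with hh | hh
      · subst hh; exact le_refl _
      · exact le_trans (IH (by omega) a (by omega)) (h b hb)
  intro a b hab
  have := main b.val b.isLt a.val hab
  simpa using this

/-- The box `[-k,k]^n` as a type of functions. -/
abbrev Box (n k : ℕ) := Fin n → ((Finset.Icc (-(k : ℤ)) (k : ℤ)) : Finset ℤ)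

lemma card_box : Fintype.card (Box n k) = (2 * k + 1) ^ n := by
  rw [Fintype.card_fun, Fintype.card_fin, Fintype.card_coe, Int.card_Icc]
  congr 1
  have : ((k : ℤ) + 1 - -(k : ℤ)) = ((2 * k + 1 : ℕ) : ℤ) := by push_cast; ring
  rw [this, Int.toNat_natCast]

/-- The sorting key: magnitude first, then a tie-break that equals the signed letter. -/
def keyf (f : Box n k) : Fin n → ℕ ×ₗ ℤ := fun i =>
  toLex ((f i : ℤ).natAbs, if (f i : ℤ) < 0 then -((i.val : ℤ) + 1) else (i.val : ℤ) + 1)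

lemma keyf_inj (f : Box n k) : Function.Injective (keyf f) := by
  intro i j h
  have h2 := congrArg (fun p => (ofLex p).2) h
  simp only [keyf, ofLex_toLex] at h2
  apply Fin.ext
  split_ifs at h2 <;> omega

lemma keyf_snd_neg_iff (f : Box n k) (i : Fin n) :
    (f i : ℤ) < 0 ↔ (ofLex (keyf f i)).2 < 0 := by
  simp only [keyf, ofLex_toLex]
  split_ifs with h <;> constructor <;> intro <;> omega

/-- Packing a signed permutation and a value sequence into a point of the box. -/
def pack (w : SignedPerm n) (c : Fin n → Fin (k + 1)) : Box n k := fun i =>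
  ⟨if w.2 (w.1.symm i) then -((c (w.1.symm i) : ℕ) : ℤ) else ((c (w.1.symm i) : ℕ) : ℤ), by
    rw [Finset.mem_Icc]
    have h := Fin.is_le (c (w.1.symm i))
    split <;> omega⟩

lemma pack_apply (w : SignedPerm n) (c : Fin n → Fin (k + 1)) (p : Fin n) :
    (pack w c (w.1 p) : ℤ)
      = if w.2 p then -((c p : ℕ) : ℤ) else ((c p : ℕ) : ℤ) := by
  simp [pack]

lemma keyf_pack {w : SignedPerm n} {c : Fin n → Fin (k + 1)} (hc : c ∈ validC k w) (p : Fin n) :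
    keyf (pack w c) (w.1 p) = toLex ((c p : ℕ), letterL w p) := by
  have hap := pack_apply w c p
  unfold keyf letterL
  rcases hsp : w.2 p with _ | _
  · rw [hsp] at hap
    simp only [Bool.false_eq_true, if_false] at hap
    rw [hap]
    congr 1
  · have h1 := validC_one_le_of_sign hc p hsp
    rw [hsp] at hap
    simp only [if_true] at hap
    rw [hap]
    congr 1
    refine Prod.ext ?_ ?_
    · simp only [Int.natAbs_neg]
      simp
    · simp only [if_true]
      rw [if_pos (by omega)]

lemma keyf_pack_monotone {w : SignedPerm n} {c : Fin n → Fin (k + 1)} (hc : c ∈ validC k w) :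
    Monotone (keyf (pack w c) ∘ w.1) := by
  apply fin_monotone_of_step
  intro m hm
  simp only [Function.comp_apply]
  rw [keyf_pack hc, keyf_pack hc, Prod.Lex.le_iff]
  have hadj : cv c (m + 1) ≤ cv c (m + 2) := (mem_validC.mp hc).1 (m + 1) hm
  rw [cv_succ c ⟨m, Nat.lt_of_succ_lt hm⟩, show m + 2 = (⟨m + 1, hm⟩ : Fin n).val + 1 from rfl,
    cv_succ c ⟨m + 1, hm⟩] at hadj
  rcases Nat.eq_or_lt_of_le hadj with heq | hlt
  · right
    refine ⟨heq, ?_⟩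
    by_contra hL
    push_neg at hL
    have hdes : (m + 1) ∈ signedDesSet w := by
      rw [succ_mem_des_iff w hm]
      exact hL
    have := (mem_validC.mp hc).2 (m + 1) hdes
    rw [cv_succ c ⟨m, Nat.lt_of_succ_lt hm⟩, show m + 2 = (⟨m + 1, hm⟩ : Fin n).val + 1 from rfl,
      cv_succ c ⟨m + 1, hm⟩] at this
    omega
  · left; exact hlt

lemma sort_pack {w : SignedPerm n} {c : Fin n → Fin (k + 1)} (hc : c ∈ validC k w) :
    Tuple.sort (keyf (pack w c)) = w.1 := by
  have h1 := keyf_pack_monotone hc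
  have h2 := Tuple.monotone_sort (keyf (pack w c))
  have h3 := Tuple.unique_monotone h1 h2
  apply Equiv.ext
  intro p
  exact (keyf_inj (pack w c) (congrFun h3 p)).symm


lemma pack_sign_iff {w : SignedPerm n} {c : Fin n → Fin (k + 1)} (hc : c ∈ validC k w)
    (p : Fin n) : ((pack w c (w.1 p) : ℤ) < 0) ↔ w.2 p = true := by
  rw [keyf_snd_neg_iff, keyf_pack hc]
  simp only [ofLex_toLex]
  constructor
  · intro h
    by_contra hb
    rw [Bool.not_eq_true] at hb
    have := letterL_pos hb
    omega
  · intro h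
    exact letterL_neg h

lemma pack_natAbs {w : SignedPerm n} {c : Fin n → Fin (k + 1)} (hc : c ∈ validC k w)
    (p : Fin n) : (pack w c (w.1 p) : ℤ).natAbs = (c p : ℕ) := by
  have := keyf_pack hc p
  have h1 := congrArg (fun q => (ofLex q).1) this
  simpa [keyf] using h1

def packSig : (Σ w : SignedPerm n, {c : Fin n → Fin (k + 1) // c ∈ validC k w}) → Box n k :=
  fun x => pack x.1 x.2.1

lemma packSig_injective : Function.Injective (packSig (n := n) (k := k)) := by
  rintro ⟨w, c, hc⟩ ⟨w', c', hc'⟩ h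
  simp only [packSig] at h
  have hσ : w.1 = w'.1 := by rw [← sort_pack hc, ← sort_pack hc', h]
  have hε : w.2 = w'.2 := by
    funext p
    rw [Bool.eq_iff_iff]
    rw [← pack_sign_iff hc p, ← pack_sign_iff hc' p, ← hσ, h]
  have hw : w = w' := Prod.ext hσ hε
  subst hw
  have hcc : c = c' := by
    funext p
    apply Fin.ext
    rw [← pack_natAbs hc p, ← pack_natAbs hc' p, h]
  subst hcc
  rfl

lemma packSig_surjective : Function.Surjective (packSig (n := n) (k := k)) := by
  intro f
  set σ := Tuple.sort (keyf f) with hσ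
  set w : SignedPerm n := (σ, fun p => decide ((f (σ p) : ℤ) < 0)) with hw
  have hbound : ∀ p : Fin n, (f (σ p) : ℤ).natAbs < k + 1 := by
    intro p
    have := (f (σ p)).2
    rw [Finset.mem_Icc] at this
    omega
  set c : Fin n → Fin (k + 1) := fun p => ⟨(f (σ p) : ℤ).natAbs, hbound p⟩ with hcdef
  have hkey : ∀ p : Fin n, keyf f (σ p) = toLex ((c p : ℕ), letterL w p) := by
    intro p
    simp only [keyf, letterL, hw, hcdef]
    by_cases h : (f (σ p) : ℤ) < 0 <;> simp [h]
  have hmono : Monotone (keyf f ∘ σ) := Tuple.monotone_sort (keyf f)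
  have hstep : ∀ m (hm : m + 1 < n),
      ((c ⟨m, Nat.lt_of_succ_lt hm⟩ : ℕ) < (c ⟨m + 1, hm⟩ : ℕ)) ∨
        ((c ⟨m, Nat.lt_of_succ_lt hm⟩ : ℕ) = (c ⟨m + 1, hm⟩ : ℕ) ∧
          letterL w ⟨m, Nat.lt_of_succ_lt hm⟩ ≤ letterL w ⟨m + 1, hm⟩) := by
    intro m hm
    have h := hmono (show (⟨m, Nat.lt_of_succ_lt hm⟩ : Fin n) ≤ ⟨m + 1, hm⟩ by
      rw [Fin.mk_le_mk]; omega)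
    simp only [Function.comp_apply] at h
    rw [hkey ⟨m, Nat.lt_of_succ_lt hm⟩, hkey ⟨m + 1, hm⟩, Prod.Lex.le_iff] at h
    exact h
  have hcmem : c ∈ validC k w := by
    rw [mem_validC]
    constructor
    · intro i hi
      cases i with
      | zero => rw [cv_zero]; exact Nat.zero_le _
      | succ m =>
        rw [cv_succ c ⟨m, Nat.lt_of_succ_lt hi⟩,
          show m + 1 + 1 = (⟨m + 1, hi⟩ : Fin n).val + 1 from rfl, cv_succ c ⟨m + 1, hi⟩]
        rcases hstep m hi with h | ⟨h, -⟩ <;> omega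
    · intro i hdes
      have hin : i < n := ((mem_des_iff w i).mp hdes).1
      cases i with
      | zero =>
        rw [cv_zero, show (0 : ℕ) + 1 = (⟨0, hin⟩ : Fin n).val + 1 from rfl, cv_succ c ⟨0, hin⟩]
        rw [zero_mem_des_iff w hin] at hdes
        have hsgn : w.2 ⟨0, hin⟩ = true := by
          by_contra hb
          rw [Bool.not_eq_true] at hb
          have := letterL_pos hb
          omega
        have hneg : (f (σ ⟨0, hin⟩) : ℤ) < 0 := by
          have : decide ((f (σ ⟨0, hin⟩) : ℤ) < 0) = true := hsgn
          simpa using this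
        have hcv : (c ⟨0, hin⟩ : ℕ) = (f (σ ⟨0, hin⟩) : ℤ).natAbs := rfl
        omega
      | succ m =>
        rw [cv_succ c ⟨m, Nat.lt_of_succ_lt hin⟩,
          show m + 1 + 1 = (⟨m + 1, hin⟩ : Fin n).val + 1 from rfl, cv_succ c ⟨m + 1, hin⟩]
        rw [succ_mem_des_iff w hin] at hdes
        rcases hstep m hin with h | ⟨-, h⟩
        · omega
        · omega
  refine ⟨⟨w, c, hcmem⟩, ?_⟩
  funext i
  apply Subtype.ext
  show (pack w c i : ℤ) = (f i : ℤ)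
  have hp : w.1 (w.1.symm i) = i := Equiv.apply_symm_apply _ _
  set p := w.1.symm i with hpdef
  have : (pack w c i : ℤ) = if w.2 p then -((c p : ℕ) : ℤ) else ((c p : ℕ) : ℤ) := by
    rw [← hp, pack_apply]
  rw [this]
  have hσp : σ p = i := hp
  by_cases h : (f (σ p) : ℤ) < 0
  · rw [if_pos (by simpa [hw] using h)]
    have : (c p : ℕ) = (f (σ p) : ℤ).natAbs := rfl
    rw [this, hσp] at *
    omega
  · rw [if_neg (by simpa [hw] using h)]
    have : (c p : ℕ) = (f (σ p) : ℤ).natAbs := rfl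
    rw [this, hσp] at *
    omega

lemma sum_card_validC :
    ∑ w : SignedPerm n, (validC k w).card = (2 * k + 1) ^ n := by
  have h1 := Fintype.card_of_bijective ⟨packSig_injective (n := n) (k := k),
    packSig_surjective (n := n) (k := k)⟩
  rw [card_box, Fintype.card_sigma] at h1
  rw [← h1]
  congr 1
  funext w
  rw [Fintype.card_coe]


lemma validC_empty {w : SignedPerm n} (hk : k < (signedDesSet w).card) :
    validC k w = ∅ := by
  rw [Finset.eq_empty_iff_forall_notMem]
  intro c hc
  have h1 := cv_ge_desCnt hc n le_rfl
  rw [desCnt_n] at h1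
  have hdn : (signedDesSet w).card ≤ n := by
    have : signedDesSet w ⊆ Finset.range n := Finset.filter_subset _ _
    have := Finset.card_le_card this
    simpa using this
  cases n with
  | zero => omega
  | succ m =>
    have e2 : cv c (m + 1) = (c ⟨m, Nat.lt_succ_self m⟩ : ℕ) := cv_succ c ⟨m, Nat.lt_succ_self m⟩
    have := Fin.is_le (c ⟨m, Nat.lt_succ_self m⟩)
    omega

lemma worpitzkyB (n k : ℕ) :
    (2 * k + 1) ^ n = ∑ w : SignedPerm n,
      (if (signedDesSet w).card ≤ k then (n + (k - (signedDesSet w).card)).choose n else 0) := by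
  rw [← sum_card_validC (n := n) (k := k)]
  apply Finset.sum_congr rfl
  intro w _
  by_cases h : (signedDesSet w).card ≤ k
  · rw [if_pos h, card_validC w h]
  · rw [if_neg h, validC_empty (by omega), Finset.card_empty]

end TypeBAux

/-- MacMahon's type-B formula at `q = 1` for the cube `[-1,1]^n`: as formal power
series over `ℚ`, `∑_{k≥0} (2k+1)^n t^k = d_{B_n}(t)/(1-t)^{n+1}`, where
`d_{B_n}(t) = ∑_{w ∈ B_n} t^{des(w)}`. -/
theorem typeB_eulerian_hstar_cube (n : ℕ) (hn : 0 < n) :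
    PowerSeries.mk (fun k => (((2 * k + 1 : ℕ) ^ n : ℕ) : ℚ))
      = (∑ w : SignedPerm n, (PowerSeries.X : PowerSeries ℚ) ^ (signedDesSet w).card)
        * ((1 - PowerSeries.X) ^ (n + 1))⁻¹ := by
  have hconst : (PowerSeries.constantCoeff (R := ℚ)) ((1 - PowerSeries.X) ^ (n + 1)) ≠ 0 := by
    rw [map_pow, map_sub, map_one, PowerSeries.constantCoeff_X, sub_zero, one_pow]
    exact one_ne_zero
  have hinv : (((1 - PowerSeries.X) ^ (n + 1) : PowerSeries ℚ))⁻¹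
      = PowerSeries.mk (fun m => ((n + m).choose n : ℚ)) := by
    rw [PowerSeries.inv_eq_iff_mul_eq_one hconst]
    exact PowerSeries.mk_add_choose_mul_one_sub_pow_eq_one ℚ n
  rw [hinv]
  apply PowerSeries.ext
  intro j
  rw [PowerSeries.coeff_mk, Finset.sum_mul, map_sum]
  have hco : ∀ w : SignedPerm n,
      (PowerSeries.coeff (R := ℚ) j) ((PowerSeries.X : PowerSeries ℚ) ^ (signedDesSet w).card
          * PowerSeries.mk (fun m => ((n + m).choose n : ℚ)))
        = if (signedDesSet w).card ≤ j
            then (((n + (j - (signedDesSet w).card)).choose n : ℕ) : ℚ) else 0 := by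
    intro w
    rw [PowerSeries.coeff_X_pow_mul']
    split
    · rw [PowerSeries.coeff_mk]
    · rfl
  rw [Finset.sum_congr rfl (fun w _ => hco w)]
  have := TypeBAux.worpitzkyB n j
  calc (((2 * j + 1 : ℕ) ^ n : ℕ) : ℚ)
      = ((∑ w : SignedPerm n,
          (if (signedDesSet w).card ≤ j
            then (n + (j - (signedDesSet w).card)).choose n else 0) : ℕ) : ℚ) := by
        exact_mod_cast congrArg (fun x : ℕ => (x : ℚ)) this
    _ = _ := by
        push_cast [apply_ite (fun x : ℕ => (x : ℚ))]
        rfl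
end

section
/- As formal power series in q and t, ∑_{w ∈ B_n} q^{maj(w)} t^{des(w)} / ∏_{i=0}^{n} (1 − q^i t) = ∑_{k ≥ 0} ([k+1]_q + [k]_q)^n t^k, where [m]_q = 1 + q + … + q^{m−1}. -/
/-- `maj(w) = ∑_{i ∈ Des(w)} i`. -/
def signedMaj {n : ℕ} (w : SignedPerm n) : ℕ := ∑ i ∈ signedDesSet w, i

/-- The q-integer `[m]_q = 1 + q + … + q^{m-1}` in `ℚ(q)`. -/
noncomputable def qInt (m : ℕ) : RatFunc ℚ := ∑ i ∈ Finset.range m, RatFunc.X ^ i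

/-- Insert a new maximum value `n` at position `j` of the permutation `π` (one-line). -/
def insPerm {n : ℕ} (j : Fin (n+1)) (π : Equiv.Perm (Fin n)) : Equiv.Perm (Fin (n+1)) where
  toFun := j.insertNth (Fin.last n) (fun i => (π i).castSucc)
  invFun := fun v => if h : v = Fin.last n then j else j.succAbove (π.symm (v.castPred h))
  left_inv := by
    intro k
    rcases eq_or_ne k j with rfl | hk
    · simp [Fin.insertNth_apply_same]
    · obtain ⟨i, rfl⟩ := Fin.exists_succAbove_eq hk
      simp only [Fin.insertNth_apply_succAbove]
      rw [dif_neg (Fin.castSucc_lt_last (π i)).ne]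
      simp
  right_inv := by
    intro v
    by_cases h : v = Fin.last n
    · subst h; simp [Fin.insertNth_apply_same]
    · dsimp only
      rw [dif_neg h]
      rw [Fin.insertNth_apply_succAbove]
      simp [h]

def insSP {n : ℕ} (u : SignedPerm n) (j : Fin (n+1)) (b : Bool) : SignedPerm (n+1) :=
  (insPerm j u.1, j.insertNth b u.2)

lemma signedVal_insSP {n : ℕ} (u : SignedPerm n) (j : Fin (n+1)) (b : Bool) (i : ℕ) :
    signedVal (insSP u j b) i =
      if i = (j : ℕ) + 1 then (if b then -((n:ℤ)+1) else (n:ℤ)+1)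
      else if i ≤ (j : ℕ) then signedVal u i else signedVal u (i-1) := by
  rcases Nat.eq_zero_or_pos i with rfl | hi
  · have hj : ¬ ((0:ℕ) = (j:ℕ) + 1) := by omega
    rw [if_neg hj, if_pos (Nat.zero_le _)]
    simp [signedVal]
  rcases eq_or_ne i ((j:ℕ)+1) with he | he
  · subst he
    rw [if_pos rfl]
    have h1 : (j:ℕ) + 1 - 1 < n + 1 ∧ 1 ≤ (j:ℕ) + 1 := ⟨by omega, by omega⟩
    rw [signedVal, dif_pos h1]
    have hjj : (⟨(j:ℕ) + 1 - 1, h1.1⟩ : Fin (n+1)) = j := by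
      ext; simp
    rw [hjj]
    have h2 : (insSP u j b).1 j = Fin.last n := by
      simp [insSP, insPerm, Fin.insertNth_apply_same]
    have h3 : (insSP u j b).2 j = b := by
      simp [insSP, Fin.insertNth_apply_same]
    rw [h2, h3]
    cases b <;> simp [Fin.last]
  · rw [if_neg he]
    by_cases hbig : n + 2 ≤ i
    · have h1 : ¬ (i - 1 < n + 1 ∧ 1 ≤ i) := by omega
      rw [signedVal, dif_neg h1]
      have hile : ¬ i ≤ (j:ℕ) := by have := j.isLt; omega
      rw [if_neg hile]
      have h2 : ¬ (i - 1 - 1 < n ∧ 1 ≤ i - 1) := by omega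
      rw [signedVal, dif_neg h2]
    · -- 1 ≤ i ≤ n+1, i ≠ j+1
      have h1 : i - 1 < n + 1 ∧ 1 ≤ i := ⟨by omega, hi⟩
      rw [signedVal, dif_pos h1]
      set i0 : Fin (n+1) := ⟨i - 1, h1.1⟩ with hi0
      have hne : i0 ≠ j := by
        intro hc
        apply he
        have : i - 1 = (j:ℕ) := by rw [hi0] at hc; exact congrArg Fin.val hc
        omega
      obtain ⟨k, hk⟩ := Fin.exists_succAbove_eq hne
      have hval : (insSP u j b).1 i0 = (u.1 k).castSucc := by
        rw [← hk]
        simp [insSP, insPerm, Fin.insertNth_apply_succAbove]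
      have hsgn : (insSP u j b).2 i0 = u.2 k := by
        rw [← hk]
        simp [insSP, Fin.insertNth_apply_succAbove]
      rw [hval, hsgn]
      rcases lt_or_ge (Fin.castSucc k) j with hlt | hle
      · have hkv : (k : ℕ) = i - 1 := by
          rw [Fin.succAbove_of_castSucc_lt _ _ hlt] at hk
          simpa using congrArg Fin.val hk
        have hij : i ≤ (j:ℕ) := by
          have : (k:ℕ) < (j:ℕ) := hlt
          omega
        rw [if_pos hij]
        have h2 : i - 1 < n ∧ 1 ≤ i := ⟨by rw [← hkv]; exact k.isLt, hi⟩
        rw [signedVal, dif_pos h2]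
        have hkk : (⟨i - 1, h2.1⟩ : Fin n) = k := by ext; simp [hkv]
        rw [hkk]
        cases u.2 k <;> simp
      · have hkv : (k : ℕ) + 1 = i - 1 := by
          rw [Fin.succAbove_of_le_castSucc _ _ hle] at hk
          simpa [Fin.val_succ] using congrArg Fin.val hk
        have hij : ¬ i ≤ (j:ℕ) := by
          have : (j:ℕ) ≤ (k:ℕ) := hle
          omega
        rw [if_neg hij]
        have h2 : i - 1 - 1 < n ∧ 1 ≤ i - 1 := ⟨by omega, by omega⟩
        rw [signedVal, dif_pos h2]
        have hkk : (⟨i - 1 - 1, h2.1⟩ : Fin n) = k := by ext; simp; omega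
        rw [hkk]
        cases u.2 k <;> simp

lemma signedVal_bound {n : ℕ} (u : SignedPerm n) (i : ℕ) :
    -(n:ℤ) ≤ signedVal u i ∧ signedVal u i ≤ (n:ℤ) := by
  rw [signedVal]
  split_ifs with h h2
  · have := (u.1 ⟨i-1, h.1⟩).isLt
    constructor <;> [skip; nlinarith [Int.ofNat_nonneg (u.1 ⟨i-1, h.1⟩ : ℕ)]]
    have : ((u.1 ⟨i-1, h.1⟩ : Fin n) : ℤ) < n := by exact_mod_cast (u.1 ⟨i-1, h.1⟩).isLt
    omega
  · have : ((u.1 ⟨i-1, h.1⟩ : Fin n) : ℤ) < n := by exact_mod_cast (u.1 ⟨i-1, h.1⟩).isLt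
    have : (0:ℤ) ≤ ((u.1 ⟨i-1, h.1⟩ : Fin n) : ℤ) := Int.ofNat_nonneg _
    omega
  · simp

lemma sv_ins_at {n : ℕ} (u : SignedPerm n) (j : Fin (n+1)) (b : Bool) :
    signedVal (insSP u j b) ((j:ℕ)+1) = if b then -((n:ℤ)+1) else (n:ℤ)+1 := by
  rw [signedVal_insSP, if_pos rfl]

lemma sv_ins_lt {n : ℕ} (u : SignedPerm n) (j : Fin (n+1)) (b : Bool) {i : ℕ}
    (h : i ≤ (j:ℕ)) : signedVal (insSP u j b) i = signedVal u i := by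
  rw [signedVal_insSP, if_neg (by omega), if_pos h]

lemma sv_ins_gt {n : ℕ} (u : SignedPerm n) (j : Fin (n+1)) (b : Bool) {i : ℕ}
    (h : (j:ℕ)+2 ≤ i) : signedVal (insSP u j b) i = signedVal u (i-1) := by
  rw [signedVal_insSP, if_neg (by omega), if_neg (by omega)]

lemma signedDesSet_insSP {n : ℕ} (u : SignedPerm n) (j : Fin (n+1)) (b : Bool) :
    signedDesSet (insSP u j b) =
      ((signedDesSet u).filter (· < (j:ℕ))) ∪
      (if b then {(j:ℕ)} else if (j:ℕ) < n then {(j:ℕ)+1} else ∅) ∪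
      ((signedDesSet u).filter (fun i => (j:ℕ) < i)).image (· + 1) := by
  have hb := signedVal_bound u
  have hJn : (j:ℕ) ≤ n := by omega
  ext i
  simp only [signedDesSet, Finset.mem_filter, Finset.mem_range, Finset.mem_union,
    Finset.mem_image, Finset.mem_singleton]
  rcases Nat.lt_trichotomy i (j:ℕ) with h1 | h1 | h1
  · rw [sv_ins_lt u j b (by omega), sv_ins_lt u j b (by omega)]
    constructor
    · rintro ⟨hin, hd⟩
      exact Or.inl (Or.inl ⟨⟨by omega, hd⟩, h1⟩)
    · rintro ((⟨⟨hin, hd⟩, _⟩ | hmid) | ⟨i', ⟨⟨_, _⟩, hgt⟩, hip⟩)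
      · exact ⟨by omega, hd⟩
      · exfalso
        split_ifs at hmid with hbb hn
        · rw [Finset.mem_singleton] at hmid; omega
        · rw [Finset.mem_singleton] at hmid; omega
        · exact absurd hmid (Finset.notMem_empty _)
      · exfalso; omega
  · subst h1
    rw [sv_ins_at, sv_ins_lt u j b (le_refl _)]
    cases b with
    | true =>
      rw [if_pos rfl]
      constructor
      · intro _
        exact Or.inl (Or.inr (by rw [if_pos rfl]; exact Finset.mem_singleton_self _))
      · intro _
        exact ⟨by omega, by linarith [(hb ((j:ℕ))).1]⟩
    | false =>
      rw [if_neg (by simp)]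
      constructor
      · rintro ⟨_, hd⟩
        exfalso; linarith [(hb ((j:ℕ))).2]
      · rintro ((⟨⟨_, _⟩, hlt⟩ | hmid) | ⟨i', ⟨⟨_, _⟩, hgt⟩, hip⟩)
        · exfalso; omega
        · exfalso
          rw [if_neg (by simp)] at hmid
          split_ifs at hmid with hn
          · rw [Finset.mem_singleton] at hmid; omega
          · exact absurd hmid (Finset.notMem_empty _)
        · exfalso; omega
  · rcases eq_or_ne i ((j:ℕ)+1) with h2 | h2
    · subst h2
      rw [sv_ins_gt u j b (by omega)]
      have e1 : (j:ℕ) + 1 + 1 - 1 = (j:ℕ) + 1 := by omega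
      rw [e1, sv_ins_at]
      cases b with
      | true =>
        rw [if_pos rfl]
        constructor
        · rintro ⟨_, hd⟩
          exfalso; linarith [(hb ((j:ℕ)+1)).1]
        · rintro ((⟨⟨_, _⟩, hlt⟩ | hmid) | ⟨i', ⟨⟨_, _⟩, hgt⟩, hip⟩)
          · exfalso; omega
          · exfalso
            rw [if_pos rfl, Finset.mem_singleton] at hmid; omega
          · exfalso; omega
      | false =>
        rw [if_neg (by simp)]
        constructor
        · rintro ⟨hin, _⟩
          refine Or.inl (Or.inr ?_)
          rw [if_neg (by simp), if_pos (by omega), Finset.mem_singleton]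
        · rintro ((⟨⟨_, _⟩, hlt⟩ | hmid) | ⟨i', ⟨⟨_, _⟩, hgt⟩, hip⟩)
          · exfalso; omega
          · rw [if_neg (by simp)] at hmid
            split_ifs at hmid with hn
            · exact ⟨by omega, by linarith [(hb ((j:ℕ)+1)).2]⟩
            · exact absurd hmid (Finset.notMem_empty _)
          · exfalso; omega
    · -- i ≥ j+2
      have h3 : (j:ℕ) + 2 ≤ i := by omega
      rw [sv_ins_gt u j b (by omega), sv_ins_gt u j b h3]
      have e1 : i + 1 - 1 = (i - 1) + 1 := by omega
      rw [e1]
      constructor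
      · rintro ⟨hin, hd⟩
        exact Or.inr ⟨i - 1, ⟨⟨by omega, hd⟩, by omega⟩, by omega⟩
      · rintro ((⟨⟨_, _⟩, hlt⟩ | hmid) | ⟨i', ⟨⟨hin', hd'⟩, hgt⟩, hip⟩)
        · exfalso; omega
        · exfalso
          split_ifs at hmid with hbb hn
          · rw [Finset.mem_singleton] at hmid; omega
          · rw [Finset.mem_singleton] at hmid; omega
          · exact absurd hmid (Finset.notMem_empty _)
        · have : i' = i - 1 := by omega
          subst this
          exact ⟨by omega, hd'⟩

section Counting

variable {M : Type*} [AddCommMonoid M]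

lemma sum_nbij_count (g : ℕ → M) (s t : Finset ℕ) (c : ℕ → ℕ)
    (hmap : ∀ j ∈ s, c j ∈ t)
    (hinj : ∀ j ∈ s, ∀ j' ∈ s, c j = c j' → j = j')
    (hcard : t.card ≤ s.card) :
    ∑ j ∈ s, g (c j) = ∑ i ∈ t, g i := by
  refine Finset.sum_bij (fun j _ => c j) hmap (fun a ha b hb h => hinj a ha b hb h) ?_
    (fun a ha => rfl)
  intro b hb
  obtain ⟨a, ha, e⟩ := Finset.surj_on_of_inj_on_of_card_le (fun a _ => c a)
    (fun a ha => hmap a ha) (fun a₁ a₂ h1 h2 e => hinj a₁ h1 a₂ h2 e) hcard b hb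
  exact ⟨a, ha, e.symm⟩

/-- Enumerating the descents from the right. -/
lemma count_desc (D : Finset ℕ) (g : ℕ → M) :
    ∑ j ∈ D, g ((D.filter (fun i => j < i)).card) = ∑ i ∈ Finset.range D.card, g i := by
  have hmono : ∀ j ∈ D, ∀ j' ∈ D, j < j' →
      (D.filter (fun i => j' < i)).card < (D.filter (fun i => j < i)).card := by
    intro j hj j' hj' hlt
    apply Finset.card_lt_card
    have hsub : D.filter (fun i => j' < i) ⊆ D.filter (fun i => j < i) := by
      intro i hi
      simp only [Finset.mem_filter] at hi ⊢
      exact ⟨hi.1, by omega⟩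
    refine (Finset.ssubset_iff_of_subset hsub).mpr
      ⟨j', Finset.mem_filter.mpr ⟨hj', hlt⟩, ?_⟩
    simp
  apply sum_nbij_count
  · intro j hj
    rw [Finset.mem_range]
    have h1 : (D.filter (fun i => j < i)) ⊆ D.erase j := by
      intro i hi
      simp only [Finset.mem_filter] at hi
      exact Finset.mem_erase.mpr ⟨by omega, hi.1⟩
    have h2 := Finset.card_le_card h1
    rw [Finset.card_erase_of_mem hj] at h2
    have h3 : 0 < D.card := Finset.card_pos.mpr ⟨j, hj⟩
    omega
  · intro a ha b hb h
    by_contra hne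
    rcases Nat.lt_or_ge a b with hab | hab
    · exact absurd h (Nat.ne_of_gt (hmono a ha b hb hab))
    · have : b < a := by omega
      exact absurd h (Nat.ne_of_lt (hmono b hb a ha this))
  · simp

/-- Enumerating the non-descent insertion slots. -/
lemma count_nondesc (D : Finset ℕ) (N : ℕ) (hD : D ⊆ Finset.range N) (g : ℕ → M) :
    ∑ j ∈ Finset.range N \ D, g (j + (D.filter (fun i => j < i)).card)
      = ∑ i ∈ Finset.Ico D.card N, g i := by
  have hsplit : ∀ j, (D.filter (fun i => j < i)).card + (D.filter (fun i => i ≤ j)).card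
      = D.card := by
    intro j
    have h := Finset.card_filter_add_card_filter_not (s := D) (p := fun i => j < i)
    have he : D.filter (fun a => ¬ j < a) = D.filter (fun i => i ≤ j) :=
      Finset.filter_congr (fun i _ => by omega)
    rw [he] at h
    exact h
  have hmono : ∀ j ∈ Finset.range N \ D, ∀ j' ∈ Finset.range N \ D, j < j' →
      j + (D.filter (fun i => j < i)).card < j' + (D.filter (fun i => j' < i)).card := by
    intro j hj j' hj' hlt
    simp only [Finset.mem_sdiff, Finset.mem_range] at hj hj'
    have hdec : (D.filter (fun i => j < i)).card
        = (D.filter (fun i => j < i ∧ i ≤ j')).card + (D.filter (fun i => j' < i)).card := by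
      have h := Finset.card_filter_add_card_filter_not
        (s := D.filter (fun i => j < i)) (p := fun i => i ≤ j')
      rw [Finset.filter_filter, Finset.filter_filter] at h
      have he1 : D.filter (fun a => j < a ∧ a ≤ j') = D.filter (fun i => j < i ∧ i ≤ j') := rfl
      have he2 : D.filter (fun a => j < a ∧ ¬ a ≤ j') = D.filter (fun i => j' < i) :=
        Finset.filter_congr (fun i _ => by omega)
      rw [he2] at h
      omega
    have hbound : (D.filter (fun i => j < i ∧ i ≤ j')).card ≤ j' - j - 1 := by
      have hsub : D.filter (fun i => j < i ∧ i ≤ j') ⊆ Finset.Ico (j+1) j' := by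
        intro i hi
        simp only [Finset.mem_filter] at hi
        have : i ≠ j' := by rintro rfl; exact hj'.2 hi.1
        rw [Finset.mem_Ico]
        omega
      have := Finset.card_le_card hsub
      rw [Nat.card_Ico] at this
      omega
    omega
  apply sum_nbij_count
  · intro j hj
    simp only [Finset.mem_sdiff, Finset.mem_range] at hj
    rw [Finset.mem_Ico]
    constructor
    · have h1 : (D.filter (fun i => i ≤ j)).card ≤ j := by
        have hsub : D.filter (fun i => i ≤ j) ⊆ Finset.range j := by
          intro i hi
          simp only [Finset.mem_filter] at hi
          have : i ≠ j := by rintro rfl; exact hj.2 hi.1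
          rw [Finset.mem_range]; omega
        have := Finset.card_le_card hsub
        simpa using this
      have := hsplit j
      omega
    · have hsub : D.filter (fun i => j < i) ⊆ Finset.Ico (j+1) N := by
        intro i hi
        simp only [Finset.mem_filter] at hi
        have := hD hi.1
        rw [Finset.mem_range] at this
        rw [Finset.mem_Ico]; omega
      have h2 := Finset.card_le_card hsub
      rw [Nat.card_Ico] at h2
      omega
  · intro a ha b hb h
    by_contra hne
    rcases Nat.lt_or_ge a b with hab | hab
    · exact absurd h (Nat.ne_of_lt (hmono a ha b hb hab))
    · have : b < a := by omega
      exact absurd h (Nat.ne_of_gt (hmono b hb a ha this))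
  · rw [Nat.card_Ico, Finset.card_sdiff_of_subset hD, Finset.card_range]

end Counting

lemma signedDesSet_subset {n : ℕ} (u : SignedPerm n) : signedDesSet u ⊆ Finset.range n :=
  Finset.filter_subset _ _

lemma ins_stats {n : ℕ} (u : SignedPerm n) (j : Fin (n+1)) (b : Bool) :
    (signedDesSet (insSP u j b)).card
      = ((signedDesSet u).filter (· < (j:ℕ))).card
        + (if b then 1 else if (j:ℕ) < n then 1 else 0)
        + ((signedDesSet u).filter (fun i => (j:ℕ) < i)).card
    ∧ signedMaj (insSP u j b)
      = (∑ i ∈ (signedDesSet u).filter (· < (j:ℕ)), i)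
        + (if b then (j:ℕ) else if (j:ℕ) < n then (j:ℕ)+1 else 0)
        + ((∑ i ∈ (signedDesSet u).filter (fun i => (j:ℕ) < i), i)
           + ((signedDesSet u).filter (fun i => (j:ℕ) < i)).card) := by
  have hA : ∀ i ∈ (signedDesSet u).filter (· < (j:ℕ)), i < (j:ℕ) := by
    intro i hi; exact (Finset.mem_filter.mp hi).2
  have hmid : ∀ i ∈ (if b then ({(j:ℕ)} : Finset ℕ) else if (j:ℕ) < n then {(j:ℕ)+1} else ∅),
      i = (j:ℕ) ∨ i = (j:ℕ)+1 := by
    intro i hi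
    split_ifs at hi
    · exact Or.inl (Finset.mem_singleton.mp hi)
    · exact Or.inr (Finset.mem_singleton.mp hi)
    · exact absurd hi (Finset.notMem_empty _)
  have himg : ∀ i ∈ ((signedDesSet u).filter (fun i => (j:ℕ) < i)).image (· + 1),
      (j:ℕ)+2 ≤ i := by
    intro i hi
    obtain ⟨x, hx, rfl⟩ := Finset.mem_image.mp hi
    have := (Finset.mem_filter.mp hx).2
    omega
  have d1 : Disjoint ((signedDesSet u).filter (· < (j:ℕ)))
      (if b then ({(j:ℕ)} : Finset ℕ) else if (j:ℕ) < n then {(j:ℕ)+1} else ∅) := by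
    rw [Finset.disjoint_left]
    intro a ha hb
    rcases hmid a hb with h | h <;> have := hA a ha <;> omega
  have d2 : Disjoint (((signedDesSet u).filter (· < (j:ℕ))) ∪
      (if b then ({(j:ℕ)} : Finset ℕ) else if (j:ℕ) < n then {(j:ℕ)+1} else ∅))
      (((signedDesSet u).filter (fun i => (j:ℕ) < i)).image (· + 1)) := by
    rw [Finset.disjoint_left]
    intro a ha hb
    have h2 := himg a hb
    rcases Finset.mem_union.mp ha with h | h
    · have := hA a h; omega
    · rcases hmid a h with h | h <;> omega
  have hinj : ∀ x ∈ (signedDesSet u).filter (fun i => (j:ℕ) < i),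
      ∀ y ∈ (signedDesSet u).filter (fun i => (j:ℕ) < i), x + 1 = y + 1 → x = y := by
    intro x _ y _ h; omega
  have hmidcard : (if b then ({(j:ℕ)} : Finset ℕ) else if (j:ℕ) < n then {(j:ℕ)+1} else ∅).card
      = (if b then 1 else if (j:ℕ) < n then 1 else 0) := by
    split_ifs <;> first | rfl | simp
  have hmidsum : (∑ i ∈ (if b then ({(j:ℕ)} : Finset ℕ) else if (j:ℕ) < n then {(j:ℕ)+1} else ∅), i)
      = (if b then (j:ℕ) else if (j:ℕ) < n then (j:ℕ)+1 else 0) := by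
    split_ifs <;> first | rfl | simp
  have himgcard : (((signedDesSet u).filter (fun i => (j:ℕ) < i)).image (· + 1)).card
      = ((signedDesSet u).filter (fun i => (j:ℕ) < i)).card :=
    Finset.card_image_of_injOn (fun x hx y hy h => by omega)
  constructor
  · rw [signedDesSet_insSP, Finset.card_union_of_disjoint d2, Finset.card_union_of_disjoint d1,
      hmidcard, himgcard]
  · rw [signedMaj, signedDesSet_insSP, Finset.sum_union d2, Finset.sum_union d1, hmidsum,
      Finset.sum_image hinj, Finset.sum_add_distrib, Finset.sum_const, smul_eq_mul, mul_one]

lemma sum_split (D : Finset ℕ) (J : ℕ) (f : ℕ → ℕ) :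
    ∑ i ∈ D, f i = (∑ i ∈ D.filter (· < J), f i) + (if J ∈ D then f J else 0)
      + ∑ i ∈ D.filter (fun i => J < i), f i := by
  have he : D.filter (fun i => ¬ i < J) = D.filter (fun i => i = J) ∪ D.filter (fun i => J < i) := by
    rw [← Finset.filter_or]
    apply Finset.filter_congr
    intro i _
    omega
  have hdisj : Disjoint (D.filter (fun i => i = J)) (D.filter (fun i => J < i)) := by
    rw [Finset.disjoint_left]
    intro a ha hb
    have h1 := (Finset.mem_filter.mp ha).2
    have h2 := (Finset.mem_filter.mp hb).2
    omega
  rw [← Finset.sum_filter_add_sum_filter_not D (fun i => i < J) f, he,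
    Finset.sum_union hdisj, Finset.filter_eq']
  split_ifs with h
  · rw [Finset.sum_singleton]; omega
  · rw [Finset.sum_empty]; omega

lemma card_split (D : Finset ℕ) (J : ℕ) :
    D.card = (D.filter (· < J)).card + (if J ∈ D then 1 else 0)
      + (D.filter (fun i => J < i)).card := by
  rw [Finset.card_eq_sum_ones D, Finset.card_eq_sum_ones (D.filter (· < J)),
    Finset.card_eq_sum_ones (D.filter (fun i => J < i))]
  exact sum_split D J (fun _ => 1)

lemma insSP_bijective (n : ℕ) :
    Function.Bijective (fun p : SignedPerm n × Fin (n+1) × Bool => insSP p.1 p.2.1 p.2.2) := by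
  rw [Fintype.bijective_iff_injective_and_card]
  constructor
  · rintro ⟨u, j, b⟩ ⟨u', j', b'⟩ h
    simp only [insSP, Prod.mk.injEq] at h
    obtain ⟨hperm, hsgn⟩ := h
    have hj : j = j' := by
      by_contra hne
      have h1 : (insPerm j' u'.1) j = Fin.last n := by
        rw [← hperm]
        simp only [insPerm, Equiv.coe_fn_mk]
        exact Fin.insertNth_apply_same j _ _
      obtain ⟨i, rfl⟩ := Fin.exists_succAbove_eq hne
      have h2 : (insPerm j' u'.1) (j'.succAbove i) = (u'.1 i).castSucc := by
        simp only [insPerm, Equiv.coe_fn_mk]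
        exact Fin.insertNth_apply_succAbove j' _ _ i
      rw [h2] at h1
      exact (Fin.castSucc_lt_last (u'.1 i)).ne h1
    subst hj
    have hu1 : u.1 = u'.1 := by
      ext i
      have := congrArg (fun (e : Equiv.Perm (Fin (n+1))) => e (j.succAbove i)) hperm
      simp only [insPerm, Equiv.coe_fn_mk] at this
      rw [Fin.insertNth_apply_succAbove, Fin.insertNth_apply_succAbove] at this
      exact congrArg Fin.val (Fin.castSucc_injective n this)
    have hb : b = b' := by
      have := congrArg (fun f : Fin (n+1) → Bool => f j) hsgn
      simpa [Fin.insertNth_apply_same] using this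
    have hu2 : u.2 = u'.2 := by
      funext i
      have := congrArg (fun f : Fin (n+1) → Bool => f (j.succAbove i)) hsgn
      simpa [Fin.insertNth_apply_succAbove] using this
    simp only [Prod.mk.injEq]
    exact ⟨Prod.ext_iff.mpr ⟨hu1, hu2⟩, by simp [hb]⟩
  · simp [Fintype.card_perm, Fintype.card_fun]
    rw [Nat.factorial_succ, pow_succ]
    ring

noncomputable section PS

open PowerSeries

/-- The generating polynomial `∑_w q^maj t^des`. -/
def Sser (n : ℕ) : PowerSeries (RatFunc ℚ) :=
  ∑ w : SignedPerm n,
    PowerSeries.C (R := RatFunc ℚ) (RatFunc.X ^ signedMaj w)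
      * (PowerSeries.X : PowerSeries (RatFunc ℚ)) ^ (signedDesSet w).card

def Fser (n : ℕ) : PowerSeries (RatFunc ℚ) :=
  PowerSeries.mk (fun k => (qInt (k + 1) + qInt k) ^ n)

def Pser (n : ℕ) : PowerSeries (RatFunc ℚ) :=
  ∏ i ∈ Finset.range (n + 1),
    (1 - PowerSeries.C (R := RatFunc ℚ) (RatFunc.X ^ i) * PowerSeries.X)

lemma geom_q (d : ℕ) :
    (1 - RatFunc.X) * ∑ i ∈ Finset.range d, (RatFunc.X : RatFunc ℚ) ^ i
      = 1 - RatFunc.X ^ d := by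
  linear_combination (-1 : RatFunc ℚ) * geom_sum_mul (RatFunc.X : RatFunc ℚ) d

lemma rescale_C' {R : Type*} [CommRing R] (a r : R) :
    PowerSeries.rescale a (PowerSeries.C (R := R) r) = PowerSeries.C (R := R) r := by
  ext k
  simp only [PowerSeries.coeff_rescale, PowerSeries.coeff_C]
  split_ifs with h
  · subst h; simp
  · simp

/-- Pulling constants out of a sum of monomials. -/
lemma sum_C_mul_Xpow (s : Finset ℕ) (m e : ℕ) (h : ℕ → ℕ) :
    ∑ i ∈ s, PowerSeries.C (R := RatFunc ℚ) (RatFunc.X ^ (m + h i))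
        * (PowerSeries.X : PowerSeries (RatFunc ℚ)) ^ e
      = PowerSeries.C (R := RatFunc ℚ) (RatFunc.X ^ m * ∑ i ∈ s, RatFunc.X ^ (h i))
        * PowerSeries.X ^ e := by
  rw [map_mul, map_sum, Finset.mul_sum, Finset.sum_mul]
  apply Finset.sum_congr rfl
  intro i _
  rw [pow_add, map_mul]

lemma insert_sum (n : ℕ) (u : SignedPerm n) :
    ∑ j : Fin (n+1), ∑ b : Bool,
      PowerSeries.C (R := RatFunc ℚ) (RatFunc.X ^ signedMaj (insSP u j b))
        * (PowerSeries.X : PowerSeries (RatFunc ℚ)) ^ (signedDesSet (insSP u j b)).card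
    = PowerSeries.C (R := RatFunc ℚ) (RatFunc.X ^ signedMaj u *
        (1 + ∑ i ∈ Finset.range (signedDesSet u).card, (RatFunc.X ^ i + RatFunc.X ^ (i+1))))
        * PowerSeries.X ^ (signedDesSet u).card
      + PowerSeries.C (R := RatFunc ℚ) (RatFunc.X ^ signedMaj u *
        ((∑ i ∈ Finset.Ico (signedDesSet u).card (n+1), RatFunc.X ^ i)
          + ∑ i ∈ Finset.Ico (signedDesSet u).card n, RatFunc.X ^ (i+1)))
        * PowerSeries.X ^ ((signedDesSet u).card + 1) := by
  have hDsub : signedDesSet u ⊆ Finset.range n := signedDesSet_subset u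
  have hDsub1 : signedDesSet u ⊆ Finset.range (n+1) :=
    hDsub.trans (by intro x; simp; omega)
  -- Step 1: reduce to a sum over ℕ indices
  have step1 : ∑ j : Fin (n+1), ∑ b : Bool,
      PowerSeries.C (R := RatFunc ℚ) (RatFunc.X ^ signedMaj (insSP u j b))
        * (PowerSeries.X : PowerSeries (RatFunc ℚ)) ^ (signedDesSet (insSP u j b)).card
      = ∑ J ∈ Finset.range (n+1),
        (PowerSeries.C (R := RatFunc ℚ) (RatFunc.X ^
            ((∑ i ∈ (signedDesSet u).filter (· < J), i) + J
              + ((∑ i ∈ (signedDesSet u).filter (fun i => J < i), i)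
                + ((signedDesSet u).filter (fun i => J < i)).card)))
          * (PowerSeries.X : PowerSeries (RatFunc ℚ)) ^
            (((signedDesSet u).filter (· < J)).card + 1
              + ((signedDesSet u).filter (fun i => J < i)).card)
        + PowerSeries.C (R := RatFunc ℚ) (RatFunc.X ^
            ((∑ i ∈ (signedDesSet u).filter (· < J), i) + (if J < n then J+1 else 0)
              + ((∑ i ∈ (signedDesSet u).filter (fun i => J < i), i)
                + ((signedDesSet u).filter (fun i => J < i)).card)))
          * (PowerSeries.X : PowerSeries (RatFunc ℚ)) ^
            (((signedDesSet u).filter (· < J)).card + (if J < n then 1 else 0)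
              + ((signedDesSet u).filter (fun i => J < i)).card)) := by
    rw [← Fin.sum_univ_eq_sum_range]
    apply Finset.sum_congr rfl
    intro j _
    rw [Fintype.sum_bool]
    have ht := ins_stats u j true
    have hf := ins_stats u j false
    rw [ht.1, ht.2, hf.1, hf.2]
    norm_num
  rw [step1]
  rw [← Finset.sum_sdiff hDsub1, Finset.sum_add_distrib, Finset.sum_add_distrib]
  simp only [signedMaj]
  set D := signedDesSet u with hD
  set M := ∑ i ∈ D, i with hM
  set d := D.card with hd
  have hdn : d ≤ n := by
    have := Finset.card_le_card hDsub
    simpa using this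
  -- (1) true-insertions at descents
  have hDT : (∑ J ∈ D,
      PowerSeries.C (R := RatFunc ℚ) (RatFunc.X ^
          ((∑ i ∈ D.filter (· < J), i) + J
            + ((∑ i ∈ D.filter (fun i => J < i), i) + (D.filter (fun i => J < i)).card)))
        * (PowerSeries.X : PowerSeries (RatFunc ℚ)) ^
          ((D.filter (· < J)).card + 1 + (D.filter (fun i => J < i)).card))
      = PowerSeries.C (R := RatFunc ℚ) (RatFunc.X ^ M * ∑ i ∈ Finset.range d, RatFunc.X ^ i)
        * PowerSeries.X ^ d := by
    rw [← sum_C_mul_Xpow (Finset.range d) M d (fun i => i)]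
    rw [← count_desc D (fun c => PowerSeries.C (R := RatFunc ℚ) (RatFunc.X ^ (M + c))
      * (PowerSeries.X : PowerSeries (RatFunc ℚ)) ^ d)]
    apply Finset.sum_congr rfl
    intro J hJ
    have h1 := sum_split D J (fun i => i)
    have h2 := card_split D J
    rw [if_pos hJ] at h1 h2
    have e1 : (∑ i ∈ D.filter (· < J), i) + J
        + ((∑ i ∈ D.filter (fun i => J < i), i) + (D.filter (fun i => J < i)).card)
        = M + (D.filter (fun i => J < i)).card := by omega
    have e2 : (D.filter (· < J)).card + 1 + (D.filter (fun i => J < i)).card = d := by omega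
    rw [e1, e2]
  -- (2) false-insertions at descents
  have hDF : (∑ J ∈ D,
      PowerSeries.C (R := RatFunc ℚ) (RatFunc.X ^
          ((∑ i ∈ D.filter (· < J), i) + (if J < n then J+1 else 0)
            + ((∑ i ∈ D.filter (fun i => J < i), i) + (D.filter (fun i => J < i)).card)))
        * (PowerSeries.X : PowerSeries (RatFunc ℚ)) ^
          ((D.filter (· < J)).card + (if J < n then 1 else 0) + (D.filter (fun i => J < i)).card))
      = PowerSeries.C (R := RatFunc ℚ) (RatFunc.X ^ M * ∑ i ∈ Finset.range d, RatFunc.X ^ (i+1))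
        * PowerSeries.X ^ d := by
    rw [← sum_C_mul_Xpow (Finset.range d) M d (fun i => i + 1)]
    rw [← count_desc D (fun c => PowerSeries.C (R := RatFunc ℚ) (RatFunc.X ^ (M + (c + 1)))
      * (PowerSeries.X : PowerSeries (RatFunc ℚ)) ^ d)]
    apply Finset.sum_congr rfl
    intro J hJ
    have hJn : J < n := by
      have := hDsub hJ
      simpa using this
    have h1 := sum_split D J (fun i => i)
    have h2 := card_split D J
    rw [if_pos hJ] at h1 h2
    rw [if_pos hJn, if_pos hJn]
    have e1 : (∑ i ∈ D.filter (· < J), i) + (J+1)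
        + ((∑ i ∈ D.filter (fun i => J < i), i) + (D.filter (fun i => J < i)).card)
        = M + ((D.filter (fun i => J < i)).card + 1) := by omega
    have e2 : (D.filter (· < J)).card + 1 + (D.filter (fun i => J < i)).card = d := by omega
    rw [e1, e2]
  -- (3) true-insertions at non-descents
  have hST : (∑ J ∈ Finset.range (n+1) \ D,
      PowerSeries.C (R := RatFunc ℚ) (RatFunc.X ^
          ((∑ i ∈ D.filter (· < J), i) + J
            + ((∑ i ∈ D.filter (fun i => J < i), i) + (D.filter (fun i => J < i)).card)))
        * (PowerSeries.X : PowerSeries (RatFunc ℚ)) ^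
          ((D.filter (· < J)).card + 1 + (D.filter (fun i => J < i)).card))
      = PowerSeries.C (R := RatFunc ℚ) (RatFunc.X ^ M * ∑ i ∈ Finset.Ico d (n+1), RatFunc.X ^ i)
        * PowerSeries.X ^ (d + 1) := by
    rw [← sum_C_mul_Xpow (Finset.Ico d (n+1)) M (d+1) (fun i => i)]
    rw [← count_nondesc D (n+1) hDsub1 (fun c => PowerSeries.C (R := RatFunc ℚ) (RatFunc.X ^ (M + c))
      * (PowerSeries.X : PowerSeries (RatFunc ℚ)) ^ (d+1))]
    apply Finset.sum_congr rfl
    intro J hJ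
    have hJD : J ∉ D := (Finset.mem_sdiff.mp hJ).2
    have h1 := sum_split D J (fun i => i)
    have h2 := card_split D J
    rw [if_neg hJD] at h1 h2
    have e1 : (∑ i ∈ D.filter (· < J), i) + J
        + ((∑ i ∈ D.filter (fun i => J < i), i) + (D.filter (fun i => J < i)).card)
        = M + (J + (D.filter (fun i => J < i)).card) := by omega
    have e2 : (D.filter (· < J)).card + 1 + (D.filter (fun i => J < i)).card = d + 1 := by omega
    rw [e1, e2]
  -- (4) false-insertions at non-descents
  have hsetsplit : Finset.range (n+1) \ D = insert n (Finset.range n \ D) := by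
    ext x
    simp only [Finset.mem_sdiff, Finset.mem_range, Finset.mem_insert]
    constructor
    · rintro ⟨hx, hxD⟩
      by_cases hxn : x = n
      · exact Or.inl hxn
      · exact Or.inr ⟨by omega, hxD⟩
    · rintro (rfl | ⟨hx, hxD⟩)
      · refine ⟨by omega, fun hc => ?_⟩
        have := hDsub hc
        simp at this
      · exact ⟨by omega, hxD⟩
  have hSF : (∑ J ∈ Finset.range (n+1) \ D,
      PowerSeries.C (R := RatFunc ℚ) (RatFunc.X ^
          ((∑ i ∈ D.filter (· < J), i) + (if J < n then J+1 else 0)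
            + ((∑ i ∈ D.filter (fun i => J < i), i) + (D.filter (fun i => J < i)).card)))
        * (PowerSeries.X : PowerSeries (RatFunc ℚ)) ^
          ((D.filter (· < J)).card + (if J < n then 1 else 0) + (D.filter (fun i => J < i)).card))
      = PowerSeries.C (R := RatFunc ℚ) (RatFunc.X ^ M)
          * (PowerSeries.X : PowerSeries (RatFunc ℚ)) ^ d
        + PowerSeries.C (R := RatFunc ℚ) (RatFunc.X ^ M * ∑ i ∈ Finset.Ico d n, RatFunc.X ^ (i+1))
          * PowerSeries.X ^ (d + 1) := by
    rw [hsetsplit, Finset.sum_insert (by simp)]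
    congr 1
    · -- the term J = n
      have hBe : D.filter (fun i => n < i) = ∅ := by
        apply Finset.filter_false_of_mem
        intro i hi
        have := hDsub hi
        simp only [Finset.mem_range] at this
        omega
      have hAe : D.filter (· < n) = D := by
        apply Finset.filter_true_of_mem
        intro i hi
        have := hDsub hi
        simpa using this
      rw [if_neg (lt_irrefl n), hBe, hAe]
      simp
      rfl
    · -- the sum over range n \ D
      rw [← sum_C_mul_Xpow (Finset.Ico d n) M (d+1) (fun i => i + 1)]
      rw [← count_nondesc D n hDsub (fun c => PowerSeries.C (R := RatFunc ℚ) (RatFunc.X ^ (M + (c + 1)))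
        * (PowerSeries.X : PowerSeries (RatFunc ℚ)) ^ (d+1))]
      apply Finset.sum_congr rfl
      intro J hJ
      have hJD : J ∉ D := (Finset.mem_sdiff.mp hJ).2
      have hJn : J < n := by
        have := (Finset.mem_sdiff.mp hJ).1
        simpa using this
      have h1 := sum_split D J (fun i => i)
      have h2 := card_split D J
      rw [if_neg hJD] at h1 h2
      rw [if_pos hJn, if_pos hJn]
      have e1 : (∑ i ∈ D.filter (· < J), i) + (J+1)
          + ((∑ i ∈ D.filter (fun i => J < i), i) + (D.filter (fun i => J < i)).card)
          = M + ((J + (D.filter (fun i => J < i)).card) + 1) := by omega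
      have e2 : (D.filter (· < J)).card + 1 + (D.filter (fun i => J < i)).card = d + 1 := by omega
      rw [e1, e2]
  rw [hDT, hDF, hST, hSF]
  rw [Finset.sum_add_distrib]
  simp only [map_mul, map_add, map_one, map_sum]
  ring

lemma X_ne_one : (RatFunc.X : RatFunc ℚ) ≠ 1 := by
  intro h
  have h2 : (Polynomial.X : Polynomial ℚ) = 1 := by
    apply RatFunc.algebraMap_injective ℚ
    rw [RatFunc.algebraMap_X, h, map_one]
  have h3 := congrArg (fun p : Polynomial ℚ => p.coeff 1) h2
  simp [Polynomial.coeff_one] at h3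

lemma rescale_Sser (n : ℕ) :
    PowerSeries.rescale RatFunc.X (Sser n)
      = ∑ w : SignedPerm n,
          PowerSeries.C (R := RatFunc ℚ) (RatFunc.X ^ (signedMaj w + (signedDesSet w).card))
            * (PowerSeries.X : PowerSeries (RatFunc ℚ)) ^ (signedDesSet w).card := by
  rw [Sser, map_sum]
  apply Finset.sum_congr rfl
  intro w _
  have h5 : (PowerSeries.rescale RatFunc.X)
      ((PowerSeries.X : PowerSeries (RatFunc ℚ)) ^ (signedDesSet w).card)
      = PowerSeries.C (R := RatFunc ℚ) (RatFunc.X ^ (signedDesSet w).card)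
        * PowerSeries.X ^ (signedDesSet w).card := by
    rw [map_pow, PowerSeries.rescale_X, mul_pow, ← map_pow]
  rw [map_mul, rescale_C', h5, pow_add, map_mul]
  ring

lemma comb_step (n : ℕ) :
    PowerSeries.C (R := RatFunc ℚ) (1 - RatFunc.X) * Sser (n+1)
      = 2 * ((1 - PowerSeries.C (R := RatFunc ℚ) (RatFunc.X ^ (n+1)) * PowerSeries.X) * Sser n)
        - PowerSeries.C (R := RatFunc ℚ) (1 + RatFunc.X)
          * ((1 - PowerSeries.X) * PowerSeries.rescale RatFunc.X (Sser n)) := by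
  have hreindex : Sser (n+1)
      = ∑ p : SignedPerm n × Fin (n+1) × Bool,
          PowerSeries.C (R := RatFunc ℚ) (RatFunc.X ^ signedMaj (insSP p.1 p.2.1 p.2.2))
            * (PowerSeries.X : PowerSeries (RatFunc ℚ))
                ^ (signedDesSet (insSP p.1 p.2.1 p.2.2)).card := by
    rw [Sser]
    exact (Fintype.sum_bijective _ (insSP_bijective n) _ _ (fun p => rfl)).symm
  rw [hreindex, rescale_Sser, Sser]
  rw [Fintype.sum_prod_type]
  have hinner : ∀ u : SignedPerm n,
      (∑ p : Fin (n+1) × Bool,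
        PowerSeries.C (R := RatFunc ℚ) (RatFunc.X ^ signedMaj (insSP u p.1 p.2))
          * (PowerSeries.X : PowerSeries (RatFunc ℚ)) ^ (signedDesSet (insSP u p.1 p.2)).card)
      = ∑ j : Fin (n+1), ∑ b : Bool,
          PowerSeries.C (R := RatFunc ℚ) (RatFunc.X ^ signedMaj (insSP u j b))
            * (PowerSeries.X : PowerSeries (RatFunc ℚ)) ^ (signedDesSet (insSP u j b)).card :=
    fun u => Fintype.sum_prod_type _
  rw [Finset.sum_congr rfl (fun u _ => hinner u), Finset.sum_congr rfl (fun u _ => insert_sum n u)]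
  simp only [Finset.mul_sum]
  rw [← Finset.sum_sub_distrib]
  apply Finset.sum_congr rfl
  intro u _
  have hdn : (signedDesSet u).card ≤ n := by
    have := Finset.card_le_card (signedDesSet_subset u)
    simpa using this
  set d := (signedDesSet u).card with hd
  set m := signedMaj u with hm
  have hg : ∀ k : ℕ, (1 - RatFunc.X) * ∑ i ∈ Finset.range k, (RatFunc.X : RatFunc ℚ) ^ i
      = 1 - RatFunc.X ^ k := geom_q
  have hsumsucc : ∀ k : ℕ, (∑ i ∈ Finset.range k, (RatFunc.X : RatFunc ℚ) ^ (i+1))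
      = RatFunc.X * ∑ i ∈ Finset.range k, (RatFunc.X : RatFunc ℚ) ^ i := by
    intro k
    rw [Finset.mul_sum]
    apply Finset.sum_congr rfl
    intro i _
    ring
  have hIco : ∀ (N : ℕ), d ≤ N → (∑ i ∈ Finset.Ico d N, (RatFunc.X : RatFunc ℚ) ^ i)
      = (∑ i ∈ Finset.range N, (RatFunc.X : RatFunc ℚ) ^ i)
        - ∑ i ∈ Finset.range d, (RatFunc.X : RatFunc ℚ) ^ i :=
    fun N hN => Finset.sum_Ico_eq_sub _ hN
  have hIco' : (∑ i ∈ Finset.Ico d n, (RatFunc.X : RatFunc ℚ) ^ (i+1))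
      = RatFunc.X * ((∑ i ∈ Finset.range n, (RatFunc.X : RatFunc ℚ) ^ i)
        - ∑ i ∈ Finset.range d, (RatFunc.X : RatFunc ℚ) ^ i) := by
    rw [← hIco n hdn, Finset.mul_sum]
    apply Finset.sum_congr rfl
    intro i _
    ring
  have I1 : (1 - RatFunc.X) * (RatFunc.X ^ m *
      (1 + ∑ i ∈ Finset.range d, ((RatFunc.X : RatFunc ℚ) ^ i + RatFunc.X ^ (i+1))))
      = RatFunc.X ^ m * (2 - RatFunc.X ^ d * (1 + RatFunc.X)) := by
    rw [Finset.sum_add_distrib, hsumsucc d]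
    linear_combination (RatFunc.X ^ m * (1 + RatFunc.X)) * hg d
  have I2 : (1 - RatFunc.X) * (RatFunc.X ^ m *
      ((∑ i ∈ Finset.Ico d (n+1), (RatFunc.X : RatFunc ℚ) ^ i)
        + ∑ i ∈ Finset.Ico d n, (RatFunc.X : RatFunc ℚ) ^ (i+1)))
      = RatFunc.X ^ m * (RatFunc.X ^ d * (1 + RatFunc.X) - 2 * RatFunc.X ^ (n+1)) := by
    rw [hIco (n+1) (by omega), hIco']
    linear_combination (RatFunc.X ^ m) * (hg (n+1) + RatFunc.X * hg n - (1 + RatFunc.X) * hg d)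
  calc PowerSeries.C (R := RatFunc ℚ) (1 - RatFunc.X) *
        (PowerSeries.C (R := RatFunc ℚ) (RatFunc.X ^ m *
            (1 + ∑ i ∈ Finset.range d, ((RatFunc.X : RatFunc ℚ) ^ i + RatFunc.X ^ (i+1))))
          * PowerSeries.X ^ d
        + PowerSeries.C (R := RatFunc ℚ) (RatFunc.X ^ m *
            ((∑ i ∈ Finset.Ico d (n+1), (RatFunc.X : RatFunc ℚ) ^ i)
              + ∑ i ∈ Finset.Ico d n, (RatFunc.X : RatFunc ℚ) ^ (i+1)))
          * PowerSeries.X ^ (d + 1))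
      = PowerSeries.C (R := RatFunc ℚ) ((1 - RatFunc.X) * (RatFunc.X ^ m *
            (1 + ∑ i ∈ Finset.range d, ((RatFunc.X : RatFunc ℚ) ^ i + RatFunc.X ^ (i+1)))))
          * PowerSeries.X ^ d
        + PowerSeries.C (R := RatFunc ℚ) ((1 - RatFunc.X) * (RatFunc.X ^ m *
            ((∑ i ∈ Finset.Ico d (n+1), (RatFunc.X : RatFunc ℚ) ^ i)
              + ∑ i ∈ Finset.Ico d n, (RatFunc.X : RatFunc ℚ) ^ (i+1))))
          * PowerSeries.X ^ (d + 1) := by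
        simp only [map_mul]
        ring
    _ = PowerSeries.C (R := RatFunc ℚ) (RatFunc.X ^ m * (2 - RatFunc.X ^ d * (1 + RatFunc.X)))
          * PowerSeries.X ^ d
        + PowerSeries.C (R := RatFunc ℚ) (RatFunc.X ^ m *
            (RatFunc.X ^ d * (1 + RatFunc.X) - 2 * RatFunc.X ^ (n+1)))
          * PowerSeries.X ^ (d + 1) := by rw [I1, I2]
    _ = 2 * ((1 - PowerSeries.C (R := RatFunc ℚ) (RatFunc.X ^ (n+1)) * PowerSeries.X)
            * (PowerSeries.C (R := RatFunc ℚ) (RatFunc.X ^ m) * PowerSeries.X ^ d))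
        - PowerSeries.C (R := RatFunc ℚ) (1 + RatFunc.X)
          * ((1 - PowerSeries.X)
            * (PowerSeries.C (R := RatFunc ℚ) (RatFunc.X ^ (m + d)) * PowerSeries.X ^ d)) := by
        simp only [map_mul, map_sub, map_add, map_one, map_ofNat, pow_add]
        ring

lemma F_step (n : ℕ) :
    PowerSeries.C (R := RatFunc ℚ) (1 - RatFunc.X) * Fser (n+1)
      = 2 * Fser n - PowerSeries.C (R := RatFunc ℚ) (1 + RatFunc.X)
          * PowerSeries.rescale RatFunc.X (Fser n) := by
  have h2 : (2 : PowerSeries (RatFunc ℚ)) = PowerSeries.C (R := RatFunc ℚ) 2 := (map_ofNat _ 2).symm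
  ext k
  rw [PowerSeries.coeff_C_mul, map_sub, h2, PowerSeries.coeff_C_mul, PowerSeries.coeff_C_mul,
    PowerSeries.coeff_rescale, Fser, Fser, PowerSeries.coeff_mk, PowerSeries.coeff_mk]
  have hA : (1 - RatFunc.X) * (qInt (k+1) + qInt k)
      = 2 - RatFunc.X ^ k - RatFunc.X ^ (k+1) := by
    have h1 := geom_q (k+1)
    have h0 := geom_q k
    rw [qInt, qInt]
    linear_combination h1 + h0
  have : (1 - RatFunc.X) * (qInt (k+1) + qInt k) ^ (n+1)
      = (2 - (1 + RatFunc.X) * RatFunc.X ^ k) * (qInt (k+1) + qInt k) ^ n := by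
    calc (1 - RatFunc.X) * (qInt (k+1) + qInt k) ^ (n+1)
        = ((1 - RatFunc.X) * (qInt (k+1) + qInt k)) * (qInt (k+1) + qInt k) ^ n := by ring
      _ = (2 - (1 + RatFunc.X) * RatFunc.X ^ k) * (qInt (k+1) + qInt k) ^ n := by
          rw [hA]; ring
  rw [this]
  ring

lemma P_step (n : ℕ) :
    (1 - PowerSeries.C (R := RatFunc ℚ) (RatFunc.X ^ (n+1)) * PowerSeries.X) * Pser n
      = (1 - PowerSeries.X) * PowerSeries.rescale RatFunc.X (Pser n) := by
  have hres : PowerSeries.rescale RatFunc.X (Pser n)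
      = ∏ i ∈ Finset.range (n + 1),
          (1 - PowerSeries.C (R := RatFunc ℚ) (RatFunc.X ^ (i+1)) * PowerSeries.X) := by
    rw [Pser, map_prod]
    apply Finset.prod_congr rfl
    intro i _
    rw [map_sub, map_one, map_mul, rescale_C', PowerSeries.rescale_X, pow_succ]
    rw [← mul_assoc, ← map_mul]
  rw [hres, Pser]
  have hL : (1 - PowerSeries.C (R := RatFunc ℚ) (RatFunc.X ^ (n+1)) * PowerSeries.X)
        * ∏ i ∈ Finset.range (n + 1),
            (1 - PowerSeries.C (R := RatFunc ℚ) (RatFunc.X ^ i) * PowerSeries.X)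
      = ∏ i ∈ Finset.range (n + 2),
          (1 - PowerSeries.C (R := RatFunc ℚ) (RatFunc.X ^ i) * PowerSeries.X) := by
    conv_rhs => rw [Finset.prod_range_succ]
    ring
  have hR : (1 - PowerSeries.X)
        * ∏ i ∈ Finset.range (n + 1),
            (1 - PowerSeries.C (R := RatFunc ℚ) (RatFunc.X ^ (i+1)) * PowerSeries.X)
      = ∏ i ∈ Finset.range (n + 2),
          (1 - PowerSeries.C (R := RatFunc ℚ) (RatFunc.X ^ i) * PowerSeries.X) := by
    conv_rhs => rw [Finset.prod_range_succ']
    simp only [pow_zero, map_one, one_mul]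
    ring
  rw [hL, hR]

lemma Sser_zero : Sser 0 = 1 := by
  rw [Sser]
  have h1 : ∀ w : SignedPerm 0,
      PowerSeries.C (R := RatFunc ℚ) (RatFunc.X ^ signedMaj w)
        * (PowerSeries.X : PowerSeries (RatFunc ℚ)) ^ (signedDesSet w).card = 1 := by
    intro w
    have hdes : signedDesSet w = ∅ := by
      simp [signedDesSet]
    have hmaj : signedMaj w = 0 := by
      rw [signedMaj, hdes]
      simp
    rw [hdes, hmaj]
    simp
  rw [Finset.sum_congr rfl (fun w _ => h1 w), Finset.sum_const]
  have : Fintype.card (SignedPerm 0) = 1 := by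
    simp [Fintype.card_perm, Fintype.card_fun]
  simp [this]

lemma FP_zero : Fser 0 * Pser 0 = 1 := by
  have hP : Pser 0 = 1 - PowerSeries.X := by
    rw [Pser]
    rw [Finset.prod_range_one]
    simp
  have hF : Fser 0 = PowerSeries.mk (fun _ => (1 : RatFunc ℚ)) := by
    rw [Fser]
    exact congrArg PowerSeries.mk (funext fun k => pow_zero _)
  rw [hP, hF]
  ext k
  rw [mul_sub, mul_one, map_sub]
  cases k with
  | zero =>
    rw [PowerSeries.coeff_mk]
    simp
  | succ k =>
    rw [PowerSeries.coeff_succ_mul_X, PowerSeries.coeff_mk, PowerSeries.coeff_mk]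
    simp

lemma C_ne (a : RatFunc ℚ) (ha : a ≠ 0) : PowerSeries.C (R := RatFunc ℚ) a ≠ 0 := by
  intro h
  have := congrArg (PowerSeries.coeff (R := RatFunc ℚ) 0) h
  simp at this
  exact ha this

lemma key (n : ℕ) : Sser n = Fser n * Pser n := by
  induction n with
  | zero => rw [Sser_zero, FP_zero]
  | succ n ih =>
    have hC : PowerSeries.C (R := RatFunc ℚ) (1 - RatFunc.X) ≠ 0 := by
      apply C_ne
      intro h
      apply X_ne_one
      have : (1 : RatFunc ℚ) - RatFunc.X = 0 := h
      linear_combination -this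
    apply mul_left_cancel₀ hC
    rw [comb_step n, ih, map_mul (PowerSeries.rescale RatFunc.X)]
    have hP1 : Pser (n+1) = Pser n
        * (1 - PowerSeries.C (R := RatFunc ℚ) (RatFunc.X ^ (n+1)) * PowerSeries.X) := by
      rw [Pser, Pser, Finset.prod_range_succ]
    rw [hP1]
    conv_rhs => rw [← mul_assoc, F_step n]
    have h4 : (1 - PowerSeries.X)
          * (PowerSeries.rescale RatFunc.X (Fser n) * PowerSeries.rescale RatFunc.X (Pser n))
        = PowerSeries.rescale RatFunc.X (Fser n)
          * ((1 - PowerSeries.C (R := RatFunc ℚ) (RatFunc.X ^ (n+1)) * PowerSeries.X) * Pser n) := by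
      rw [P_step n]
      ring
    rw [h4]
    ring

/-- As formal power series in `t` over `ℚ(q)`,
`∑_{w ∈ B_n} q^{maj w} t^{des w} / ∏_{i=0}^{n} (1 - q^i t) = ∑_{k≥0} ([k+1]_q + [k]_q)^n t^k`. -/
theorem typeB_carlitz_cube (n : ℕ) (hn : 0 < n) :
    (∑ w : SignedPerm n,
        PowerSeries.C (R := RatFunc ℚ) (RatFunc.X ^ signedMaj w)
          * (PowerSeries.X : PowerSeries (RatFunc ℚ)) ^ (signedDesSet w).card)
      * (∏ i ∈ Finset.range (n + 1),
          (1 - PowerSeries.C (R := RatFunc ℚ) (RatFunc.X ^ i) * PowerSeries.X))⁻¹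
      = PowerSeries.mk (fun k => (qInt (k + 1) + qInt k) ^ n) := by
  have hinv : Pser n * (Pser n)⁻¹ = 1 := by
    apply PowerSeries.mul_inv_cancel
    rw [Pser, map_prod]
    have : ∀ i ∈ Finset.range (n+1),
        PowerSeries.constantCoeff (R := RatFunc ℚ)
          (1 - PowerSeries.C (R := RatFunc ℚ) (RatFunc.X ^ i) * PowerSeries.X) = 1 := by
      intro i _
      simp
    rw [Finset.prod_congr rfl this, Finset.prod_const_one]
    exact one_ne_zero
  show Sser n * (Pser n)⁻¹ = Fser n
  rw [key n, mul_assoc, hinv, mul_one]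

end PS
end

section
/- The Ehrhart polynomial of the two-dimensional distorted cross polytope C_2^c = conv{e_1, e_2, −(c−1)e_1, −(c−1)e_2} is L(k) = (c²/2)k² + ((c+2)/2)k + 1; that is, for every nonnegative integer k, the number of lattice points in the k-th dilate of C_2^c equals (c²k² + (c+2)k + 2)/2. -/
open Pointwise

/-- The distorted cross polytope `C_2^c = conv{e_1, e_2, -(c-1)e_1, -(c-1)e_2} ⊂ ℝ²`. -/
noncomputable def distortedCross2 (c : ℕ) : Set (Fin 2 → ℝ) :=
  convexHull ℝ {Pi.single 0 (1 : ℝ), Pi.single 1 (1 : ℝ),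
    Pi.single 0 (-((c : ℝ) - 1)), Pi.single 1 (-((c : ℝ) - 1))}

set_option maxHeartbeats 1000000 in
lemma mem_dilate (c k : ℕ) (hc : 1 ≤ c) (hk : 1 ≤ k) (x : Fin 2 → ℝ) :
    x ∈ (k : ℝ) • distortedCross2 c ↔
      (x 0 + x 1 ≤ k ∧ -x 0 + ((c:ℝ)-1) * x 1 ≤ ((c:ℝ)-1)*k ∧
       -(x 0 + x 1) ≤ ((c:ℝ)-1)*k ∧ ((c:ℝ)-1) * x 0 - x 1 ≤ ((c:ℝ)-1)*k) := by
  have hcR : (1:ℝ) ≤ c := by exact_mod_cast hc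
  have hkR : (1:ℝ) ≤ k := by exact_mod_cast hk
  have hk0 : (0:ℝ) < k := by linarith
  have hc0 : (0:ℝ) < c := by linarith
  have hm0 : (0:ℝ) ≤ (c:ℝ) - 1 := by linarith
  have hck : (0:ℝ) < c * k := by positivity
  have e : ∀ (i : Fin 2) (a : ℝ), (k:ℝ) • (Pi.single i a : Fin 2 → ℝ) = (Pi.single i ((k:ℝ)*a) : Fin 2 → ℝ) := by
    intro i a; funext j; simp [Pi.single_apply, mul_ite]
  have e1 : (k:ℝ) * 1 = (k:ℝ) := by ring
  have e2 : (k:ℝ) * (-((c:ℝ)-1)) = -(((c:ℝ)-1)*(k:ℝ)) := by ring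
  have hV : (k : ℝ) • ({Pi.single 0 (1 : ℝ), Pi.single 1 (1 : ℝ),
      Pi.single 0 (-((c : ℝ) - 1)), Pi.single 1 (-((c : ℝ) - 1))} : Set (Fin 2 → ℝ)) =
      ({Pi.single 0 (k : ℝ), Pi.single 1 (k : ℝ),
      Pi.single 0 (-(((c : ℝ) - 1)*k)), Pi.single 1 (-(((c : ℝ) - 1)*k))} : Set (Fin 2 → ℝ)) := by
    rw [Set.smul_set_insert, Set.smul_set_insert, Set.smul_set_insert, Set.smul_set_singleton,
      e, e, e, e, e1, e2]
  rw [distortedCross2, ← convexHull_smul, hV]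
  constructor
  · intro hx
    have hconv : Convex ℝ {y : Fin 2 → ℝ |
        y 0 + y 1 ≤ k ∧ -y 0 + ((c:ℝ)-1) * y 1 ≤ ((c:ℝ)-1)*k ∧
        -(y 0 + y 1) ≤ ((c:ℝ)-1)*k ∧ ((c:ℝ)-1) * y 0 - y 1 ≤ ((c:ℝ)-1)*k} := by
      intro u hu v hv s t hs ht hst
      obtain ⟨p1, p2, p3, p4⟩ := hu
      obtain ⟨g1, g2, g3, g4⟩ := hv
      simp only [Set.mem_setOf_eq, Pi.add_apply, Pi.smul_apply, smul_eq_mul]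
      refine ⟨by nlinarith, by nlinarith, by nlinarith, by nlinarith⟩
    refine convexHull_min ?_ hconv hx
    intro y hy
    simp only [Set.mem_insert_iff, Set.mem_singleton_iff] at hy
    rcases hy with rfl | rfl | rfl | rfl <;>
      refine ⟨?_, ?_, ?_, ?_⟩ <;> simp [Pi.single_apply] <;>
      nlinarith [sq_nonneg ((c:ℝ)-1)]
  · rintro ⟨h1, h2, h3, h4⟩
    rcases le_or_gt 0 (x 1) with hx1 | hx1
    · set l1 : ℝ := (x 0 + ((c:ℝ)-1)*(k - x 1))/((c:ℝ)*k) with hl1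
      set l2 : ℝ := x 1 / k with hl2
      set l3 : ℝ := 1 - l1 - l2 with hl3
      have hl3' : l3 = (k - x 0 - x 1)/((c:ℝ)*k) := by
        rw [hl3, hl1, hl2]; field_simp; ring
      have w0 : 0 ≤ l1 := by apply div_nonneg; nlinarith; positivity
      have w1 : 0 ≤ l2 := by positivity
      have w2 : 0 ≤ l3 := by rw [hl3']; apply div_nonneg; nlinarith; positivity
      have hsum1 : ∑ i : Fin 3, (![l1, l2, l3]) i = 1 := by
        simp [Fin.sum_univ_three, hl3]
      have hmem : Finset.univ.centerMass ![l1, l2, l3]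
          ![Pi.single 0 (k : ℝ), Pi.single 1 (k : ℝ), Pi.single 0 (-(((c : ℝ) - 1)*k))] ∈
          convexHull ℝ ({Pi.single 0 (k : ℝ), Pi.single 1 (k : ℝ),
            Pi.single 0 (-(((c : ℝ) - 1)*k))} : Set (Fin 2 → ℝ)) := by
        apply Finset.centerMass_mem_convexHull
        · intro i _; fin_cases i <;> simpa
        · rw [hsum1]; norm_num
        · intro i _; fin_cases i <;> simp
      have hxeq : Finset.univ.centerMass ![l1, l2, l3]
          ![Pi.single 0 (k : ℝ), Pi.single 1 (k : ℝ), Pi.single 0 (-(((c : ℝ) - 1)*k))] = x := by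
        rw [Finset.centerMass_eq_of_sum_1 _ _ hsum1]
        funext j
        fin_cases j <;> simp [Fin.sum_univ_three, Pi.single_apply, hl1, hl2, hl3] <;>
          field_simp <;> ring
      rw [hxeq] at hmem
      exact convexHull_mono (by intro y hy; simp at hy ⊢; tauto) hmem
    · have hc2 : (1:ℝ) < c := by
        by_contra h
        push_neg at h
        have hce : (c:ℝ) = 1 := le_antisymm h hcR
        rw [hce] at h4; norm_num at h4; linarith
      have hm0' : (0:ℝ) < (c:ℝ) - 1 := by linarith
      set l1 : ℝ := (x 0 + x 1 + ((c:ℝ)-1)*k)/((c:ℝ)*k) with hl1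
      set l2 : ℝ := -(x 1) / (((c:ℝ)-1)*k) with hl2
      set l3 : ℝ := 1 - l1 - l2 with hl3
      have hl3' : l3 = (((c:ℝ)-1)*k - ((c:ℝ)-1)*(x 0) + x 1)/(((c:ℝ)-1)*((c:ℝ)*k)) := by
        rw [hl3, hl1, hl2]; field_simp; ring
      have w0 : 0 ≤ l1 := by apply div_nonneg; nlinarith; positivity
      have w1 : 0 ≤ l2 := by apply div_nonneg; linarith; positivity
      have w2 : 0 ≤ l3 := by rw [hl3']; apply div_nonneg; nlinarith; positivity
      have hsum1 : ∑ i : Fin 3, (![l1, l2, l3]) i = 1 := by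
        simp [Fin.sum_univ_three, hl3]
      have hmem : Finset.univ.centerMass ![l1, l2, l3]
          ![Pi.single 0 (k : ℝ), Pi.single 1 (-(((c : ℝ) - 1)*k)), Pi.single 0 (-(((c : ℝ) - 1)*k))] ∈
          convexHull ℝ ({Pi.single 0 (k : ℝ), Pi.single 1 (-(((c : ℝ) - 1)*k)),
            Pi.single 0 (-(((c : ℝ) - 1)*k))} : Set (Fin 2 → ℝ)) := by
        apply Finset.centerMass_mem_convexHull
        · intro i _; fin_cases i <;> simpa
        · rw [hsum1]; norm_num
        · intro i _; fin_cases i <;> simp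
      have hxeq : Finset.univ.centerMass ![l1, l2, l3]
          ![Pi.single 0 (k : ℝ), Pi.single 1 (-(((c : ℝ) - 1)*k)), Pi.single 0 (-(((c : ℝ) - 1)*k))] = x := by
        rw [Finset.centerMass_eq_of_sum_1 _ _ hsum1]
        funext j
        fin_cases j <;> simp [Fin.sum_univ_three, Pi.single_apply, hl1, hl2, hl3] <;>
          field_simp <;> ring
      rw [hxeq] at hmem
      exact convexHull_mono (by intro y hy; simp at hy ⊢; tauto) hmem


lemma key_s9 (m k a b : ℤ) (hm : 0 ≤ m) (hk : 1 ≤ k) :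
    (a + b ≤ k ∧ -a + m*b ≤ m*k ∧ -(a+b) ≤ m*k ∧ m*a - b ≤ m*k) ↔
      ((0 ≤ b ∧ b ≤ k ∧ m*(b-k) ≤ a ∧ a ≤ k-b) ∨
       (0 ≤ a ∧ a ≤ k-1 ∧ m*(a-k) ≤ b ∧ b ≤ -1) ∨
       (1-m*k ≤ a ∧ a ≤ -1 ∧ -(m*k)-a ≤ b ∧ b ≤ -1)) := by
  have hmk : 0 ≤ m * k := mul_nonneg hm (by linarith)
  constructor
  · rintro ⟨h1, h2, h3, h4⟩
    rcases le_or_gt 0 b with hb | hb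
    · left
      have hbk : b ≤ k := by
        by_contra h
        push_neg at h
        have h5 : 0 ≤ m * (b - k) := mul_nonneg hm (by linarith)
        nlinarith
      refine ⟨hb, hbk, by nlinarith, by linarith⟩
    · rcases le_or_gt 0 a with ha | ha
      · right; left
        have hm1 : 1 ≤ m := by
          rcases eq_or_lt_of_le hm with h | h
          · exfalso; rw [← h] at h4; simp at h4; linarith
          · linarith
        have hak : a ≤ k - 1 := by
          by_contra h
          push_neg at h
          have : m * k ≤ m * a := mul_le_mul_of_nonneg_left (by linarith) hm
          linarith
        exact ⟨ha, hak, by nlinarith, by linarith⟩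
      · right; right
        exact ⟨by linarith, by linarith, by linarith, by linarith⟩
  · rintro (⟨hb0, hbk, ha1, ha2⟩ | ⟨ha0, hak, hb1, hb2⟩ | ⟨ha1, ha2, hb1, hb2⟩)
    · have e1 : m*(b-k) = m*b - m*k := by ring
      have e2 : 0 ≤ m*b := mul_nonneg hm hb0
      have e3 : m*a ≤ m*(k-b) := mul_le_mul_of_nonneg_left ha2 hm
      have e4 : m*(k-b) = m*k - m*b := by ring
      refine ⟨by linarith, by linarith, by linarith, by linarith⟩
    · have e1 : m*(a-k) = m*a - m*k := by ring
      have e2 : 0 ≤ m*a := mul_nonneg hm ha0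
      have e3 : m*b ≤ 0 := mul_nonpos_of_nonneg_of_nonpos hm (by linarith)
      refine ⟨by linarith, by linarith, by linarith, by linarith⟩
    · have hm1 : 1 ≤ m := by
        rcases eq_or_lt_of_le hm with h | h
        · exfalso; rw [← h] at ha1; simp at ha1; linarith
        · linarith
      have e2 : m*b ≤ 0 := mul_nonpos_of_nonneg_of_nonpos hm (by linarith)
      have e3 : (m-1)*a ≤ 0 := mul_nonpos_of_nonneg_of_nonpos (by linarith) (by linarith)
      have e4 : (m-1)*a = m*a - a := by ring
      refine ⟨by linarith, by linarith, by linarith, by linarith⟩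


lemma gaussQ (n : ℕ) : ∑ j ∈ Finset.range n, (j:ℚ) = n*(n-1)/2 := by
  induction n with
  | zero => simp
  | succ n ih => rw [Finset.sum_range_succ, ih]; push_cast; ring

lemma sumQ (n α β : ℕ) : ((∑ i ∈ Finset.range n, (α*i+β) : ℕ) : ℚ)
    = α*(n*(n-1))/2 + β*n := by
  push_cast
  rw [Finset.sum_add_distrib, Finset.sum_const, Finset.card_range, ← Finset.mul_sum, gaussQ]
  push_cast
  ring

section count
open Finset

variable (c k : ℕ)

noncomputable def F1 (c k : ℕ) : Finset (ℤ×ℤ) :=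
  (range (k+1)).biUnion (fun j => (Icc ((((c:ℤ)-1))*((j:ℤ)-(k:ℤ))) ((k:ℤ)-(j:ℤ))).image (fun a => (a, (j:ℤ))))

noncomputable def F2 (c k : ℕ) : Finset (ℤ×ℤ) :=
  (range k).biUnion (fun j => (Icc ((((c:ℤ)-1))*((j:ℤ)-(k:ℤ))) (-1:ℤ)).image (fun b => ((j:ℤ), b)))

noncomputable def F3 (c k : ℕ) : Finset (ℤ×ℤ) :=
  (range ((c-1)*k-1)).biUnion
    (fun j => (Icc (-(((c:ℤ)-1)*(k:ℤ)) + (j:ℤ) + 1) (-1:ℤ)).image (fun b => (-(j:ℤ)-1, b)))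

lemma cardF1 (hc : 1 ≤ c) : (F1 c k).card = ∑ j ∈ range (k+1), (c*(k-j)+1) := by
  rw [F1, card_biUnion]
  · apply Finset.sum_congr rfl
    intro j hj
    rw [mem_range] at hj
    rw [Finset.card_image_of_injective _ (fun x y h => by simpa using h), Int.card_Icc]
    have e : (k:ℤ)-(j:ℤ) + 1 - ((c:ℤ)-1)*((j:ℤ)-(k:ℤ)) = ((c*(k-j)+1 : ℕ) : ℤ) := by
      push_cast [Nat.cast_sub (by omega : j ≤ k)]
      ring
    rw [e, Int.toNat_natCast]
  · intro i hi j hj hij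
    simp only [Finset.disjoint_left, Finset.mem_image, Finset.mem_Icc]
    rintro ⟨x1, x2⟩ ⟨a, _, ha⟩ ⟨b, _, hb⟩
    apply hij
    have : (i:ℤ) = (j:ℤ) := by
      have h1 := congrArg Prod.snd ha
      have h2 := congrArg Prod.snd hb
      simp at h1 h2
      omega
    exact_mod_cast this

lemma cardF2 (hc : 1 ≤ c) : (F2 c k).card = ∑ j ∈ range k, ((c-1)*(k-j)) := by
  rw [F2, card_biUnion]
  · apply Finset.sum_congr rfl
    intro j hj
    rw [mem_range] at hj
    rw [Finset.card_image_of_injective _ (fun x y h => by simpa using h), Int.card_Icc]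
    have e : (-1:ℤ) + 1 - ((c:ℤ)-1)*((j:ℤ)-(k:ℤ)) = (((c-1)*(k-j) : ℕ) : ℤ) := by
      push_cast [Nat.cast_sub (by omega : j ≤ k), Nat.cast_sub hc]
      ring
    rw [e, Int.toNat_natCast]
  · intro i hi j hj hij
    simp only [Finset.disjoint_left, Finset.mem_image, Finset.mem_Icc]
    rintro ⟨x1, x2⟩ ⟨a, _, ha⟩ ⟨b, _, hb⟩
    apply hij
    have : (i:ℤ) = (j:ℤ) := by
      have h1 := congrArg Prod.fst ha
      have h2 := congrArg Prod.fst hb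
      simp at h1 h2
      omega
    exact_mod_cast this

lemma cardF3 (hc : 1 ≤ c) : (F3 c k).card = ∑ j ∈ range ((c-1)*k-1), ((c-1)*k-1-j) := by
  have hMk : (((c-1)*k : ℕ):ℤ) = ((c:ℤ)-1)*(k:ℤ) := by
    push_cast [Nat.cast_sub hc]; ring
  rw [F3, card_biUnion]
  · apply Finset.sum_congr rfl
    intro j hj
    rw [mem_range] at hj
    rw [Finset.card_image_of_injective _ (fun x y h => by simpa using h), Int.card_Icc]
    have e : (-1:ℤ) + 1 - (-(((c:ℤ)-1)*(k:ℤ)) + (j:ℤ) + 1) = (((c-1)*k-1-j : ℕ) : ℤ) := by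
      rw [← hMk]; omega
    rw [e, Int.toNat_natCast]
  · intro i hi j hj hij
    simp only [Finset.disjoint_left, Finset.mem_image, Finset.mem_Icc]
    rintro ⟨x1, x2⟩ ⟨a, _, ha⟩ ⟨b, _, hb⟩
    apply hij
    have h1 := congrArg Prod.fst ha
    have h2 := congrArg Prod.fst hb
    simp at h1 h2
    omega

end count

section mems
open Finset

lemma memF1 (c k : ℕ) (a b : ℤ) : (a,b) ∈ F1 c k ↔
    (0 ≤ b ∧ b ≤ (k:ℤ) ∧ ((c:ℤ)-1)*(b-k) ≤ a ∧ a ≤ (k:ℤ)-b) := by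
  simp only [F1, mem_biUnion, mem_range, mem_image, mem_Icc, Prod.mk.injEq]
  constructor
  · rintro ⟨j, hj, a', ⟨h1, h2⟩, rfl, rfl⟩
    have : (j:ℤ) ≤ (k:ℤ) := by exact_mod_cast by omega
    exact ⟨by positivity, this, h1, h2⟩
  · rintro ⟨hb0, hbk, h1, h2⟩
    refine ⟨b.toNat, by omega, a, ?_, rfl, by omega⟩
    rw [Int.toNat_of_nonneg hb0]
    exact ⟨h1, h2⟩

lemma memF2 (c k : ℕ) (a b : ℤ) : (a,b) ∈ F2 c k ↔
    (0 ≤ a ∧ a ≤ (k:ℤ)-1 ∧ ((c:ℤ)-1)*(a-k) ≤ b ∧ b ≤ -1) := by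
  simp only [F2, mem_biUnion, mem_range, mem_image, mem_Icc, Prod.mk.injEq]
  constructor
  · rintro ⟨j, hj, b', ⟨h1, h2⟩, rfl, rfl⟩
    have : (j:ℤ) ≤ (k:ℤ)-1 := by
      have : (j:ℤ) < (k:ℤ) := by exact_mod_cast hj
      omega
    exact ⟨by positivity, this, h1, h2⟩
  · rintro ⟨ha0, hak, h1, h2⟩
    refine ⟨a.toNat, by omega, b, ?_, by omega, rfl⟩
    rw [Int.toNat_of_nonneg ha0]
    exact ⟨h1, h2⟩

lemma memF3 (c k : ℕ) (hc : 1 ≤ c) (a b : ℤ) : (a,b) ∈ F3 c k ↔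
    (1-((c:ℤ)-1)*(k:ℤ) ≤ a ∧ a ≤ -1 ∧ -(((c:ℤ)-1)*(k:ℤ))-a ≤ b ∧ b ≤ -1) := by
  have hMk : (((c-1)*k : ℕ):ℤ) = ((c:ℤ)-1)*(k:ℤ) := by
    push_cast [Nat.cast_sub hc]; ring
  simp only [F3, mem_biUnion, mem_range, mem_image, mem_Icc, Prod.mk.injEq]
  constructor
  · rintro ⟨j, hj, b', ⟨h1, h2⟩, rfl, rfl⟩
    have hj' : (j:ℤ) < (((c-1)*k : ℕ):ℤ) - 1 := by
      have : (j:ℤ) < (((c-1)*k-1 : ℕ):ℤ) := by exact_mod_cast hj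
      omega
    rw [hMk] at hj'
    refine ⟨by omega, by omega, by omega, h2⟩
  · rintro ⟨ha1, ha2, h1, h2⟩
    refine ⟨(-a-1).toNat, ?_, b, ⟨?_, h2⟩, ?_, rfl⟩
    · rw [← hMk] at ha1; omega
    · rw [Int.toNat_of_nonneg (by omega)]; omega
    · rw [Int.toNat_of_nonneg (by omega)]; omega

end mems

open Finset in
lemma count_lemma (c k : ℕ) (hc : 1 ≤ c) (hk : 1 ≤ k) :
    ({q : ℤ × ℤ | q.1 + q.2 ≤ (k:ℤ) ∧ -q.1 + ((c:ℤ)-1)*q.2 ≤ ((c:ℤ)-1)*(k:ℤ) ∧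
      -(q.1+q.2) ≤ ((c:ℤ)-1)*(k:ℤ) ∧ ((c:ℤ)-1)*q.1 - q.2 ≤ ((c:ℤ)-1)*(k:ℤ)}.ncard : ℚ)
      = ((c:ℚ)^2*(k:ℚ)^2 + ((c:ℚ)+2)*(k:ℚ) + 2)/2 := by
  have hcZ : (0:ℤ) ≤ (c:ℤ)-1 := by exact_mod_cast by omega
  have hkZ : (1:ℤ) ≤ (k:ℤ) := by exact_mod_cast hk
  have hT : {q : ℤ × ℤ | q.1 + q.2 ≤ (k:ℤ) ∧ -q.1 + ((c:ℤ)-1)*q.2 ≤ ((c:ℤ)-1)*(k:ℤ) ∧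
      -(q.1+q.2) ≤ ((c:ℤ)-1)*(k:ℤ) ∧ ((c:ℤ)-1)*q.1 - q.2 ≤ ((c:ℤ)-1)*(k:ℤ)}
      = ↑(F1 c k ∪ F2 c k ∪ F3 c k) := by
    ext ⟨a, b⟩
    simp only [Set.mem_setOf_eq, coe_union, Set.mem_union, mem_coe, memF1, memF2,
      memF3 c k hc]
    rw [key_s9 ((c:ℤ)-1) k a b hcZ hkZ]
    tauto
  rw [hT, Set.ncard_coe_finset]
  have d13 : Disjoint (F1 c k) (F3 c k) := by
    rw [Finset.disjoint_left]
    rintro ⟨a, b⟩ h1 h3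
    rw [memF1] at h1
    rw [memF3 c k hc] at h3
    omega
  have d23 : Disjoint (F2 c k) (F3 c k) := by
    rw [Finset.disjoint_left]
    rintro ⟨a, b⟩ h2 h3
    rw [memF2] at h2
    rw [memF3 c k hc] at h3
    omega
  have d12 : Disjoint (F1 c k) (F2 c k) := by
    rw [Finset.disjoint_left]
    rintro ⟨a, b⟩ h1 h2
    rw [memF1] at h1
    rw [memF2] at h2
    omega
  rw [Finset.card_union_of_disjoint (Finset.disjoint_union_left.mpr ⟨d13, d23⟩),
    Finset.card_union_of_disjoint d12, cardF1 c k hc, cardF2 c k hc, cardF3 c k hc]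
  -- reflect the sums
  have r1 : ∑ j ∈ range (k+1), (c*(k-j)+1) = ∑ i ∈ range (k+1), (c*i+1) := by
    rw [← Finset.sum_range_reflect]
    apply Finset.sum_congr rfl
    intro j hj
    rw [mem_range] at hj
    congr 1
    congr 1
    omega
  have r2 : ∑ j ∈ range k, ((c-1)*(k-j)) = ∑ i ∈ range k, ((c-1)*i+(c-1)) := by
    rw [← Finset.sum_range_reflect]
    apply Finset.sum_congr rfl
    intro j hj
    rw [mem_range] at hj
    have : k - (k - 1 - j) = j + 1 := by omega
    rw [this]
    ring
  have r3 : ∑ j ∈ range ((c-1)*k-1), ((c-1)*k-1-j)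
      = ∑ i ∈ range ((c-1)*k-1), (1*i+1) := by
    rw [← Finset.sum_range_reflect]
    apply Finset.sum_congr rfl
    intro j hj
    rw [mem_range] at hj
    omega
  rw [r1, r2, r3]
  rw [Nat.cast_add, Nat.cast_add, sumQ, sumQ, sumQ]
  rcases Nat.lt_or_ge c 2 with hc2 | hc2
  · have : c = 1 := by omega
    subst this
    norm_num
    ring
  · have hN : ((( (c-1)*k-1 : ℕ)):ℚ) = ((c:ℚ)-1)*(k:ℚ) - 1 := by
      have h1 : 1 ≤ (c-1)*k := by
        have : 1 ≤ c - 1 := by omega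
        calc 1 = 1*1 := by ring
        _ ≤ (c-1)*k := Nat.mul_le_mul this hk
      push_cast [Nat.cast_sub h1, Nat.cast_sub (by omega : 1 ≤ c)]
      ring
    have hc1 : ((c-1 : ℕ):ℚ) = (c:ℚ)-1 := by push_cast [Nat.cast_sub (by omega : 1 ≤ c)]; ring
    rw [hN, hc1]
    field_simp
    push_cast
    ring


/-- The number of lattice points in the `k`-th dilate of the two-dimensional distorted
cross polytope `C_2^c` equals `(c²k² + (c+2)k + 2)/2`. -/
theorem distortedCross2_ehrhart (c k : ℕ) (hc : 0 < c) :
    ({p : Fin 2 → ℤ | (fun i => (p i : ℝ)) ∈ (k : ℝ) • distortedCross2 c}.ncard : ℚ)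
      = ((c : ℚ) ^ 2 * (k : ℚ) ^ 2 + ((c : ℚ) + 2) * k + 2) / 2 := by
  rcases Nat.eq_zero_or_pos k with rfl | hk
  · have hne : (distortedCross2 c).Nonempty :=
      ⟨Pi.single 0 1, subset_convexHull ℝ _ (by simp [distortedCross2])⟩
    have h0 : ((0:ℕ):ℝ) • distortedCross2 c = 0 := by
      rw [Nat.cast_zero, Set.zero_smul_set hne]
    have hS : {p : Fin 2 → ℤ | (fun i => (p i : ℝ)) ∈ ((0:ℕ):ℝ) • distortedCross2 c}
        = {0} := by
      ext p
      rw [Set.mem_setOf_eq, h0]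
      simp only [Set.mem_zero, Set.mem_singleton_iff]
      constructor
      · intro h
        funext i
        have := congrFun h i
        simpa using this
      · rintro rfl
        funext i
        simp
    rw [hS, Set.ncard_singleton]
    norm_num
  · have hinj : Function.Injective (fun q : ℤ × ℤ => (![q.1, q.2] : Fin 2 → ℤ)) := by
      intro q r h
      have h0 := congrFun h 0
      have h1 := congrFun h 1
      simp at h0 h1
      exact Prod.ext h0 h1
    have him : {p : Fin 2 → ℤ | (fun i => (p i : ℝ)) ∈ (k : ℝ) • distortedCross2 c}
        = (fun q : ℤ × ℤ => (![q.1, q.2] : Fin 2 → ℤ)) ''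
          {q : ℤ × ℤ | q.1 + q.2 ≤ (k:ℤ) ∧ -q.1 + ((c:ℤ)-1)*q.2 ≤ ((c:ℤ)-1)*(k:ℤ) ∧
            -(q.1+q.2) ≤ ((c:ℤ)-1)*(k:ℤ) ∧ ((c:ℤ)-1)*q.1 - q.2 ≤ ((c:ℤ)-1)*(k:ℤ)} := by
      ext p
      constructor
      · intro hp
        rw [Set.mem_setOf_eq, mem_dilate c k hc hk] at hp
        obtain ⟨h1, h2, h3, h4⟩ := hp
        refine ⟨(p 0, p 1), ⟨?_, ?_, ?_, ?_⟩, ?_⟩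
        · exact_mod_cast h1
        · exact_mod_cast h2
        · exact_mod_cast h3
        · exact_mod_cast h4
        · funext i
          fin_cases i <;> simp
      · rintro ⟨q, ⟨h1, h2, h3, h4⟩, rfl⟩
        rw [Set.mem_setOf_eq, mem_dilate c k hc hk]
        simp only [Matrix.cons_val_zero, Matrix.cons_val_one, Matrix.head_cons]
        refine ⟨?_, ?_, ?_, ?_⟩
        · exact_mod_cast h1
        · exact_mod_cast h2
        · exact_mod_cast h3
        · exact_mod_cast h4
    rw [him, Set.ncard_image_of_injective _ hinj]
    exact count_lemma c k hc hk
end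

section
/- For a composition η = (η_1, …, η_r) of n and positive integer c, the cardinality of the set of c-coloured multiset permutations S_η^c equals n! times the Euclidean volume of the product of distorted cross polytopes C_{η_1}^c × … × C_{η_r}^c; explicitly, |S_η^c| = c^n · n!/(η_1! ⋯ η_r!) and vol(C_{η_1}^c × … × C_{η_r}^c) = c^n/(η_1! ⋯ η_r!). -/
/-- The distorted cross polytope
`C_m^c = conv{e_1,…,e_m, -(c-1)e_1, …, -(c-1)e_m} ⊂ ℝ^m`. -/
noncomputable def distortedCross (m c : ℕ) : Set (Fin m → ℝ) :=
  convexHull ℝ ((Set.range fun j : Fin m => Pi.single j (1 : ℝ)) ∪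
    (Set.range fun j : Fin m => Pi.single j (-((c : ℝ) - 1))))

/-- The set `S_η^c` of `c`-coloured multiset permutations for the composition `η`:
pairs of a word with `η_j` copies of each letter `j` and a colouring. -/
def colouredMultisetPerms (n r c : ℕ) (η : Fin r → ℕ) :
    Finset ((Fin n → Fin r) × (Fin n → Fin c)) :=
  Finset.univ.filter (fun p =>
    ∀ j : Fin r, (Finset.univ.filter (fun i : Fin n => p.1 i = j)).card = η j)

section Aux
open MeasureTheory Finset


/-- The scaled standard corner simplex. -/
def cornerSimplex (m : ℕ) (a : ℝ) : Set (Fin m → ℝ) :=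
  {y | (∀ i, 0 ≤ y i) ∧ ∑ i, y i ≤ a}

lemma cornerSimplex_empty {m : ℕ} {a : ℝ} (ha : a < 0) : cornerSimplex m a = ∅ := by
  ext y
  simp only [cornerSimplex, Set.mem_setOf_eq, Set.mem_empty_iff_false, iff_false, not_and]
  intro h0 hs
  have : (0:ℝ) ≤ ∑ i, y i := Finset.sum_nonneg fun i _ => h0 i
  linarith

lemma isClosed_cornerSimplex (m : ℕ) (a : ℝ) : IsClosed (cornerSimplex m a) := by
  have h1 : IsClosed {y : Fin m → ℝ | ∀ i, 0 ≤ y i} := by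
    have : {y : Fin m → ℝ | ∀ i, 0 ≤ y i} = ⋂ i, {y | 0 ≤ y i} := by
      ext y; simp
    rw [this]
    exact isClosed_iInter fun i => isClosed_le continuous_const (continuous_apply i)
  have h2 : IsClosed {y : Fin m → ℝ | ∑ i, y i ≤ a} :=
    isClosed_le (by continuity) continuous_const
  exact (h1.inter h2 : _)

lemma measurableSet_cornerSimplex (m : ℕ) (a : ℝ) : MeasurableSet (cornerSimplex m a) :=
  (isClosed_cornerSimplex m a).measurableSet

lemma isCompact_cornerSimplex (m : ℕ) (a : ℝ) : IsCompact (cornerSimplex m a) := by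
  rcases lt_or_ge a 0 with ha | ha
  · rw [cornerSimplex_empty ha]; exact isCompact_empty
  · apply IsCompact.of_isClosed_subset (isCompact_Icc (a := (0 : Fin m → ℝ)) (b := fun _ => a))
      (isClosed_cornerSimplex m a)
    intro y hy
    obtain ⟨h0, hs⟩ := hy
    constructor
    · intro i; exact h0 i
    · intro i
      calc y i ≤ ∑ k, y k := Finset.single_le_sum (fun k _ => h0 k) (mem_univ i)
        _ ≤ a := hs

lemma volume_cornerSimplex : ∀ (m : ℕ) (a : ℝ), 0 ≤ a →
    volume (cornerSimplex m a) = ENNReal.ofReal (a ^ m / m.factorial) := by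
  intro m
  induction m with
  | zero =>
    intro a ha
    have : cornerSimplex 0 a = Set.univ := by
      ext y
      simp [cornerSimplex, ha]
    rw [this]
    have : (Set.univ : Set (Fin 0 → ℝ)) = Set.univ.pi (fun _ : Fin 0 => (Set.univ : Set ℝ)) := by
      simp
    rw [this, volume_pi_pi]
    simp
  | succ m ih =>
    intro a ha
    -- use the equivalence (Fin (m+1) → ℝ) ≃ ℝ × (Fin m → ℝ)
    set e := MeasurableEquiv.piFinSuccAbove (fun _ : Fin (m+1) => ℝ) 0 with he
    have hmp := MeasureTheory.volume_preserving_piFinSuccAbove (fun _ : Fin (m+1) => ℝ) 0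
    set T : Set (ℝ × (Fin m → ℝ)) :=
      {p | 0 ≤ p.1 ∧ (∀ i, 0 ≤ p.2 i) ∧ p.1 + ∑ i, p.2 i ≤ a} with hT
    have hTclosed : IsClosed T := by
      have c1 : IsClosed {p : ℝ × (Fin m → ℝ) | 0 ≤ p.1} :=
        isClosed_le continuous_const continuous_fst
      have c2 : IsClosed {p : ℝ × (Fin m → ℝ) | ∀ i, 0 ≤ p.2 i} := by
        rw [show {p : ℝ × (Fin m → ℝ) | ∀ i, 0 ≤ p.2 i} = ⋂ i, {p | 0 ≤ p.2 i} by ext p; simp]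
        exact isClosed_iInter fun i =>
          isClosed_le continuous_const ((continuous_apply i).comp continuous_snd)
      have c3 : IsClosed {p : ℝ × (Fin m → ℝ) | p.1 + ∑ i, p.2 i ≤ a} :=
        isClosed_le (continuous_fst.add
          (continuous_finset_sum _ fun i _ => (continuous_apply i).comp continuous_snd))
          continuous_const
      exact (c1.inter (c2.inter c3) : _)
    have hTmeas : MeasurableSet T := hTclosed.measurableSet
    have hex : ∀ x : Fin (m+1) → ℝ, e x = (x 0, fun j => x j.succ) := by
      intro x
      rfl
    have hpre : cornerSimplex (m+1) a = e ⁻¹' T := by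
      ext x
      simp only [cornerSimplex, Set.mem_setOf_eq, Set.mem_preimage, hex x, hT]
      constructor
      · rintro ⟨h0, hs⟩
        rw [Fin.sum_univ_succ] at hs
        exact ⟨h0 0, fun i => h0 _, hs⟩
      · rintro ⟨h1, h2, h3⟩
        refine ⟨fun i => Fin.cases h1 h2 i, ?_⟩
        rw [Fin.sum_univ_succ]
        exact h3
    have hslice : ∀ t : ℝ, (Prod.mk t ⁻¹' T) = if 0 ≤ t then cornerSimplex m (a - t) else ∅ := by
      intro t
      split_ifs with h
      · ext y
        simp only [Set.mem_preimage, hT, Set.mem_setOf_eq, cornerSimplex]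
        constructor
        · rintro ⟨-, h2, h3⟩
          exact ⟨h2, by linarith⟩
        · rintro ⟨h2, h3⟩
          exact ⟨h, h2, by linarith⟩
      · ext y
        simp only [Set.mem_preimage, hT, Set.mem_setOf_eq, Set.mem_empty_iff_false, iff_false,
          not_and]
        intro h1
        exact absurd h1 h
    have hfun : (fun t : ℝ => volume (Prod.mk t ⁻¹' T))
        = Set.indicator (Set.Icc 0 a) (fun t => ENNReal.ofReal ((a - t) ^ m / m.factorial)) := by
      funext t
      rw [hslice t]
      by_cases h0 : 0 ≤ t
      · rw [if_pos h0]
        by_cases h1 : t ≤ a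
        · rw [ih (a - t) (by linarith), Set.indicator_of_mem (Set.mem_Icc.mpr ⟨h0, h1⟩)]
        · rw [cornerSimplex_empty (by linarith), Set.indicator_of_notMem (fun hm => h1 hm.2)]
          simp
      · rw [if_neg h0, Set.indicator_of_notMem (fun hm => h0 hm.1)]
        simp
    have hint : ∫ t in Set.Icc (0:ℝ) a, ((a - t) ^ m / m.factorial)
        = a ^ (m+1) / (m+1).factorial := by
      rw [MeasureTheory.integral_Icc_eq_integral_Ioc,
        ← intervalIntegral.integral_of_le ha, intervalIntegral.integral_div,
        intervalIntegral.integral_comp_sub_left (fun u => u ^ m) a, sub_self, sub_zero,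
        integral_pow]
      rw [zero_pow (Nat.succ_ne_zero m), Nat.factorial_succ]
      push_cast
      field_simp
      simp
    calc volume (cornerSimplex (m+1) a)
        = volume T := by
          rw [hpre, hmp.measure_preimage hTmeas.nullMeasurableSet]
      _ = ∫⁻ t : ℝ, volume (Prod.mk t ⁻¹' T) := by
          rw [MeasureTheory.Measure.volume_eq_prod, MeasureTheory.Measure.prod_apply hTmeas]
      _ = ∫⁻ t in Set.Icc (0:ℝ) a, ENNReal.ofReal ((a - t) ^ m / m.factorial) := by
          rw [hfun, lintegral_indicator measurableSet_Icc]
      _ = ENNReal.ofReal (∫ t in Set.Icc (0:ℝ) a, ((a - t) ^ m / m.factorial)) := by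
          rw [← MeasureTheory.ofReal_integral_eq_lintegral_ofReal]
          · apply Continuous.integrableOn_Icc
            fun_prop
          · apply Filter.eventually_of_mem (self_mem_ae_restrict measurableSet_Icc)
            intro t ht
            have : (0:ℝ) ≤ (a - t) ^ m := pow_nonneg (by linarith [ht.2]) m
            positivity
      _ = ENNReal.ofReal (a ^ (m+1) / (m+1).factorial) := by rw [hint]



/-- The cross polytope with distortion parameter `d`. -/
def crossSet (m : ℕ) (d : ℝ) : Set (Fin m → ℝ) :=
  convexHull ℝ ((Set.range fun j : Fin m => Pi.single j (1 : ℝ)) ∪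
    (Set.range fun j : Fin m => Pi.single j (-d)))

lemma zero_mem_crossSet {m : ℕ} {d : ℝ} (hm : 0 < m) (hd : 0 ≤ d) :
    (0 : Fin m → ℝ) ∈ crossSet m d := by
  set i0 : Fin m := ⟨0, hm⟩
  have h1 : Pi.single i0 (1:ℝ) ∈ crossSet m d :=
    subset_convexHull ℝ _ (Or.inl ⟨i0, rfl⟩)
  have h2 : Pi.single i0 (-d) ∈ crossSet m d :=
    subset_convexHull ℝ _ (Or.inr ⟨i0, rfl⟩)
  have hconv : Convex ℝ (crossSet m d) := convex_convexHull ℝ _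
  have hd1 : (0:ℝ) < 1 + d := by linarith
  have key := hconv h1 h2 (div_nonneg hd hd1.le) (div_nonneg zero_le_one hd1.le)
    (by rw [← add_div, add_comm, div_self hd1.ne'])
  have : (d / (1 + d)) • (Pi.single i0 (1:ℝ) : Fin m → ℝ)
        + (1 / (1 + d)) • (Pi.single i0 (-d) : Fin m → ℝ)
      = (0 : Fin m → ℝ) := by
    funext i
    by_cases h : i = i0 <;>
      simp [Pi.single_apply, h] <;> field_simp <;> ring
  rwa [this] at key

lemma crossSet_subset_union {m : ℕ} {d : ℝ} (hd : 0 ≤ d) :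
    crossSet m d ⊆ ⋃ ε : Fin m → Bool,
      (fun y : Fin m → ℝ => fun i => (if ε i then (1:ℝ) else -d) * y i) '' cornerSimplex m 1 := by
  intro x hx
  have hfin : ((Set.range fun j : Fin m => Pi.single j (1 : ℝ)) ∪
      (Set.range fun j : Fin m => Pi.single j (-d))).Finite :=
    (Set.finite_range _).union (Set.finite_range _)
  rw [crossSet, Set.Finite.convexHull_eq hfin] at hx
  obtain ⟨w, hw0, hw1, hwx⟩ := hx
  rw [Finset.centerMass_eq_of_sum_1 _ id hw1] at hwx
  set T := hfin.toFinset with hTdef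
  have hmemT : ∀ z, z ∈ T ↔ (∃ j, Pi.single j (1:ℝ) = z) ∨ (∃ j, Pi.single j (-d) = z) := by
    intro z
    rw [hTdef, Set.Finite.mem_toFinset]
    simp [Set.mem_union]
  have hmem1 : ∀ i : Fin m, Pi.single i (1:ℝ) ∈ T := fun i => (hmemT _).mpr (Or.inl ⟨i, rfl⟩)
  have hmem2 : ∀ i : Fin m, Pi.single i (-d) ∈ T := fun i => (hmemT _).mpr (Or.inr ⟨i, rfl⟩)
  have hw0' : ∀ z ∈ T, 0 ≤ w z := fun z hz => hw0 z (hfin.mem_toFinset.mp hz)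
  have hcoord : ∀ i, x i = ∑ z ∈ T, w z * z i := by
    intro i
    rw [← hwx, Finset.sum_apply]
    simp
  have claim1 : ∀ i, x i ≤ w (Pi.single i (1:ℝ)) := by
    intro i
    rw [hcoord i]
    calc ∑ z ∈ T, w z * z i
        ≤ ∑ z ∈ T, (if z = Pi.single i (1:ℝ) then w z * z i else 0) := by
          apply Finset.sum_le_sum
          intro z hz
          split_ifs with h
          · exact le_refl _
          · rcases (hmemT z).mp hz with ⟨j, rfl⟩ | ⟨j, rfl⟩
            · have hji : i ≠ j := by
                intro hij
                exact h (by rw [hij])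
              rw [Pi.single_eq_of_ne hji]
              simp
            · have hzi : (Pi.single j (-d) : Fin m → ℝ) i ≤ 0 := by
                by_cases h' : i = j
                · subst h'; simp [hd]
                · rw [Pi.single_eq_of_ne h']
              exact mul_nonpos_of_nonneg_of_nonpos (hw0' _ hz) hzi
      _ = w (Pi.single i (1:ℝ)) * (Pi.single i (1:ℝ) : Fin m → ℝ) i := by
          rw [Finset.sum_ite_eq' T (Pi.single i (1:ℝ)) (fun z => w z * z i),
            if_pos (hmem1 i)]
      _ = w (Pi.single i (1:ℝ)) := by
          rw [Pi.single_eq_same, mul_one]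
  have claim2 : ∀ i, w (Pi.single i (-d)) * (-d) ≤ x i := by
    intro i
    rw [hcoord i]
    have heq : w (Pi.single i (-d)) * (-d)
        = w (Pi.single i (-d)) * (Pi.single i (-d) : Fin m → ℝ) i := by
      rw [Pi.single_eq_same]
    rw [heq]
    calc w (Pi.single i (-d)) * (Pi.single i (-d) : Fin m → ℝ) i
        = ∑ z ∈ T, (if z = Pi.single i (-d) then w z * z i else 0) := by
          rw [Finset.sum_ite_eq' T (Pi.single i (-d)) (fun z => w z * z i),
            if_pos (hmem2 i)]
      _ ≤ ∑ z ∈ T, w z * z i := by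
          apply Finset.sum_le_sum
          intro z hz
          split_ifs with h
          · exact le_refl _
          · rcases (hmemT z).mp hz with ⟨j, rfl⟩ | ⟨j, rfl⟩
            · have hzi : (0:ℝ) ≤ (Pi.single j (1:ℝ) : Fin m → ℝ) i := by
                by_cases h' : i = j
                · subst h'; simp
                · rw [Pi.single_eq_of_ne h']
              exact mul_nonneg (hw0' _ hz) hzi
            · have hji : i ≠ j := by
                intro hij
                exact h (by rw [hij])
              rw [Pi.single_eq_of_ne hji]
              simp
  have hkey : ∀ i, ¬ (0 ≤ x i) → 0 < d := by
    intro i hneg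
    rcases lt_or_eq_of_le hd with h | h
    · exact h
    · exfalso
      apply hneg
      have := claim2 i
      rw [← h] at this
      simpa using this
  refine Set.mem_iUnion.mpr ⟨fun i => decide (0 ≤ x i),
    fun i => if 0 ≤ x i then x i else -x i / d, ⟨?_, ?_⟩, ?_⟩
  · intro i
    dsimp only
    split_ifs with h
    · exact h
    · have hdpos := hkey i h
      have : x i < 0 := not_le.mp h
      apply div_nonneg (by linarith) hdpos.le
  · set p : Fin m → (Fin m → ℝ) :=
      fun i => if 0 ≤ x i then Pi.single i (1:ℝ) else Pi.single i (-d) with hp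
    have hyp : ∀ i, (if 0 ≤ x i then x i else -x i / d) ≤ w (p i) := by
      intro i
      rw [hp]
      dsimp only
      split_ifs with h
      · exact claim1 i
      · have hdpos := hkey i h
        rw [div_le_iff₀ hdpos]
        have := claim2 i
        nlinarith [claim2 i]
    have hpmemT : ∀ i, p i ∈ T := by
      intro i
      rw [hp]
      dsimp only
      split_ifs with h
      · exact hmem1 i
      · exact hmem2 i
    have hpinj : ∀ i ∈ Finset.univ, ∀ i' ∈ Finset.univ, p i = p i' → i = i' := by
      intro i _ i' _ hpe
      by_contra hne
      have hzero : p i' i = 0 := by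
        rw [hp]
        dsimp only
        split_ifs with h
        · exact Pi.single_eq_of_ne hne _
        · exact Pi.single_eq_of_ne hne _
      have hval : p i i ≠ 0 := by
        rw [hp]
        dsimp only
        split_ifs with h
        · simp
        · have hdpos := hkey i h
          simp only [Pi.single_eq_same]
          intro hcontra
          rw [neg_eq_zero] at hcontra
          exact hdpos.ne' hcontra
      rw [hpe, hzero] at hval
      exact hval rfl
    calc ∑ i, (if 0 ≤ x i then x i else -x i / d)
        ≤ ∑ i, w (p i) := Finset.sum_le_sum fun i _ => hyp i
      _ = ∑ z ∈ Finset.univ.image p, w z := (Finset.sum_image hpinj).symm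
      _ ≤ ∑ z ∈ T, w z := by
          apply Finset.sum_le_sum_of_subset_of_nonneg
          · intro z hz
            rw [Finset.mem_image] at hz
            obtain ⟨i, _, rfl⟩ := hz
            exact hpmemT i
          · intro z hz _
            exact hw0' z hz
      _ = 1 := hw1
  · funext i
    dsimp only
    by_cases h : 0 ≤ x i
    · simp [h]
    · have hdpos := hkey i h
      simp only [h, decide_false, if_false, Bool.false_eq_true]
      field_simp

lemma union_subset_crossSet {m : ℕ} {d : ℝ} (hm : 0 < m) (hd : 0 ≤ d) (ε : Fin m → Bool) :
    (fun y : Fin m → ℝ => fun i => (if ε i then (1:ℝ) else -d) * y i) '' cornerSimplex m 1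
      ⊆ crossSet m d := by
  rintro _ ⟨y, ⟨hy0, hy1⟩, rfl⟩
  have hexp : (fun i => (if ε i then (1:ℝ) else -d) * y i)
      = ∑ o : Option (Fin m),
          (Option.elim o (1 - ∑ i, y i) y) •
            (Option.elim o (0 : Fin m → ℝ) (fun i => Pi.single i (if ε i then (1:ℝ) else -d))) := by
    funext k
    rw [Fintype.sum_option]
    simp only [Option.elim]
    rw [Pi.add_apply]
    simp only [Pi.smul_apply, Pi.zero_apply, smul_eq_mul, mul_zero, zero_add]
    rw [Finset.sum_apply]
    have : ∀ i : Fin m, (y i • (Pi.single i (if ε i then (1:ℝ) else -d) : Fin m → ℝ)) k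
        = if k = i then y i * (if ε i then (1:ℝ) else -d) else 0 := by
      intro i
      rw [Pi.smul_apply, smul_eq_mul, Pi.single_apply]
      split_ifs <;> ring
    calc (if ε k = true then (1:ℝ) else -d) * y k
        = ∑ i : Fin m, if k = i then y i * (if ε i then (1:ℝ) else -d) else 0 := by
          rw [Finset.sum_ite_eq Finset.univ k
            (fun i => y i * (if ε i then (1:ℝ) else -d)), if_pos (Finset.mem_univ k)]
          ring
      _ = ∑ i : Fin m, (y i • (Pi.single i (if ε i then (1:ℝ) else -d) : Fin m → ℝ)) k :=
          Finset.sum_congr rfl (fun i _ => (this i).symm)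
  change (fun i => (if ε i then (1:ℝ) else -d) * y i) ∈ crossSet m d
  rw [hexp]
  apply Convex.sum_mem (convex_convexHull ℝ _)
  · rintro (_ | i) _
    · simpa using hy1
    · exact hy0 i
  · rw [Fintype.sum_option]
    simp
  · rintro (_ | i) _
    · exact zero_mem_crossSet hm hd
    · simp only [Option.elim]
      apply subset_convexHull
      cases hε : ε i with
      | true => exact Or.inl ⟨i, by simp [hε]⟩
      | false => exact Or.inr ⟨i, by simp [hε]⟩

lemma volume_crossSet {m : ℕ} {d : ℝ} (hm : 0 < m) (hd : 0 ≤ d) :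
    volume (crossSet m d) = ENNReal.ofReal ((1 + d) ^ m / m.factorial) := by
  set K : (Fin m → Bool) → Set (Fin m → ℝ) :=
    fun ε => (fun y : Fin m → ℝ => fun i => (if ε i then (1:ℝ) else -d) * y i) ''
      cornerSimplex m 1 with hK
  have hCU : crossSet m d = ⋃ ε, K ε :=
    le_antisymm (crossSet_subset_union hd)
      (Set.iUnion_subset fun ε => union_subset_crossSet hm hd ε)
  have hlin : ∀ ε : Fin m → Bool, (fun y : Fin m → ℝ => fun i => (if ε i then (1:ℝ) else -d) * y i)
      = ⇑(Matrix.toLin' (Matrix.diagonal (fun i => if ε i then (1:ℝ) else -d))) := by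
    intro ε
    funext y
    funext i
    rw [Matrix.toLin'_apply, Matrix.mulVec_diagonal]
  have hKvol : ∀ ε : Fin m → Bool, volume (K ε)
      = ENNReal.ofReal ((∏ i, (if ε i then (1:ℝ) else d)) / m.factorial) := by
    intro ε
    rw [hK]
    dsimp only
    rw [hlin ε, MeasureTheory.Measure.addHaar_image_linearMap, LinearMap.det_toLin',
      Matrix.det_diagonal, volume_cornerSimplex m 1 zero_le_one,
      ← ENNReal.ofReal_mul (abs_nonneg _)]
    congr 1
    rw [Finset.abs_prod]
    have habs : ∀ i : Fin m, |if ε i then (1:ℝ) else -d| = if ε i then (1:ℝ) else d := by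
      intro i
      split_ifs
      · exact abs_one
      · rw [abs_neg, abs_of_nonneg hd]
    rw [Finset.prod_congr rfl (fun i _ => habs i), one_pow]
    ring
  have hKcompact : ∀ ε, IsCompact (K ε) := by
    intro ε
    apply (isCompact_cornerSimplex m 1).image
    exact continuous_pi fun i => continuous_const.mul (continuous_apply i)
  have hKnm : ∀ ε, NullMeasurableSet (K ε) volume :=
    fun ε => ((hKcompact ε).isClosed.measurableSet).nullMeasurableSet
  have hplane : ∀ i : Fin m, volume {x : Fin m → ℝ | x i = 0} = 0 := by
    intro i
    have : {x : Fin m → ℝ | x i = 0}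
        = Set.univ.pi (fun j => if j = i then ({0} : Set ℝ) else Set.univ) := by
      ext x
      simp only [Set.mem_setOf_eq, Set.mem_pi, Set.mem_univ, true_implies]
      constructor
      · intro h j
        split_ifs with hj
        · subst hj; simpa using h
        · trivial
      · intro h
        have := h i
        rw [if_pos rfl] at this
        simpa using this
    rw [this, volume_pi_pi]
    apply Finset.prod_eq_zero (Finset.mem_univ i)
    simp
  have hdisj : Pairwise (Function.onFun (MeasureTheory.AEDisjoint volume) K) := by
    intro ε ε' hne
    obtain ⟨i, hi⟩ : ∃ i, ε i ≠ ε' i := by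
      by_contra h
      push_neg at h
      exact hne (funext h)
    apply measure_mono_null (?_ : K ε ∩ K ε' ⊆ {x : Fin m → ℝ | x i = 0}) (hplane i)
    rintro x ⟨⟨y, ⟨hy0, _⟩, rfl⟩, ⟨y', ⟨hy0', _⟩, hxx⟩⟩
    have hxi : (if ε i then (1:ℝ) else -d) * y i
        = (if ε' i then (1:ℝ) else -d) * y' i := (congrFun hxx i).symm
    show (if ε i then (1:ℝ) else -d) * y i = 0
    cases hb : ε i with
    | true =>
      have hb' : ε' i = false := by
        cases hb2 : ε' i
        · rfl
        · rw [hb, hb2] at hi; exact absurd rfl hi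
      rw [hb] at hxi
      rw [hb' ] at hxi
      simp only [if_true, Bool.false_eq_true, if_false] at hxi
      have h1 : 0 ≤ 1 * y i := by simpa using hy0 i
      have h2 : -d * y' i ≤ 0 := mul_nonpos_of_nonpos_of_nonneg (by linarith) (hy0' i)
      simp only [hb, if_true]
      linarith [hxi, h1, h2]
    | false =>
      have hb' : ε' i = true := by
        cases hb2 : ε' i
        · rw [hb, hb2] at hi; exact absurd rfl hi
        · rfl
      rw [hb, hb'] at hxi
      simp only [if_true, Bool.false_eq_true, if_false] at hxi
      have h1 : -d * y i ≤ 0 := mul_nonpos_of_nonpos_of_nonneg (by linarith) (hy0 i)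
      have h2 : 0 ≤ 1 * y' i := by simpa using hy0' i
      simp only [hb, Bool.false_eq_true, if_false]
      linarith [hxi, h1, h2]
  have hsum : ∑ ε : Fin m → Bool, (∏ i, (if ε i then (1:ℝ) else d)) = (1 + d) ^ m := by
    have hps := Finset.prod_univ_sum (fun _ : Fin m => (Finset.univ : Finset Bool))
      (fun _ b => if b then (1:ℝ) else d)
    rw [Fintype.piFinset_univ] at hps
    rw [← hps]
    have : ∀ _i : Fin m, (∑ b : Bool, (if b then (1:ℝ) else d)) = 1 + d := by
      intro i
      rw [Fintype.sum_bool]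
      simp
    rw [Finset.prod_congr rfl (fun i _ => this i), Finset.prod_const, Finset.card_univ,
      Fintype.card_fin]
  calc volume (crossSet m d)
      = ∑' ε : Fin m → Bool, volume (K ε) := by
        rw [hCU, MeasureTheory.measure_iUnion₀ hdisj hKnm]
    _ = ∑ ε : Fin m → Bool, volume (K ε) := tsum_fintype _
    _ = ∑ ε : Fin m → Bool, ENNReal.ofReal ((∏ i, (if ε i then (1:ℝ) else d)) / m.factorial) :=
        Finset.sum_congr rfl (fun ε _ => hKvol ε)
    _ = ENNReal.ofReal (∑ ε : Fin m → Bool, (∏ i, (if ε i then (1:ℝ) else d)) / m.factorial) := by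
        rw [ENNReal.ofReal_sum_of_nonneg]
        intro ε _
        apply div_nonneg
        · apply Finset.prod_nonneg
          intro i _
          split_ifs
          · exact zero_le_one
          · exact hd
        · positivity
    _ = ENNReal.ofReal ((1 + d) ^ m / m.factorial) := by
        rw [← Finset.sum_div, hsum]


variable {ι : Type*} [Fintype ι] {κ : ι → Type*} [∀ i, Fintype (κ i)]

/-- Currying as a measurable equivalence. -/
def curryME (ι : Type*) (κ : ι → Type*) : ((Σ i, κ i) → ℝ) ≃ᵐ (Π i, κ i → ℝ) where
  toEquiv := Equiv.piCurry (fun _ _ => ℝ)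
  measurable_toFun := by
    apply measurable_pi_lambda
    intro i
    apply measurable_pi_lambda
    intro j
    exact measurable_pi_apply _
  measurable_invFun := by
    apply measurable_pi_lambda
    intro p
    exact (measurable_pi_apply p.2).comp (measurable_pi_apply p.1)

lemma measurePreserving_curryME_symm :
    MeasurePreserving (⇑(curryME ι κ).symm) volume volume := by
  refine ⟨(curryME ι κ).symm.measurable, ?_⟩
  have key : Measure.pi (fun _ : Σ i, κ i => (volume : Measure ℝ))
      = Measure.map (⇑(curryME ι κ).symm) volume := by
    apply Measure.pi_eq
    intro s hs
    rw [Measure.map_apply (curryME ι κ).symm.measurable (MeasurableSet.univ_pi hs)]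
    have hpre : (⇑(curryME ι κ).symm) ⁻¹' (Set.univ.pi s)
        = Set.univ.pi (fun i => Set.univ.pi (fun j => s ⟨i, j⟩)) := by
      ext f
      simp only [Set.mem_preimage, Set.mem_pi, Set.mem_univ, true_implies]
      constructor
      · intro h i j
        exact h ⟨i, j⟩
      · intro h p
        exact h p.1 p.2
    rw [hpre, volume_pi_pi]
    have : ∀ i, volume (Set.univ.pi (fun j => s ⟨i, j⟩)) = ∏ j, volume (s ⟨i, j⟩) :=
      fun i => volume_pi_pi _
    rw [Finset.prod_congr rfl (fun i _ => this i), ← Finset.univ_sigma_univ, Finset.prod_sigma]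
  rw [← key]
  rfl

lemma measurePreserving_curryME :
    MeasurePreserving (⇑(curryME ι κ)) volume volume := by
  have h := (measurePreserving_curryME_symm (ι := ι) (κ := κ)).symm (curryME ι κ).symm
  simpa using h

lemma volume_sigma_block_set (A : ∀ i, Set (κ i → ℝ)) (hA : ∀ i, MeasurableSet (A i)) :
    volume {x : (Σ i, κ i) → ℝ | ∀ i, (fun j => x ⟨i, j⟩) ∈ A i} = ∏ i, volume (A i) := by
  have hset : {x : (Σ i, κ i) → ℝ | ∀ i, (fun j => x ⟨i, j⟩) ∈ A i}
      = ⇑(curryME ι κ) ⁻¹' (Set.univ.pi A) := by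
    ext x
    simp only [Set.mem_setOf_eq, Set.mem_preimage, Set.mem_pi, Set.mem_univ, true_implies]
    rfl
  rw [hset, measurePreserving_curryME.measure_preimage
    (MeasurableSet.univ_pi hA).nullMeasurableSet, volume_pi_pi]


/-- The set of words with prescribed fiber cardinalities. -/
def wordsWith (n r : ℕ) (η : Fin r → ℕ) : Finset (Fin n → Fin r) :=
  Finset.univ.filter (fun w =>
    ∀ j : Fin r, (Finset.univ.filter (fun i : Fin n => w i = j)).card = η j)

lemma fiber_card_succ {n r : ℕ} (w : Fin (n + 1) → Fin r) (k : Fin r) :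
    (Finset.univ.filter (fun i : Fin (n+1) => w i = k)).card
      = (if w 0 = k then 1 else 0)
        + (Finset.univ.filter (fun i : Fin n => w i.succ = k)).card := by
  rw [Finset.card_filter, Finset.card_filter, Fin.sum_univ_succ]

lemma wordsWith_card {r : ℕ} : ∀ (n : ℕ) (η : Fin r → ℕ), (∑ j, η j = n) →
    (wordsWith n r η).card * ∏ j, (η j).factorial = n.factorial := by
  intro n
  induction n with
  | zero =>
    intro η hη
    have hz : ∀ j, η j = 0 := by
      intro j
      have := Finset.sum_eq_zero_iff.mp hη
      exact this j (mem_univ j)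
    have : wordsWith 0 r η = Finset.univ := by
      apply Finset.filter_true_of_mem
      intro w _ j
      simp [hz j]
    simp [this, hz, Nat.factorial]
  | succ n ih =>
    intro η hη
    have hfib : ∀ j : Fin r, ((wordsWith (n+1) r η).filter (fun w => w 0 = j)).card
        = if η j = 0 then 0 else (wordsWith n r (Function.update η j (η j - 1))).card := by
      intro j
      by_cases hj : η j = 0
      · simp only [hj, if_true]
        rw [Finset.card_eq_zero]
        rw [Finset.eq_empty_iff_forall_notMem]
        intro w hw
        simp only [Finset.mem_filter, wordsWith, Finset.mem_univ, true_and] at hw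
        obtain ⟨h1, h2⟩ := hw
        have := fiber_card_succ w j
        rw [h1 j, if_pos h2, hj] at this
        omega
      · simp only [hj, if_false]
        apply Finset.card_nbij' (fun w => fun i : Fin n => w i.succ) (fun v => Fin.cons j v)
        · intro w hw
          simp only [Finset.mem_coe, Finset.mem_filter, wordsWith, Finset.mem_univ, true_and] at hw ⊢
          obtain ⟨h1, h2⟩ := hw
          intro k
          have hf := fiber_card_succ w k
          rw [h1 k] at hf
          by_cases hk : k = j
          · subst hk
            rw [if_pos h2] at hf
            rw [Function.update_self]
            omega
          · rw [if_neg (fun h => hk (h2 ▸ h.symm))] at hf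
            rw [Function.update_of_ne hk]
            omega
        · intro v hv
          simp only [Finset.mem_coe, Finset.mem_filter, wordsWith, Finset.mem_univ, true_and] at hv ⊢
          constructor
          · intro k
            have hf := fiber_card_succ (Fin.cons j v : Fin (n+1) → Fin r) k
            have hc0 : (Fin.cons j v : Fin (n+1) → Fin r) 0 = j := rfl
            have htail : ∀ i : Fin n, (Fin.cons j v : Fin (n+1) → Fin r) i.succ = v i := by
              intro i; simp
            simp only [hc0] at hf
            have hfilt : (Finset.univ.filter (fun i : Fin n =>
                (Fin.cons j v : Fin (n+1) → Fin r) i.succ = k))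
                = (Finset.univ.filter (fun i : Fin n => v i = k)) := by
              apply Finset.filter_congr
              intro i _
              rw [htail i]
            rw [hfilt, hv k] at hf
            by_cases hk : k = j
            · subst hk
              rw [if_pos rfl, Function.update_self] at hf
              omega
            · rw [if_neg (Ne.symm hk), Function.update_of_ne hk] at hf
              omega
          · rfl
        · intro w hw
          simp only [Finset.mem_coe, Finset.mem_filter] at hw
          exact (hw.2 ▸ Fin.cons_self_tail w)
        · intro v _
          funext i
          simp
    -- now the arithmetic
    have key : ∀ j : Fin r,
        ((if η j = 0 then 0 else (wordsWith n r (Function.update η j (η j - 1))).card))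
          * ∏ k, (η k).factorial = n.factorial * η j := by
      intro j
      by_cases hj : η j = 0
      · simp [hj]
      · simp only [hj, if_false]
        have hupdsum : ∑ k, (Function.update η j (η j - 1)) k = n := by
          rw [← Finset.add_sum_erase univ _ (mem_univ j), Function.update_self]
          have h2 : ∑ k ∈ univ.erase j, (Function.update η j (η j - 1)) k
              = ∑ k ∈ univ.erase j, η k := by
            apply Finset.sum_congr rfl
            intro k hk
            exact Function.update_of_ne (Finset.ne_of_mem_erase hk) _ _
          have h3 : η j + ∑ k ∈ univ.erase j, η k = n + 1 := by
            rw [Finset.add_sum_erase univ η (mem_univ j), hη]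
          omega
        have hih := ih (Function.update η j (η j - 1)) hupdsum
        have hprod : ∏ k, (η k).factorial
            = η j * ∏ k, ((Function.update η j (η j - 1)) k).factorial := by
          rw [← Finset.mul_prod_erase univ (fun k => (η k).factorial) (mem_univ j),
              ← Finset.mul_prod_erase univ
                (fun k => ((Function.update η j (η j - 1)) k).factorial) (mem_univ j)]
          have h2 : ∏ k ∈ univ.erase j, ((Function.update η j (η j - 1)) k).factorial
              = ∏ k ∈ univ.erase j, (η k).factorial := by
            apply Finset.prod_congr rfl
            intro k hk
            rw [Function.update_of_ne (Finset.ne_of_mem_erase hk)]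
          rw [h2, Function.update_self]
          have h3 : (η j).factorial = η j * (η j - 1).factorial := by
            have h4 : η j = (η j - 1) + 1 := by omega
            rw [h4]
            simp [Nat.factorial_succ]
          rw [h3]
          ring
        calc (wordsWith n r (Function.update η j (η j - 1))).card * ∏ k, (η k).factorial
            = ((wordsWith n r (Function.update η j (η j - 1))).card
                * ∏ k, ((Function.update η j (η j - 1)) k).factorial) * η j := by
              rw [hprod]; ring
          _ = n.factorial * η j := by rw [hih]
    have hcard : (wordsWith (n+1) r η).card
        = ∑ j : Fin r, ((wordsWith (n+1) r η).filter (fun w => w 0 = j)).card :=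
      Finset.card_eq_sum_card_fiberwise (fun w _ => mem_univ (w 0))
    calc (wordsWith (n+1) r η).card * ∏ j, (η j).factorial
        = ∑ j : Fin r, ((if η j = 0 then 0 else
            (wordsWith n r (Function.update η j (η j - 1))).card) * ∏ k, (η k).factorial) := by
          rw [hcard, Finset.sum_mul]
          congr 1
          ext j
          rw [hfib j]
      _ = ∑ j : Fin r, n.factorial * η j := by
          apply Finset.sum_congr rfl
          intro j _
          exact key j
      _ = n.factorial * (n + 1) := by
          rw [← Finset.mul_sum, hη]
      _ = (n+1).factorial := by
          rw [Nat.factorial_succ]; ring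

end Aux

open MeasureTheory Finset in
/-- `|S_η^c| = n! · vol(C_{η_1}^c × … × C_{η_r}^c)`; explicitly
`|S_η^c| = c^n · n!/(η_1! ⋯ η_r!)` and `vol(C_{η_1}^c × … × C_{η_r}^c) = c^n/(η_1! ⋯ η_r!)`. -/
theorem coloured_card_eq_volume (r c : ℕ) (hr : 0 < r) (hc : 0 < c)
    (η : Fin r → ℕ) (hη : ∀ i, 0 < η i) (n : ℕ) (hn : n = ∑ i, η i) :
    (((colouredMultisetPerms n r c η).card : ℝ)
        = (Nat.factorial n : ℝ) * (MeasureTheory.volume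
            {x : ((i : Fin r) × Fin (η i)) → ℝ |
              ∀ i : Fin r, (fun j => x ⟨i, j⟩) ∈ distortedCross (η i) c}).toReal) ∧
    (((colouredMultisetPerms n r c η).card : ℚ)
        = (c : ℚ) ^ n * (Nat.factorial n : ℚ) / ∏ i, (Nat.factorial (η i) : ℚ)) ∧
    (MeasureTheory.volume
        {x : ((i : Fin r) × Fin (η i)) → ℝ |
          ∀ i : Fin r, (fun j => x ⟨i, j⟩) ∈ distortedCross (η i) c}
      = ENNReal.ofReal ((c : ℝ) ^ n / ∏ i, (Nat.factorial (η i) : ℝ))) := by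
  have hd : (0:ℝ) ≤ (c:ℝ) - 1 := by
    have : (1:ℝ) ≤ (c:ℝ) := by exact_mod_cast hc
    linarith
  have hceq : (1:ℝ) + ((c:ℝ) - 1) = (c:ℝ) := by ring
  have hcross_eq : ∀ m : ℕ, distortedCross m c = crossSet m ((c:ℝ) - 1) := fun m => rfl
  have hvol1 : ∀ i : Fin r, volume (distortedCross (η i) c)
      = ENNReal.ofReal ((c:ℝ) ^ (η i) / (η i).factorial) := by
    intro i
    rw [hcross_eq, volume_crossSet (hη i) hd, hceq]
  have hAmeas : ∀ i : Fin r, MeasurableSet (distortedCross (η i) c) := by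
    intro i
    have hcps : IsCompact (distortedCross (η i) c) :=
      Set.Finite.isCompact_convexHull ℝ ((Set.finite_range _).union (Set.finite_range _))
    exact hcps.isClosed.measurableSet
  -- the third claim: the volume of the product of cross polytopes
  have h3 : MeasureTheory.volume
      {x : ((i : Fin r) × Fin (η i)) → ℝ |
        ∀ i : Fin r, (fun j => x ⟨i, j⟩) ∈ distortedCross (η i) c}
      = ENNReal.ofReal ((c : ℝ) ^ n / ∏ i, (Nat.factorial (η i) : ℝ)) := by
    rw [volume_sigma_block_set (fun i => distortedCross (η i) c) hAmeas]
    rw [Finset.prod_congr rfl (fun i _ => hvol1 i)]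
    rw [← ENNReal.ofReal_prod_of_nonneg]
    · congr 1
      rw [Finset.prod_div_distrib, Finset.prod_pow_eq_pow_sum, ← hn]
    · intro i _
      positivity
  -- cardinality identities
  have hsplit : colouredMultisetPerms n r c η
      = (wordsWith n r η) ×ˢ (Finset.univ : Finset (Fin n → Fin c)) := by
    ext p
    simp [colouredMultisetPerms, wordsWith, Finset.mem_product]
  have hcardsplit : (colouredMultisetPerms n r c η).card
      = (wordsWith n r η).card * c ^ n := by
    rw [hsplit, Finset.card_product, Finset.card_univ]
    congr 1
    simp
  have hw := wordsWith_card n η hn.symm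
  have hNat : (colouredMultisetPerms n r c η).card * ∏ i, (η i).factorial
      = c ^ n * n.factorial := by
    rw [hcardsplit]
    calc (wordsWith n r η).card * c ^ n * ∏ i, (η i).factorial
        = c ^ n * ((wordsWith n r η).card * ∏ i, (η i).factorial) := by ring
      _ = c ^ n * n.factorial := by rw [hw]
  have hprodQ : (0:ℚ) < ∏ i, ((η i).factorial : ℚ) :=
    Finset.prod_pos fun i _ => by exact_mod_cast (η i).factorial_pos
  have h2 : ((colouredMultisetPerms n r c η).card : ℚ)
      = (c : ℚ) ^ n * (Nat.factorial n : ℚ) / ∏ i, (Nat.factorial (η i) : ℚ) := by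
    rw [eq_div_iff hprodQ.ne']
    exact_mod_cast hNat
  have hprodR : (0:ℝ) < ∏ i, ((η i).factorial : ℝ) :=
    Finset.prod_pos fun i _ => by exact_mod_cast (η i).factorial_pos
  have h1R : ((colouredMultisetPerms n r c η).card : ℝ)
      = (c : ℝ) ^ n * (Nat.factorial n : ℝ) / ∏ i, (Nat.factorial (η i) : ℝ) := by
    rw [eq_div_iff hprodR.ne']
    exact_mod_cast hNat
  refine ⟨?_, h2, h3⟩
  rw [h1R, h3, ENNReal.toReal_ofReal (by positivity)]
  ring
end

section
/- The product of standard simplices Δ_{η_1} × … × Δ_{η_r} is Gorenstein if and only if all parts of the composition are equal, i.e., η_1 = … = η_r; in this case the Gorenstein index is η_1 + 1. -/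
open Pointwise

/-- A full-dimensional lattice polytope `Q ⊆ ℝ^ι` is reflexive if, after translation by
a lattice vector, it equals `{x : Ax ≤ 1}` for some integer matrix `A`, with `0` in the
interior of the translated polytope. -/
def IsReflexive {ι : Type} [Fintype ι] (Q : Set (ι → ℝ)) : Prop :=
  ∃ (v : ι → ℤ) (m : ℕ) (A : Matrix (Fin m) ι ℤ),
    ((fun x : ι → ℝ => x - fun j => ((v j : ℝ))) '' Q
        = {x : ι → ℝ | ∀ i, ∑ j, (A i j : ℝ) * x j ≤ 1}) ∧
    (0 : ι → ℝ) ∈ interior ((fun x : ι → ℝ => x - fun j => ((v j : ℝ))) '' Q)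

/-- `Q` is Gorenstein of index `l` if `l ≥ 1` and the `l`-th dilate `lQ` is reflexive. -/
def IsGorenstein {ι : Type} [Fintype ι] (Q : Set (ι → ℝ)) (l : ℕ) : Prop :=
  0 < l ∧ IsReflexive ((l : ℝ) • Q)

section Aux

lemma exists_tight_row {ι : Type} [Fintype ι] {m : ℕ} (A : Matrix (Fin m) ι ℤ) (P : Set (ι → ℝ))
    (hP : P = {x : ι → ℝ | ∀ i, ∑ j, (A i j : ℝ) * x j ≤ 1})
    (p d : ι → ℝ) (hp : p ∈ P) (hd : ∀ s : ℝ, 0 < s → p + s • d ∉ P) :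
    ∃ i : Fin m, ∑ j, (A i j : ℝ) * p j = 1 := by
  have expand : ∀ (i : Fin m) (s : ℝ),
      ∑ j, (A i j : ℝ) * (p + s • d) j = (∑ j, (A i j : ℝ) * p j) + s * ∑ j, (A i j : ℝ) * d j := by
    intro i s
    rw [Finset.mul_sum, ← Finset.sum_add_distrib]
    congr 1; ext j
    simp [Pi.add_apply, Pi.smul_apply, smul_eq_mul]; ring
  have hviol : ∀ n : ℕ, ∃ i : Fin m,
      1 < (∑ j, (A i j : ℝ) * p j) + ((n : ℝ) + 1)⁻¹ * ∑ j, (A i j : ℝ) * d j := by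
    intro n
    have h1 := hd ((n : ℝ) + 1)⁻¹ (by positivity)
    rw [hP] at h1
    simp only [Set.mem_setOf_eq, not_forall, not_le] at h1
    obtain ⟨i, hi⟩ := h1
    exact ⟨i, by rw [← expand]; exact hi⟩
  choose f hf using hviol
  obtain ⟨i, hi⟩ := Finite.exists_infinite_fiber f
  replace hi := Set.infinite_coe_iff.mp hi
  refine ⟨i, le_antisymm (by rw [hP] at hp; exact hp i) ?_⟩
  by_contra h
  push_neg at h
  set a := ∑ j, (A i j : ℝ) * p j with ha
  set g := ∑ j, (A i j : ℝ) * d j with hg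
  obtain ⟨N, hN⟩ := exists_nat_gt (g / (1 - a))
  obtain ⟨n, hn_mem, hn_big⟩ := hi.exists_gt N
  have hfn : f n = i := hn_mem
  have h2 := hf n
  rw [hfn] at h2
  have h1a : 0 < 1 - a := by linarith
  have hng : g / (1 - a) < (n : ℝ) + 1 := by
    calc g / (1 - a) < N := hN
    _ ≤ (n : ℝ) := by exact_mod_cast hn_big.le
    _ < n + 1 := by linarith
  have hgpos : 0 < g := by
    by_contra hg0
    push_neg at hg0
    have : ((n:ℝ)+1)⁻¹ * g ≤ 0 := mul_nonpos_of_nonneg_of_nonpos (by positivity) hg0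
    linarith
  have h3 : g < ((n:ℝ) + 1) * (1 - a) := (div_lt_iff₀ h1a).mp hng
  have h4 : ((n:ℝ)+1)⁻¹ * g < 1 - a := by
    rw [inv_mul_lt_iff₀ (by positivity)]
    linarith
  linarith

lemma mem_sub_image {ι : Type} (w : ι → ℝ) (S : Set (ι → ℝ)) (x : ι → ℝ) :
    x ∈ (fun y : ι → ℝ => y - w) '' S ↔ x + w ∈ S := by
  constructor
  · rintro ⟨y, hy, rfl⟩; simpa using hy
  · intro h; exact ⟨x + w, h, add_sub_cancel_right x w⟩

lemma mem_smul_Q {r : ℕ} (η : Fin r → ℕ) {l : ℕ} (hl : 0 < l) (z : ((i : Fin r) × Fin (η i)) → ℝ) :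
    z ∈ (l : ℝ) • {x : ((i : Fin r) × Fin (η i)) → ℝ |
        ∀ i : Fin r, (∀ j, 0 ≤ x ⟨i, j⟩) ∧ ∑ j, x ⟨i, j⟩ ≤ 1}
      ↔ ∀ i : Fin r, (∀ j, 0 ≤ z ⟨i, j⟩) ∧ ∑ j, z ⟨i, j⟩ ≤ (l : ℝ) := by
  have hl' : (0 : ℝ) < l := by exact_mod_cast hl
  rw [Set.mem_smul_set]
  constructor
  · rintro ⟨q, hq, rfl⟩ i
    obtain ⟨h1, h2⟩ := hq i
    constructor
    · intro j
      have := h1 j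
      simp only [Pi.smul_apply, smul_eq_mul]
      positivity
    · calc ∑ j, ((l : ℝ) • q) ⟨i, j⟩ = (l : ℝ) * ∑ j, q ⟨i, j⟩ := by
            simp [Finset.mul_sum]
      _ ≤ (l : ℝ) * 1 := by gcongr
      _ = l := mul_one _
  · intro h
    refine ⟨(l : ℝ)⁻¹ • z, fun i => ⟨fun j => ?_, ?_⟩, ?_⟩
    · have := (h i).1 j
      simp only [Pi.smul_apply, smul_eq_mul]
      positivity
    · have h2 := (h i).2
      have : ∑ j, ((l:ℝ)⁻¹ • z) ⟨i, j⟩ = (l:ℝ)⁻¹ * ∑ j, z ⟨i, j⟩ := by simp [Finset.mul_sum]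
      rw [this, inv_mul_le_iff₀ hl', mul_one]
      exact h2
    · rw [smul_smul, mul_inv_cancel₀ (ne_of_gt hl'), one_smul]

lemma mem_image_iff {r : ℕ} (η : Fin r → ℕ) {l : ℕ} (hl : 0 < l)
    (v : ((i : Fin r) × Fin (η i)) → ℤ) (x : ((i : Fin r) × Fin (η i)) → ℝ) :
    x ∈ (fun y : ((i : Fin r) × Fin (η i)) → ℝ => y - fun j => ((v j : ℝ))) ''
        ((l : ℝ) • {x : ((i : Fin r) × Fin (η i)) → ℝ |
          ∀ i : Fin r, (∀ j, 0 ≤ x ⟨i, j⟩) ∧ ∑ j, x ⟨i, j⟩ ≤ 1})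
      ↔ ∀ i : Fin r, (∀ j, -((v ⟨i, j⟩ : ℝ)) ≤ x ⟨i, j⟩) ∧
          ∑ j, x ⟨i, j⟩ ≤ (l : ℝ) - ∑ j, ((v ⟨i, j⟩ : ℝ)) := by
  rw [mem_sub_image, mem_smul_Q η hl]
  apply forall_congr'
  intro i
  constructor
  · rintro ⟨h1, h2⟩
    refine ⟨fun j => by have := h1 j; simp only [Pi.add_apply] at this; linarith, ?_⟩
    have : ∑ j, (x + fun j => ((v j : ℝ))) ⟨i, j⟩ = ∑ j, x ⟨i, j⟩ + ∑ j, ((v ⟨i, j⟩ : ℝ)) := by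
      simp [Finset.sum_add_distrib]
    rw [this] at h2; linarith
  · rintro ⟨h1, h2⟩
    refine ⟨fun j => by have := h1 j; simp only [Pi.add_apply]; linarith, ?_⟩
    have : ∑ j, (x + fun j => ((v j : ℝ))) ⟨i, j⟩ = ∑ j, x ⟨i, j⟩ + ∑ j, ((v ⟨i, j⟩ : ℝ)) := by
      simp [Finset.sum_add_distrib]
    rw [this]; linarith

end Aux

lemma gorenstein_of_equal {r : ℕ} (hr : 0 < r) (η : Fin r → ℕ) (hη : ∀ i, 0 < η i)
    (heq : ∀ i j : Fin r, η i = η j) :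
    IsGorenstein {x : ((i : Fin r) × Fin (η i)) → ℝ |
        ∀ i : Fin r, (∀ j, 0 ≤ x ⟨i, j⟩) ∧ ∑ j, x ⟨i, j⟩ ≤ 1} (η ⟨0, hr⟩ + 1) := by
  classical
  set ι := (i : Fin r) × Fin (η i) with hι
  set N : ℕ := η ⟨0, hr⟩ with hNdef
  have hN1 : 1 ≤ N := hη _
  have hl : 0 < N + 1 := Nat.succ_pos N
  refine ⟨hl, ?_⟩
  set Q : Set (ι → ℝ) := {x : ι → ℝ | ∀ i : Fin r, (∀ j, 0 ≤ x ⟨i, j⟩) ∧ ∑ j, x ⟨i, j⟩ ≤ 1}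
    with hQdef
  set e : (ι ⊕ Fin r) ≃ Fin (Fintype.card (ι ⊕ Fin r)) := Fintype.equivFin _ with he
  set B : (ι ⊕ Fin r) → ι → ℤ :=
    Sum.elim (fun k' k => if k = k' then -1 else 0) (fun i k => if k.1 = i then 1 else 0)
    with hB
  set A : Matrix (Fin (Fintype.card (ι ⊕ Fin r))) ι ℤ := fun s k => B (e.symm s) k with hA
  have hAe : ∀ (t : ι ⊕ Fin r) (k : ι), A (e t) k = B t k := by
    intro t k; rw [hA]; simp
  -- the key constant
  have hcardη : ∀ i : Fin r, (η i : ℝ) = (N : ℝ) := by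
    intro i; exact_mod_cast congrArg Nat.cast (heq i ⟨0, hr⟩)
  have hconst : ∀ i : Fin r, ((N + 1 : ℕ) : ℝ) - ∑ _j : Fin (η i), (((1:ℤ) : ℝ)) = 1 := by
    intro i
    simp [Finset.card_univ, hcardη i]
  -- row sums
  have hsum1 : ∀ (k' : ι) (x : ι → ℝ), ∑ k, ((B (Sum.inl k') k : ℝ)) * x k = -(x k') := by
    intro k' x
    rw [hB]
    simp [ite_mul, Finset.sum_ite_eq']
    rw [Finset.sum_eq_single k' (fun b _ hb => if_neg hb) (fun h => absurd (Finset.mem_univ _) h), if_pos rfl]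
  have hsum2 : ∀ (i : Fin r) (x : ι → ℝ), ∑ k, ((B (Sum.inr i) k : ℝ)) * x k = ∑ j, x ⟨i, j⟩ := by
    intro i x
    rw [hB]
    simp only [Sum.elim_inr]
    push_cast
    rw [← Finset.univ_sigma_univ, Finset.sum_sigma]
    simp only [ite_mul, one_mul, zero_mul]
    have h : ∀ i' : Fin r, (∑ j : Fin (η i'), if i' = i then x ⟨i', j⟩ else 0)
        = if i' = i then ∑ j : Fin (η i'), x ⟨i', j⟩ else 0 := by
      intro i'; split_ifs <;> simp
    simp only [h]
    rw [Finset.sum_ite_eq' Finset.univ i (fun i' => ∑ j, x ⟨i', j⟩)]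
    simp
  -- characterization of the polytope
  have hchar : ∀ x : ι → ℝ,
      x ∈ (fun y : ι → ℝ => y - fun j => (((fun _ => (1:ℤ)) j : ℝ))) '' (((N+1 : ℕ) : ℝ) • Q)
        ↔ ∀ i : Fin r, (∀ j, -(1:ℝ) ≤ x ⟨i, j⟩) ∧ ∑ j, x ⟨i, j⟩ ≤ 1 := by
    intro x
    rw [mem_image_iff η hl (fun _ => (1:ℤ)) x]
    apply forall_congr'
    intro i
    rw [hconst i]
    simp
  have hrows : ∀ x : ι → ℝ,
      (∀ s, ∑ k, (A s k : ℝ) * x k ≤ 1) ↔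
        ∀ i : Fin r, (∀ j, -(1:ℝ) ≤ x ⟨i, j⟩) ∧ ∑ j, x ⟨i, j⟩ ≤ 1 := by
    intro x
    constructor
    · intro h i
      refine ⟨fun j => ?_, ?_⟩
      · have := h (e (Sum.inl ⟨i, j⟩))
        rw [show ∑ k, (A (e (Sum.inl ⟨i, j⟩)) k : ℝ) * x k = -(x ⟨i, j⟩) from by
          simp only [hAe]; exact hsum1 ⟨i, j⟩ x] at this
        linarith
      · have := h (e (Sum.inr i))
        rwa [show ∑ k, (A (e (Sum.inr i)) k : ℝ) * x k = ∑ j, x ⟨i, j⟩ from by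
          simp only [hAe]; exact hsum2 i x] at this
    · intro h s
      obtain ⟨t, rfl⟩ : ∃ t, e t = s := ⟨e.symm s, e.apply_symm_apply s⟩
      cases t with
      | inl k' =>
        rw [show ∑ k, (A (e (Sum.inl k')) k : ℝ) * x k = -(x k') from by
          simp only [hAe]; exact hsum1 k' x]
        have := (h k'.1).1 k'.2
        rw [Sigma.eta] at this
        linarith
      | inr i =>
        rw [show ∑ k, (A (e (Sum.inr i)) k : ℝ) * x k = ∑ j, x ⟨i, j⟩ from by
          simp only [hAe]; exact hsum2 i x]
        exact (h i).2
  refine ⟨fun _ => (1:ℤ), Fintype.card (ι ⊕ Fin r), A, ?_, ?_⟩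
  · ext x
    rw [Set.mem_setOf_eq, hchar x, ← hrows x]
  · -- interior
    have himT : (fun y : ι → ℝ => y - fun j => (((fun _ => (1:ℤ)) j : ℝ))) '' (((N+1:ℕ) : ℝ) • Q)
        = {x : ι → ℝ | ∀ i : Fin r, (∀ j, -(1:ℝ) ≤ x ⟨i, j⟩) ∧ ∑ j, x ⟨i, j⟩ ≤ 1} :=
      Set.ext fun x => hchar x
    rw [himT]
    rw [mem_interior_iff_mem_nhds]
    have hδ : (0:ℝ) < ((N:ℝ) + 1)⁻¹ := by positivity
    refine Filter.mem_of_superset (Metric.ball_mem_nhds _ hδ) ?_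
    intro x hx
    rw [mem_ball_zero_iff] at hx
    have hxk : ∀ k : ι, |x k| < ((N:ℝ)+1)⁻¹ := by
      intro k
      calc |x k| = ‖x k‖ := (Real.norm_eq_abs _).symm
      _ ≤ ‖x‖ := norm_le_pi_norm x k
      _ < _ := hx
    have hδ1 : ((N:ℝ)+1)⁻¹ ≤ 1 := by
      have : (1:ℝ) ≤ N := by exact_mod_cast hN1
      rw [inv_le_one_iff₀]; right; linarith
    intro i
    constructor
    · intro j
      have := hxk ⟨i, j⟩
      have := abs_lt.mp this
      linarith
    · have hterm : ∀ j : Fin (η i), x ⟨i, j⟩ ≤ ((N:ℝ)+1)⁻¹ := by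
        intro j
        have := abs_lt.mp (hxk ⟨i, j⟩)
        linarith
      refine le_of_lt ?_
      calc ∑ j, x ⟨i, j⟩ ≤ ∑ _j : Fin (η i), ((N:ℝ)+1)⁻¹ := Finset.sum_le_sum fun j _ => hterm j
      _ = (η i : ℝ) * ((N:ℝ)+1)⁻¹ := by rw [Finset.sum_const, Finset.card_univ]; simp [nsmul_eq_mul]
      _ = (N : ℝ) * ((N:ℝ)+1)⁻¹ := by rw [hcardη i]
      _ < 1 := by
        rw [mul_inv_lt_iff₀ (by positivity)]
        linarith

lemma equal_of_gorenstein {r : ℕ} (hr : 0 < r) (η : Fin r → ℕ) (hη : ∀ i, 0 < η i)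
    {l : ℕ} (hg : IsGorenstein {x : ((i : Fin r) × Fin (η i)) → ℝ |
        ∀ i : Fin r, (∀ j, 0 ≤ x ⟨i, j⟩) ∧ ∑ j, x ⟨i, j⟩ ≤ 1} l) :
    ∀ i j : Fin r, η i = η j := by
  classical
  obtain ⟨hl, v, m, A, hAeq, hint⟩ := hg
  set P : Set (((i : Fin r) × Fin (η i)) → ℝ) := {x : ((i : Fin r) × Fin (η i)) → ℝ | ∀ i : Fin r,
      (∀ j, -((v ⟨i, j⟩ : ℝ)) ≤ x ⟨i, j⟩) ∧
      ∑ j, x ⟨i, j⟩ ≤ (l : ℝ) - ∑ j, ((v ⟨i, j⟩ : ℝ))} with hPdef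
  have hPim : (fun y : ((i : Fin r) × Fin (η i)) → ℝ => y - fun j => ((v j : ℝ))) ''
      ((l : ℝ) • {x : ((i : Fin r) × Fin (η i)) → ℝ | ∀ i : Fin r, (∀ j, 0 ≤ x ⟨i, j⟩) ∧ ∑ j, x ⟨i, j⟩ ≤ 1}) = P :=
    Set.ext fun x => mem_image_iff η hl v x
  have hPA : P = {x : ((i : Fin r) × Fin (η i)) → ℝ | ∀ s, ∑ k, (A s k : ℝ) * x k ≤ 1} := by
    rw [← hPim]; exact hAeq
  have hint' : (0 : ((i : Fin r) × Fin (η i)) → ℝ) ∈ interior P := by rw [← hPim]; exact hint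
  obtain ⟨ε, hε, hball⟩ : ∃ ε > 0, Metric.ball (0 : ((i : Fin r) × Fin (η i)) → ℝ) ε ⊆ P := by
    rw [mem_interior_iff_mem_nhds] at hint'
    exact Metric.mem_nhds_iff.mp hint'
  have hballmem : ∀ (K : ((i : Fin r) × Fin (η i))) (c : ℝ), |c| < ε →
      (fun k => if k = K then c else 0 : ((i : Fin r) × Fin (η i)) → ℝ) ∈ P := by
    intro K c hc
    apply hball
    rw [mem_ball_zero_iff]
    have h1 : ‖(fun k => if k = K then c else 0 : ((i : Fin r) × Fin (η i)) → ℝ)‖ ≤ |c| := by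
      apply (pi_norm_le_iff_of_nonneg (abs_nonneg c)).mpr
      intro k
      by_cases h : k = K <;> simp [h, Real.norm_eq_abs]
    linarith
  -- v entries positive
  have hvpos : ∀ K : ((i : Fin r) × Fin (η i)), 1 ≤ v K := by
    rintro ⟨i₀, j₀⟩
    have hy := hballmem ⟨i₀, j₀⟩ (-(ε/2)) (by rw [abs_neg, abs_of_pos (by linarith)]; linarith)
    have h2 := (hy i₀).1 j₀
    simp only [if_pos rfl, if_true, eq_self_iff_true] at h2
    have : (0 : ℝ) < (v ⟨i₀, j₀⟩ : ℝ) := by linarith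
    exact Int.cast_pos.mp this
  have hvpos' : ∀ K : ((i : Fin r) × Fin (η i)), (1 : ℝ) ≤ (v K : ℝ) := fun K => by exact_mod_cast hvpos K
  set C : Fin r → ℤ := fun i => (l : ℤ) - ∑ j, v ⟨i, j⟩ with hCdef
  have hCcast : ∀ i : Fin r, ((C i : ℝ)) = (l : ℝ) - ∑ j, ((v ⟨i, j⟩ : ℝ)) := by
    intro i; rw [hCdef]; push_cast; ring
  -- C positive
  have hCpos : ∀ i₀ : Fin r, 1 ≤ C i₀ := by
    intro i₀
    have hy := hballmem ⟨i₀, ⟨0, hη i₀⟩⟩ (ε/2) (by rw [abs_of_pos (by linarith)]; linarith)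
    have h2 := (hy i₀).2
    have hsum : ∑ j, (fun k : ((i : Fin r) × Fin (η i)) => if k = ⟨i₀, ⟨0, hη i₀⟩⟩ then ε/2 else 0) ⟨i₀, j⟩ = ε/2 := by
      simp [Sigma.mk.inj_iff]
    rw [hsum] at h2
    have : (0 : ℝ) < (C i₀ : ℝ) := by rw [hCcast i₀]; linarith
    exact Int.cast_pos.mp this
  have hCpos' : ∀ i : Fin r, (1 : ℝ) ≤ (C i : ℝ) := fun i => by exact_mod_cast hCpos i
  -- every v entry equals 1
  have hv1 : ∀ K : ((i : Fin r) × Fin (η i)), v K = 1 := by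
    rintro ⟨i₀, j₀⟩
    have hp : (fun k => if k = (⟨i₀, j₀⟩ : (i : Fin r) × Fin (η i))
        then -((v ⟨i₀, j₀⟩ : ℝ)) else 0) ∈ P := by
      intro i
      have hsum : ∑ j, (fun k => if k = (⟨i₀, j₀⟩ : (i : Fin r) × Fin (η i))
          then -((v ⟨i₀, j₀⟩ : ℝ)) else 0) ⟨i, j⟩ ≤ 0 := by
        apply Finset.sum_nonpos
        intro j _
        dsimp only
        split_ifs with h
        · linarith [hvpos' ⟨i₀, j₀⟩]
        · exact le_refl 0
      refine ⟨fun j => ?_, ?_⟩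
      · dsimp only
        split_ifs with h
        · rw [h]
        · linarith [hvpos' ⟨i, j⟩]
      · have := hCpos' i
        rw [hCcast i] at this
        linarith
    have hd : ∀ s : ℝ, 0 < s → ((fun k => if k = (⟨i₀, j₀⟩ : (i : Fin r) × Fin (η i))
        then -((v ⟨i₀, j₀⟩ : ℝ)) else 0) + s • (fun k =>
          if k = (⟨i₀, j₀⟩ : (i : Fin r) × Fin (η i)) then (-1 : ℝ) else 0)) ∉ P := by
      intro s hs hmem
      have h2 := (hmem i₀).1 j₀
      simp only [Pi.add_apply, Pi.smul_apply, smul_eq_mul, if_pos rfl, if_true] at h2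
      linarith
    obtain ⟨srow, hs⟩ := exists_tight_row A P hPA _ _ hp hd
    have hsum : ∑ k, (A srow k : ℝ) * (fun k => if k = (⟨i₀, j₀⟩ : (i : Fin r) × Fin (η i))
        then -((v ⟨i₀, j₀⟩ : ℝ)) else 0) k = (A srow ⟨i₀, j₀⟩ : ℝ) * (-((v ⟨i₀, j₀⟩ : ℝ))) := by
      simp [mul_ite, Finset.sum_ite_eq']
    rw [hsum] at hs
    have hz : A srow ⟨i₀, j₀⟩ * (-(v ⟨i₀, j₀⟩)) = 1 := by exact_mod_cast hs
    have hdvd : v ⟨i₀, j₀⟩ ∣ 1 := ⟨-(A srow ⟨i₀, j₀⟩), by linear_combination -hz⟩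
    exact le_antisymm (Int.le_of_dvd one_pos hdvd) (hvpos ⟨i₀, j₀⟩)
  -- every C equals 1
  have hC1 : ∀ i₀ : Fin r, C i₀ = 1 := by
    intro i₀
    have hpsum : ∀ i : Fin r, i ≠ i₀ → ∑ j, (fun k =>
        if k = (⟨i₀, ⟨0, hη i₀⟩⟩ : (i : Fin r) × Fin (η i)) then ((C i₀ : ℝ)) else 0) ⟨i, j⟩
          = 0 := by
      intro i hi
      simp [Sigma.mk.inj_iff, hi]
    have hpsum0 : ∑ j, (fun k =>
        if k = (⟨i₀, ⟨0, hη i₀⟩⟩ : (i : Fin r) × Fin (η i)) then ((C i₀ : ℝ)) else 0) ⟨i₀, j⟩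
          = (C i₀ : ℝ) := by
      simp [Sigma.mk.inj_iff]
    have hp : (fun k => if k = (⟨i₀, ⟨0, hη i₀⟩⟩ : (i : Fin r) × Fin (η i))
        then ((C i₀ : ℝ)) else 0) ∈ P := by
      intro i
      refine ⟨fun j => ?_, ?_⟩
      · dsimp only
        split_ifs with h
        · linarith [hvpos' ⟨i, j⟩, hCpos' i₀]
        · linarith [hvpos' ⟨i, j⟩]
      · by_cases h : i = i₀
        · subst h
          rw [hpsum0, ← hCcast i]
        · rw [hpsum i h]
          have := hCpos' i
          rw [hCcast i] at this
          linarith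
    have hd : ∀ s : ℝ, 0 < s → ((fun k =>
        if k = (⟨i₀, ⟨0, hη i₀⟩⟩ : (i : Fin r) × Fin (η i)) then ((C i₀ : ℝ)) else 0)
        + s • (fun k => if k = (⟨i₀, ⟨0, hη i₀⟩⟩ : (i : Fin r) × Fin (η i))
            then (1 : ℝ) else 0)) ∉ P := by
      intro s hs hmem
      have h2 := (hmem i₀).2
      have hsplit : ∑ j, ((fun k =>
          if k = (⟨i₀, ⟨0, hη i₀⟩⟩ : (i : Fin r) × Fin (η i)) then ((C i₀ : ℝ)) else 0)
          + s • (fun k => if k = (⟨i₀, ⟨0, hη i₀⟩⟩ : (i : Fin r) × Fin (η i))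
              then (1 : ℝ) else 0)) ⟨i₀, j⟩ = (C i₀ : ℝ) + s := by
        simp only [Pi.add_apply, Pi.smul_apply, smul_eq_mul]
        rw [Finset.sum_add_distrib, hpsum0]
        have h3 : ∑ j : Fin (η i₀), s * (fun k =>
            if k = (⟨i₀, ⟨0, hη i₀⟩⟩ : (i : Fin r) × Fin (η i)) then (1 : ℝ) else 0) ⟨i₀, j⟩
              = s := by
          simp [Sigma.mk.inj_iff, mul_ite]
        rw [h3]
      rw [hsplit, ← hCcast i₀] at h2
      linarith
    obtain ⟨srow, hs⟩ := exists_tight_row A P hPA _ _ hp hd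
    have hsum : ∑ k, (A srow k : ℝ) * (fun k =>
        if k = (⟨i₀, ⟨0, hη i₀⟩⟩ : (i : Fin r) × Fin (η i)) then ((C i₀ : ℝ)) else 0) k
          = (A srow ⟨i₀, ⟨0, hη i₀⟩⟩ : ℝ) * ((C i₀ : ℝ)) := by
      simp [mul_ite, Finset.sum_ite_eq']
    rw [hsum] at hs
    have hz : A srow ⟨i₀, ⟨0, hη i₀⟩⟩ * (C i₀) = 1 := by exact_mod_cast hs
    have hdvd : C i₀ ∣ 1 := ⟨A srow ⟨i₀, ⟨0, hη i₀⟩⟩, by linear_combination -hz⟩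
    exact le_antisymm (Int.le_of_dvd one_pos hdvd) (hCpos i₀)
  -- conclude
  have hli : ∀ i : Fin r, (η i : ℤ) = (l : ℤ) - 1 := by
    intro i
    have h1 := hC1 i
    rw [hCdef] at h1
    have h2 : ∑ j, v ⟨i, j⟩ = (η i : ℤ) := by
      rw [Finset.sum_congr rfl (fun j _ => hv1 ⟨i, j⟩)]
      simp
    simp only at h1
    rw [h2] at h1
    linarith
  intro i j
  have := (hli i).trans (hli j).symm
  exact_mod_cast this


/-- The product of standard simplices `Δ_{η_1} × … × Δ_{η_r}` (where
`Δ_m = {x ∈ ℝ^m : x_j ≥ 0, ∑ x_j ≤ 1} = conv{0, e_1, …, e_m}`) is Gorenstein if and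
only if all parts of the composition are equal; in that case the Gorenstein index is
`η_1 + 1`. -/
theorem product_simplices_gorenstein (r : ℕ) (hr : 0 < r) (η : Fin r → ℕ)
    (hη : ∀ i, 0 < η i) :
    ((∃ l : ℕ, IsGorenstein {x : ((i : Fin r) × Fin (η i)) → ℝ |
          ∀ i : Fin r, (∀ j, 0 ≤ x ⟨i, j⟩) ∧ ∑ j, x ⟨i, j⟩ ≤ 1} l)
        ↔ ∀ i j : Fin r, η i = η j) ∧
    ((∀ i j : Fin r, η i = η j) →
      IsGorenstein {x : ((i : Fin r) × Fin (η i)) → ℝ |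
          ∀ i : Fin r, (∀ j, 0 ≤ x ⟨i, j⟩) ∧ ∑ j, x ⟨i, j⟩ ≤ 1} (η ⟨0, hr⟩ + 1)) := by
  constructor
  · constructor
    · rintro ⟨l, hg⟩
      exact equal_of_gorenstein hr η hη hg
    · intro heq
      exact ⟨η ⟨0, hr⟩ + 1, gorenstein_of_equal hr η hη heq⟩
  · intro heq
    exact gorenstein_of_equal hr η hη heq
end
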